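/- arXiv:1307.7932 — 7 statements merged into one kernel-verified Lean document; each statement's English description precedes it below -/
import Mathlib

section
/- Let X₁, X₂, … be a sequence of real-valued random variables. Assume that there are constants A > 0, a > 0, b ≥ 0 and γ ∈ (0,2) such that for all integers m ≥ 0, n ≥ 1 and all real t ≥ 0, P{|S(m+1, m+n)| > t} ≤ A·exp{ −a t² / (n + b t^γ) }. Then for every 0 < c < a there exists a constant C > 0 (depending only on A, a, b and γ) such that for all n ≥ 1, m ≥ 0 and t ≥ 0, P{M(m+1, m+n) > t} ≤ C·exp{ −c t² / (n + b t^γ) }. -/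
open MeasureTheory
set_option maxHeartbeats 1000000

lemma mbi_split {Ω : Type*} (X : ℕ → Ω → ℝ) (m h n : ℕ) (hh : 1 ≤ h) (hhn : h < n)
    (θ t : ℝ) :
    {ω | t < (Finset.Icc 1 n).sup' (Finset.nonempty_Icc.mpr (hh.trans hhn.le))
        (fun j => |∑ i ∈ Finset.Icc (m + 1) (m + j), X i ω|)} ⊆
    ({ω | t < (Finset.Icc 1 h).sup' (Finset.nonempty_Icc.mpr hh)
        (fun j => |∑ i ∈ Finset.Icc (m + 1) (m + j), X i ω|)} ∪
     {ω | (1 - θ) * t < |∑ i ∈ Finset.Icc (m + 1) (m + h), X i ω|}) ∪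
    {ω | θ * t < (Finset.Icc 1 (n - h)).sup' (Finset.nonempty_Icc.mpr (by omega))
        (fun j => |∑ i ∈ Finset.Icc (m + h + 1) (m + h + j), X i ω|)} := by
  intro ω hω
  simp only [Set.mem_setOf_eq, Finset.lt_sup'_iff] at hω
  obtain ⟨j, hj, hjt⟩ := hω
  rw [Finset.mem_Icc] at hj
  by_cases hjh : j ≤ h
  · exact Or.inl (Or.inl (by simp only [Set.mem_setOf_eq]; exact (Finset.lt_sup'_iff _).mpr ⟨j, Finset.mem_Icc.mpr ⟨hj.1, hjh⟩, hjt⟩))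
  · push_neg at hjh
    have hsplit : ∑ i ∈ Finset.Icc (m + 1) (m + j), X i ω =
        (∑ i ∈ Finset.Icc (m + 1) (m + h), X i ω) +
        ∑ i ∈ Finset.Icc (m + h + 1) (m + h + (j - h)), X i ω := by
      have h1 : m + h + (j - h) = m + j := by omega
      rw [h1, Finset.Icc_add_one_left_eq_Ioc, Finset.Icc_add_one_left_eq_Ioc, Finset.Icc_add_one_left_eq_Ioc]
      exact (Finset.sum_Ioc_consecutive _ (by omega : m ≤ m + h) (by omega : m + h ≤ m + j)).symm
    by_cases h2 : (1 - θ) * t < |∑ i ∈ Finset.Icc (m + 1) (m + h), X i ω|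
    · exact Or.inl (Or.inr h2)
    · push_neg at h2
      have hmem : j - h ∈ Finset.Icc 1 (n - h) := Finset.mem_Icc.mpr ⟨by omega, by omega⟩
      refine Or.inr (Set.mem_setOf_eq ▸ (Finset.lt_sup'_iff _).mpr ⟨j - h, hmem, ?_⟩)
      have habs := abs_add_le (∑ i ∈ Finset.Icc (m + 1) (m + h), X i ω)
        (∑ i ∈ Finset.Icc (m + h + 1) (m + h + (j - h)), X i ω)
      rw [hsplit] at hjt
      linarith


lemma mbi_union {Ω : Type*} [MeasurableSpace Ω] (P : Measure Ω) [IsProbabilityMeasure P]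
    (X : ℕ → Ω → ℝ) (A a b γ : ℝ) (hA : 0 ≤ A) (ha : 0 ≤ a) (hb : 0 ≤ b)
    (hS : ∀ m n : ℕ, 1 ≤ n → ∀ t : ℝ, 0 ≤ t →
      (P {ω | t < |∑ i ∈ Finset.Icc (m + 1) (m + n), X i ω|}).toReal ≤
        A * Real.exp (-(a * t ^ 2) / (n + b * t ^ γ))) :
    ∀ m n : ℕ, ∀ hn : 1 ≤ n, ∀ t : ℝ, 0 ≤ t →
      (P {ω | t < (Finset.Icc 1 n).sup' (Finset.nonempty_Icc.mpr hn)
          (fun j => |∑ i ∈ Finset.Icc (m + 1) (m + j), X i ω|)}).toReal ≤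
        n * (A * Real.exp (-(a * t ^ 2) / (n + b * t ^ γ))) := by
  intro m n hn t ht
  have hbt : 0 ≤ b * t ^ γ := mul_nonneg hb (Real.rpow_nonneg ht γ)
  have hsub : {ω | t < (Finset.Icc 1 n).sup' (Finset.nonempty_Icc.mpr hn)
      (fun j => |∑ i ∈ Finset.Icc (m + 1) (m + j), X i ω|)} ⊆
      ⋃ j ∈ Finset.Icc 1 n, {ω | t < |∑ i ∈ Finset.Icc (m + 1) (m + j), X i ω|} := by
    intro ω hω
    rw [Set.mem_setOf_eq, Finset.lt_sup'_iff] at hω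
    obtain ⟨j, hj, hjω⟩ := hω
    exact Set.mem_biUnion hj hjω
  calc (P _).toReal
      ≤ (∑ j ∈ Finset.Icc 1 n, P {ω | t < |∑ i ∈ Finset.Icc (m + 1) (m + j), X i ω|}).toReal := by
        refine ENNReal.toReal_mono ?_ ((measure_mono hsub).trans (measure_biUnion_finset_le _ _))
        exact ENNReal.sum_ne_top.mpr fun j _ => measure_ne_top P _
    _ = ∑ j ∈ Finset.Icc 1 n, (P {ω | t < |∑ i ∈ Finset.Icc (m + 1) (m + j), X i ω|}).toReal :=
        ENNReal.toReal_sum fun j _ => measure_ne_top P _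
    _ ≤ ∑ j ∈ Finset.Icc 1 n, A * Real.exp (-(a * t ^ 2) / (n + b * t ^ γ)) := by
        refine Finset.sum_le_sum fun j hj => ?_
        rw [Finset.mem_Icc] at hj
        refine (hS m j hj.1 t ht).trans ?_
        have hj0 : (0:ℝ) < j + b * t ^ γ := by
          have : (1:ℝ) ≤ (j:ℝ) := by exact_mod_cast hj.1
          linarith
        have hjn : (j:ℝ) + b * t ^ γ ≤ n + b * t ^ γ := by
          have : (j:ℝ) ≤ n := by exact_mod_cast hj.2
          linarith
        have hnum : 0 ≤ a * t ^ 2 := mul_nonneg ha (sq_nonneg t)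
        have hdiv : a * t ^ 2 / (n + b * t ^ γ) ≤ a * t ^ 2 / (j + b * t ^ γ) :=
          div_le_div_of_nonneg_left hnum hj0 hjn
        have : -(a * t ^ 2) / ((j:ℝ) + b * t ^ γ) ≤ -(a * t ^ 2) / (n + b * t ^ γ) := by
          rw [neg_div, neg_div]; linarith
        exact mul_le_mul_of_nonneg_left (Real.exp_le_exp.mpr this) hA
    _ = n * (A * Real.exp (-(a * t ^ 2) / (n + b * t ^ γ))) := by
        rw [Finset.sum_const, Nat.card_Icc, nsmul_eq_mul]
        norm_num


/-- Kevei–Mason maximal Bernstein-type inequality: if the partial sums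
`S(m+1, m+n) = ∑_{i=m+1}^{m+n} X i` satisfy a Bernstein-type tail bound
`P{|S(m+1,m+n)| > t} ≤ A exp{-a t² / (n + b t^γ)}`, then for every `0 < c < a`
there is `C > 0` such that the maximum `M(m+1, m+n) = max_{1 ≤ j ≤ n} |S(m+1, m+j)|`
satisfies `P{M(m+1,m+n) > t} ≤ C exp{-c t² / (n + b t^γ)}`. -/
theorem maximal_bernstein_inequality
    {Ω : Type*} [MeasurableSpace Ω] (P : Measure Ω) [IsProbabilityMeasure P]
    (X : ℕ → Ω → ℝ) (A a b γ : ℝ)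
    (hA : 0 < A) (ha : 0 < a) (hb : 0 ≤ b) (hγ0 : 0 < γ) (hγ2 : γ < 2)
    (hS : ∀ m n : ℕ, 1 ≤ n → ∀ t : ℝ, 0 ≤ t →
      (P {ω | t < |∑ i ∈ Finset.Icc (m + 1) (m + n), X i ω|}).toReal ≤
        A * Real.exp (-(a * t ^ 2) / (n + b * t ^ γ))) :
    ∀ c : ℝ, 0 < c → c < a →
      ∃ C : ℝ, 0 < C ∧
        ∀ m n : ℕ, ∀ hn : 1 ≤ n, ∀ t : ℝ, 0 ≤ t →
          (P {ω | t < (Finset.Icc 1 n).sup' (Finset.nonempty_Icc.mpr hn)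
              (fun j => |∑ i ∈ Finset.Icc (m + 1) (m + j), X i ω|)}).toReal ≤
            C * Real.exp (-(c * t ^ 2) / (n + b * t ^ γ)) := by
  intro c hc hca
  -- choose θ with c < a (1-θ)²
  obtain ⟨θ, hθ0, hθ1, hkey⟩ : ∃ θ : ℝ, 0 < θ ∧ θ < 1 ∧ c < a * (1 - θ) ^ 2 := by
    refine ⟨(1 - Real.sqrt (c / a)) / 2, ?_, ?_, ?_⟩
    · have h1 : c / a < 1 := (div_lt_one ha).mpr hca
      have h2 : Real.sqrt (c / a) < 1 := by
        nlinarith [Real.sq_sqrt (le_of_lt (div_pos hc ha)), Real.sqrt_nonneg (c / a)]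
      linarith
    · have := Real.sqrt_nonneg (c / a); linarith
    · have h3 : Real.sqrt (c / a) ^ 2 = c / a := Real.sq_sqrt (le_of_lt (div_pos hc ha))
      have h4 : a * (c / a) = c := by field_simp
      have h5 : Real.sqrt (c / a) < 1 := by
        nlinarith [Real.sqrt_nonneg (c / a), (div_lt_one ha).mpr hca]
      have h6 : Real.sqrt (c / a) ≥ 0 := Real.sqrt_nonneg _
      have h7 : a * Real.sqrt (c / a) ^ 2 = c := by rw [h3]; exact h4
      nlinarith [mul_pos (mul_pos ha (show (0:ℝ) < 1 - Real.sqrt (c / a) by linarith))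
        (show (0:ℝ) < 1 + 3 * Real.sqrt (c / a) by linarith)]
  have hθ2pos : (0:ℝ) < θ ^ 2 := by positivity
  have hθ2 : θ ^ 2 < 1 := by nlinarith
  obtain ⟨η, hη_def⟩ : ∃ x : ℝ, x = θ ^ 2 / 4 := ⟨_, rfl⟩
  have hη : 0 < η := by rw [hη_def]; positivity
  obtain ⟨g₁, hg₁_def⟩ : ∃ x : ℝ, x = c * θ ^ 2 / (4 * (1 + η) ^ 2) := ⟨_, rfl⟩
  have h1η : (0:ℝ) < 1 + η := by linarith
  have hg₁ : 0 < g₁ := by rw [hg₁_def]; positivity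
  obtain ⟨g₃, hg₃_def⟩ : ∃ x : ℝ, x = c / 3 := ⟨_, rfl⟩
  have hg₃ : 0 < g₃ := by rw [hg₃_def]; positivity
  obtain ⟨u₀, hu₀_def⟩ : ∃ x : ℝ, x = Real.log 3 * (1 / g₁ + 1 / g₃) := ⟨_, rfl⟩
  have hlog3 : 0 < Real.log 3 := Real.log_pos (by norm_num)
  have hu₀ : 0 < u₀ := by
    rw [hu₀_def]
    exact mul_pos hlog3 (add_pos (one_div_pos.mpr hg₁) (one_div_pos.mpr hg₃))
  have hg₁u₀ : Real.log 3 ≤ g₁ * u₀ := by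
    have e : g₁ * u₀ = Real.log 3 + Real.log 3 * (g₁ / g₃) := by
      rw [hu₀_def]; field_simp [hg₁.ne', hg₃.ne']
    have e2 : 0 ≤ Real.log 3 * (g₁ / g₃) := mul_nonneg hlog3.le (div_nonneg hg₁.le hg₃.le)
    linarith only [e, e2]
  have hg₃u₀ : Real.log 3 ≤ g₃ * u₀ := by
    have e : g₃ * u₀ = Real.log 3 + Real.log 3 * (g₃ / g₁) := by
      rw [hu₀_def]; field_simp [hg₁.ne', hg₃.ne']; ring
    have e2 : 0 ≤ Real.log 3 * (g₃ / g₁) := mul_nonneg hlog3.le (div_nonneg hg₃.le hg₁.le)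
    linarith only [e, e2]
  obtain ⟨β, hβ_def⟩ : ∃ x : ℝ, x = 1 - θ ^ 2 / 2 := ⟨_, rfl⟩
  have hβ0 : 0 < β := by rw [hβ_def]; nlinarith
  have hβ1 : β < 1 := by rw [hβ_def]; nlinarith
  obtain ⟨n₁, hn₁_def⟩ : ∃ x : ℝ, x = 8 / θ ^ 2 + 2 := ⟨_, rfl⟩
  have hn₁ : 0 < n₁ := by rw [hn₁_def]; positivity
  obtain ⟨k, hk_def⟩ : ∃ k : ℕ, k = ⌈γ / (2 - γ)⌉₊ := ⟨_, rfl⟩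
  obtain ⟨K, hK_def⟩ : ∃ x : ℝ, x = 1 + 1 / η := ⟨_, rfl⟩
  have hK : 0 < K := by
    rw [hK_def]
    have := one_div_pos.mpr hη
    linarith
  obtain ⟨α, hα_def⟩ : ∃ x : ℝ, x = (a - c) / (K * b) := ⟨_, rfl⟩
  have hα0 : 0 ≤ α := by
    rw [hα_def]
    exact div_nonneg (by linarith) (mul_nonneg hK.le hb)
  obtain ⟨Z, hZ_def⟩ : ∃ x : ℝ, x = A * b / η * (1 + (k.factorial : ℝ) / α ^ k) := ⟨_, rfl⟩
  have hZ : 0 ≤ Z := by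
    rw [hZ_def]
    refine mul_nonneg (div_nonneg (mul_nonneg hA.le hb) hη.le) ?_
    have : (0:ℝ) ≤ (k.factorial : ℝ) / α ^ k :=
      div_nonneg (Nat.cast_nonneg _) (pow_nonneg hα0 k)
    linarith
  obtain ⟨C, hC_def⟩ : ∃ x : ℝ, x = 3 * A + Real.exp (c * u₀) + n₁ * A + Z + 1 := ⟨_, rfl⟩
  have hC : 0 < C := by
    rw [hC_def]
    have h2 : (0:ℝ) < Real.exp (c * u₀) := Real.exp_pos _
    have h3 : (0:ℝ) ≤ n₁ * A := mul_nonneg hn₁.le hA.le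
    linarith
  refine ⟨C, hC, ?_⟩
  suffices H : ∀ n : ℕ, ∀ m : ℕ, ∀ hn : 1 ≤ n, ∀ t : ℝ, 0 ≤ t →
      (P {ω | t < (Finset.Icc 1 n).sup' (Finset.nonempty_Icc.mpr hn)
          (fun j => |∑ i ∈ Finset.Icc (m + 1) (m + j), X i ω|)}).toReal ≤
        C * Real.exp (-(c * t ^ 2) / (n + b * t ^ γ)) by
    intro m n hn t ht; exact H n m hn t ht
  intro n
  induction n using Nat.strong_induction_on with
  | _ n IH =>
  intro m hn t ht
  have hn' : (1:ℝ) ≤ (n:ℝ) := by exact_mod_cast hn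
  have htγ : 0 ≤ t ^ γ := Real.rpow_nonneg ht γ
  have hbt : 0 ≤ b * t ^ γ := mul_nonneg hb htγ
  have hDn : (0:ℝ) < (n:ℝ) + b * t ^ γ := by linarith
  have hexp2 : (0:ℝ) < Real.exp (-(c * t ^ 2) / ((n:ℝ) + b * t ^ γ)) := Real.exp_pos _
  by_cases hcase : (n:ℝ) ≤ n₁ ∨ η * n < b * t ^ γ
  · -- union bound cases
    refine (mbi_union P X A a b γ hA.le ha.le hb hS m n hn t ht).trans ?_
    have hsplitexp : -(a * t ^ 2) / ((n:ℝ) + b * t ^ γ)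
        = -((a - c) * t ^ 2) / ((n:ℝ) + b * t ^ γ) + -(c * t ^ 2) / ((n:ℝ) + b * t ^ γ) := by
      rw [← add_div]; ring_nf
    rw [hsplitexp, Real.exp_add]
    suffices key : (n:ℝ) * A * Real.exp (-((a - c) * t ^ 2) / ((n:ℝ) + b * t ^ γ)) ≤ C by
      calc (n:ℝ) * (A * (Real.exp (-((a - c) * t ^ 2) / ((n:ℝ) + b * t ^ γ)) *
              Real.exp (-(c * t ^ 2) / ((n:ℝ) + b * t ^ γ))))
          = ((n:ℝ) * A * Real.exp (-((a - c) * t ^ 2) / ((n:ℝ) + b * t ^ γ))) *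
              Real.exp (-(c * t ^ 2) / ((n:ℝ) + b * t ^ γ)) := by ring
        _ ≤ C * Real.exp (-(c * t ^ 2) / ((n:ℝ) + b * t ^ γ)) :=
            mul_le_mul_of_nonneg_right key hexp2.le
    have hE1 : Real.exp (-((a - c) * t ^ 2) / ((n:ℝ) + b * t ^ γ)) ≤ 1 := by
      rw [Real.exp_le_one_iff]
      apply div_nonpos_of_nonpos_of_nonneg
      · have : 0 ≤ (a - c) * t ^ 2 := mul_nonneg (by linarith) (sq_nonneg t)
        linarith
      · linarith
    rcases hcase with h1 | h2
    · -- n ≤ n₁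
      have hfin : (n:ℝ) * A * Real.exp (-((a - c) * t ^ 2) / ((n:ℝ) + b * t ^ γ)) ≤ n₁ * A := by
        calc (n:ℝ) * A * Real.exp (-((a - c) * t ^ 2) / ((n:ℝ) + b * t ^ γ))
            ≤ (n:ℝ) * A * 1 := by
              apply mul_le_mul_of_nonneg_left hE1 (by positivity)
          _ = (n:ℝ) * A := by ring
          _ ≤ n₁ * A := mul_le_mul_of_nonneg_right h1 hA.le
      rw [hC_def]
      linarith only [hfin, Real.exp_pos (c * u₀), hZ, hA]
    · -- η * n < b * t ^ γ
      have ht0 : 0 < t := by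
        rcases eq_or_lt_of_le ht with h | h
        · exfalso
          rw [← h, Real.zero_rpow (ne_of_gt hγ0)] at h2
          have h9 : η * 1 ≤ η * n := mul_le_mul_of_nonneg_left hn' hη.le
          linarith
        · exact h
      have htγ0 : 0 < t ^ γ := Real.rpow_pos_of_pos ht0 γ
      have hb0 : 0 < b := by
        rcases lt_or_ge 0 b with h | h
        · exact h
        · exfalso
          have h9 : b * t ^ γ ≤ 0 * t ^ γ := mul_le_mul_of_nonneg_right h htγ
          have h10 : η * 1 ≤ η * n := mul_le_mul_of_nonneg_left hn' hη.le
          simp only [zero_mul] at h9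
          linarith
      obtain ⟨x, hx_def⟩ : ∃ x : ℝ, x = t ^ (2 - γ) := ⟨_, rfl⟩
      have hx0 : (0:ℝ) < x := by rw [hx_def]; exact Real.rpow_pos_of_pos ht0 _
      have hα : 0 < α := by
        rw [hα_def]; exact div_pos (by linarith) (mul_pos hK hb0)
      have hnlt : (n:ℝ) < b * t ^ γ / η := (lt_div_iff₀ hη).mpr (by linarith)
      have hDle : (n:ℝ) + b * t ^ γ ≤ K * (b * t ^ γ) := by
        have h3 : K * (b * t ^ γ) = b * t ^ γ / η + b * t ^ γ := by
          rw [hK_def]; field_simp; ring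
        rw [h3]
        linarith
      have ht2 : t ^ (2:ℕ) = t ^ ((2:ℝ)) := by
        rw [← Real.rpow_natCast t 2]; norm_num
      have hαx : α * x = (a - c) * t ^ 2 / (K * (b * t ^ γ)) := by
        have hxx : x = t ^ 2 / t ^ γ := by
          rw [hx_def, Real.rpow_sub ht0, ← ht2]
        rw [hα_def, hxx, div_mul_div_comm, mul_assoc]
      have hstep1 : α * x ≤ (a - c) * t ^ 2 / ((n:ℝ) + b * t ^ γ) := by
        rw [hαx]
        exact div_le_div_of_nonneg_left (mul_nonneg (by linarith) (sq_nonneg t)) hDn hDle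
      have hexp1 : Real.exp (-((a - c) * t ^ 2) / ((n:ℝ) + b * t ^ γ)) ≤ Real.exp (-(α * x)) := by
        rw [Real.exp_le_exp, neg_div]
        linarith
      have hp : 0 < γ / (2 - γ) := by
        apply div_pos hγ0; linarith
      have h2γ : (2:ℝ) - γ ≠ 0 := by linarith
      have hxp : x ^ (γ / (2 - γ)) = t ^ γ := by
        rw [hx_def, ← Real.rpow_mul ht]
        congr 1
        rw [mul_comm, div_mul_cancel₀ _ h2γ]
      have hpk : γ / (2 - γ) ≤ (k:ℝ) := by rw [hk_def]; exact Nat.le_ceil _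
      have hxk : x ^ (γ / (2 - γ)) ≤ 1 + x ^ k := by
        rcases le_or_gt x 1 with hx1 | hx1
        · have h4 := Real.rpow_le_one hx0.le hx1 hp.le
          have h5 : (0:ℝ) ≤ x ^ k := pow_nonneg hx0.le k
          linarith
        · have h4 : x ^ (γ / (2 - γ)) ≤ x ^ ((k:ℝ)) :=
            Real.rpow_le_rpow_of_exponent_le hx1.le hpk
          rw [Real.rpow_natCast] at h4
          linarith
      have hfact : x ^ k * Real.exp (-(α * x)) ≤ (k.factorial : ℝ) / α ^ k := by
        have h4 : (α * x) ^ k / (k.factorial : ℝ) ≤ Real.exp (α * x) :=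
          Real.pow_div_factorial_le_exp _ (by positivity) k
        have h5 : (α * x) ^ k ≤ Real.exp (α * x) * (k.factorial : ℝ) := by
          rw [div_le_iff₀ (by positivity : (0:ℝ) < (k.factorial : ℝ))] at h4
          exact h4
        rw [mul_pow] at h5
        rw [Real.exp_neg, le_div_iff₀ (by positivity : (0:ℝ) < α ^ k)]
        calc x ^ k * (Real.exp (α * x))⁻¹ * α ^ k
            = (α ^ k * x ^ k) * (Real.exp (α * x))⁻¹ := by ring
          _ ≤ (Real.exp (α * x) * (k.factorial : ℝ)) * (Real.exp (α * x))⁻¹ :=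
              mul_le_mul_of_nonneg_right h5 (by positivity)
          _ = (k.factorial : ℝ) := by field_simp
      have hnA : (n:ℝ) * A ≤ (A * b / η) * t ^ γ := by
        calc (n:ℝ) * A ≤ (b * t ^ γ / η) * A := mul_le_mul_of_nonneg_right hnlt.le hA.le
          _ = (A * b / η) * t ^ γ := by ring
      have hABη : (0:ℝ) ≤ A * b / η := div_nonneg (mul_nonneg hA.le hb) hη.le
      calc (n:ℝ) * A * Real.exp (-((a - c) * t ^ 2) / ((n:ℝ) + b * t ^ γ))
          ≤ ((A * b / η) * t ^ γ) * Real.exp (-(α * x)) := by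
            apply mul_le_mul hnA hexp1 (Real.exp_pos _).le (by positivity)
        _ = (A * b / η) * (x ^ (γ / (2 - γ)) * Real.exp (-(α * x))) := by rw [hxp]; ring
        _ ≤ (A * b / η) * ((1 + x ^ k) * Real.exp (-(α * x))) := by
            apply mul_le_mul_of_nonneg_left _ hABη
            exact mul_le_mul_of_nonneg_right hxk (Real.exp_pos _).le
        _ = (A * b / η) * (Real.exp (-(α * x)) + x ^ k * Real.exp (-(α * x))) := by ring
        _ ≤ (A * b / η) * (1 + (k.factorial : ℝ) / α ^ k) := by
            apply mul_le_mul_of_nonneg_left _ hABη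
            have h6 : Real.exp (-(α * x)) ≤ 1 := by
              rw [Real.exp_le_one_iff]
              linarith [mul_pos hα hx0]
            linarith [hfact]
        _ = Z := hZ_def.symm
        _ ≤ C := by
            rw [hC_def]
            linarith only [Real.exp_pos (c * u₀), mul_pos hn₁ hA, hA]
  · push_neg at hcase
    obtain ⟨hn₁n, hbtle⟩ := hcase
    by_cases hu : t ^ 2 / ((n:ℝ) + b * t ^ γ) ≤ u₀
    · -- trivial bound P ≤ 1
      have h1 : (P {ω | t < (Finset.Icc 1 n).sup' (Finset.nonempty_Icc.mpr hn)
          (fun j => |∑ i ∈ Finset.Icc (m + 1) (m + j), X i ω|)}).toReal ≤ 1 := by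
        simpa using ENNReal.toReal_mono ENNReal.one_ne_top prob_le_one
      refine h1.trans ?_
      have h2 : (1:ℝ) ≤ Real.exp (c * u₀) * Real.exp (-(c * t ^ 2) / ((n:ℝ) + b * t ^ γ)) := by
        rw [← Real.exp_add]
        apply Real.one_le_exp
        have h3 : -(c * t ^ 2) / ((n:ℝ) + b * t ^ γ) = -(c * (t ^ 2 / ((n:ℝ) + b * t ^ γ))) := by
          rw [neg_div, mul_div_assoc]
        rw [h3]
        have h4 : c * (t ^ 2 / ((n:ℝ) + b * t ^ γ)) ≤ c * u₀ := mul_le_mul_of_nonneg_left hu hc.le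
        linarith only [h4]
      have h5 : Real.exp (c * u₀) ≤ C := by
        rw [hC_def]; linarith only [hZ, mul_pos hn₁ hA, hA]
      calc (1:ℝ) ≤ Real.exp (c * u₀) * Real.exp (-(c * t ^ 2) / ((n:ℝ) + b * t ^ γ)) := h2
        _ ≤ C * Real.exp (-(c * t ^ 2) / ((n:ℝ) + b * t ^ γ)) :=
            mul_le_mul_of_nonneg_right h5 hexp2.le
    · push_neg at hu
      -- main recursion case
      rw [hη_def] at hbtle
      have hsize0 : (θ^2/2) * n₁ = 4 + θ^2 := by
        rw [hn₁_def]; field_simp [hθ0.ne']; ring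
      have hsize1 : 4 + θ^2 < θ^2 * n / 2 := by
        have hq := mul_lt_mul_of_pos_left hn₁n (show (0:ℝ) < θ^2/2 by positivity)
        rw [hsize0] at hq
        linarith only [hq]
      have hηn' : (1:ℝ) ≤ θ^2/4 * n := by linarith only [hsize1, hθ2pos]
      obtain ⟨h, hh_def⟩ : ∃ h : ℕ, h = ⌈β * (n:ℝ)⌉₊ := ⟨_, rfl⟩
      have hn0' : (0:ℝ) < n := by linarith only [hn']
      have hβn0 : (0:ℝ) < β * n := mul_pos hβ0 hn0'
      have hh1 : 1 ≤ h := by rw [hh_def]; exact Nat.ceil_pos.mpr hβn0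
      have hhge : β * (n:ℝ) ≤ h := by rw [hh_def]; exact Nat.le_ceil _
      have hhle : (h:ℝ) ≤ β * n + 1 := by
        rw [hh_def]; exact (Nat.ceil_lt_add_one hβn0.le).le
      rw [hβ_def] at hhge hhle
      have hhnR : (h:ℝ) < n := by linarith only [hhle, hsize1, hθ2pos]
      have hhn : h < n := by exact_mod_cast hhnR
      have hnh1 : 1 ≤ n - h := by omega
      have hcast : ((n - h : ℕ):ℝ) = (n:ℝ) - (h:ℝ) := by
        rw [Nat.cast_sub hhn.le]
      have hh1' : (1:ℝ) ≤ (h:ℝ) := by exact_mod_cast hh1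
      -- positivity of denominators
      have h1θt : 0 ≤ (1 - θ) * t := mul_nonneg (by linarith only [hθ1]) ht
      have hθt : 0 ≤ θ * t := mul_nonneg hθ0.le ht
      have htγθ1 : (0:ℝ) ≤ b * ((1 - θ) * t) ^ γ := mul_nonneg hb (Real.rpow_nonneg h1θt γ)
      have htγθ2 : (0:ℝ) ≤ b * (θ * t) ^ γ := mul_nonneg hb (Real.rpow_nonneg hθt γ)
      have hDh : (0:ℝ) < (h:ℝ) + b * t ^ γ := by linarith only [hh1', hbt]
      have hDh' : (0:ℝ) < (h:ℝ) + b * ((1 - θ) * t) ^ γ := by linarith only [hh1', htγθ1]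
      have hD₃ : (0:ℝ) < ((n - h : ℕ):ℝ) + b * (θ * t) ^ γ := by
        rw [hcast]; linarith only [hhnR, htγθ2]
      -- measure decomposition
      have hsub := mbi_split X m h n hh1 hhn θ t
      have htr : (P {ω | t < (Finset.Icc 1 n).sup' (Finset.nonempty_Icc.mpr hn)
          (fun j => |∑ i ∈ Finset.Icc (m + 1) (m + j), X i ω|)}).toReal ≤
          (P {ω | t < (Finset.Icc 1 h).sup' (Finset.nonempty_Icc.mpr hh1)
            (fun j => |∑ i ∈ Finset.Icc (m + 1) (m + j), X i ω|)}).toReal +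
          (P {ω | (1 - θ) * t < |∑ i ∈ Finset.Icc (m + 1) (m + h), X i ω|}).toReal +
          (P {ω | θ * t < (Finset.Icc 1 (n - h)).sup' (Finset.nonempty_Icc.mpr hnh1)
            (fun j => |∑ i ∈ Finset.Icc (m + h + 1) (m + h + j), X i ω|)}).toReal := by
        have hm1 : P {ω | t < (Finset.Icc 1 n).sup' (Finset.nonempty_Icc.mpr hn)
            (fun j => |∑ i ∈ Finset.Icc (m + 1) (m + j), X i ω|)} ≤
            P {ω | t < (Finset.Icc 1 h).sup' (Finset.nonempty_Icc.mpr hh1)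
              (fun j => |∑ i ∈ Finset.Icc (m + 1) (m + j), X i ω|)} +
            P {ω | (1 - θ) * t < |∑ i ∈ Finset.Icc (m + 1) (m + h), X i ω|} +
            P {ω | θ * t < (Finset.Icc 1 (n - h)).sup' (Finset.nonempty_Icc.mpr hnh1)
              (fun j => |∑ i ∈ Finset.Icc (m + h + 1) (m + h + j), X i ω|)} := by
          refine (measure_mono hsub).trans ?_
          refine (measure_union_le _ _).trans ?_
          exact add_le_add_left (measure_union_le _ _) _
        have hne1 : P {ω | t < (Finset.Icc 1 h).sup' (Finset.nonempty_Icc.mpr hh1)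
            (fun j => |∑ i ∈ Finset.Icc (m + 1) (m + j), X i ω|)} ≠ ⊤ := measure_ne_top P _
        have hne2 : P {ω | (1 - θ) * t < |∑ i ∈ Finset.Icc (m + 1) (m + h), X i ω|} ≠ ⊤ :=
          measure_ne_top P _
        have hne3 : P {ω | θ * t < (Finset.Icc 1 (n - h)).sup' (Finset.nonempty_Icc.mpr hnh1)
            (fun j => |∑ i ∈ Finset.Icc (m + h + 1) (m + h + j), X i ω|)} ≠ ⊤ := measure_ne_top P _
        have hmono := ENNReal.toReal_mono
          (ENNReal.add_ne_top.mpr ⟨ENNReal.add_ne_top.mpr ⟨hne1, hne2⟩, hne3⟩) hm1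
        rwa [ENNReal.toReal_add (ENNReal.add_ne_top.mpr ⟨hne1, hne2⟩) hne3,
          ENNReal.toReal_add hne1 hne2] at hmono
      refine htr.trans ?_
      have hB1 := IH h hhn m hh1 t ht
      have hB2 := hS m h hh1 ((1 - θ) * t) h1θt
      have hB3 := IH (n - h) (by omega) (m + h) hnh1 (θ * t) hθt
      refine le_trans (add_le_add (add_le_add hB1 hB2) hB3) ?_
      have hn_h_low : θ^2 * (n:ℝ) / 4 ≤ (n:ℝ) - h := by linarith only [hhle, hηn']
      -- (i)
      have hgain1 : -(c * t ^ 2) / ((h:ℝ) + b * t ^ γ) ≤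
          -(c * t ^ 2) / ((n:ℝ) + b * t ^ γ) - Real.log 3 := by
        have hid : c * t ^ 2 / ((h:ℝ) + b * t ^ γ) - c * t ^ 2 / ((n:ℝ) + b * t ^ γ)
            = (c * t ^ 2) * (((n:ℝ) - h) / (((h:ℝ) + b * t ^ γ) * ((n:ℝ) + b * t ^ γ))) := by
          field_simp
          ring
        have hDh_le : (h:ℝ) + b * t ^ γ ≤ (1 + η) * n := by
          rw [hη_def]; linarith only [hhnR, hbtle]
        have hDn_le : (n:ℝ) + b * t ^ γ ≤ (1 + η) * n := by
          rw [hη_def]; linarith only [hbtle]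
        have hQ : θ ^ 2 / (4 * (1 + η) ^ 2 * (n:ℝ)) ≤
            ((n:ℝ) - h) / (((h:ℝ) + b * t ^ γ) * ((n:ℝ) + b * t ^ γ)) := by
          rw [div_le_div_iff₀ (by positivity) (mul_pos hDh hDn)]
          have p1 : ((h:ℝ) + b * t ^ γ) * ((n:ℝ) + b * t ^ γ) ≤ ((1 + η) * n) * ((1 + η) * n) :=
            mul_le_mul hDh_le hDn_le hDn.le (by positivity)
          have p2 := mul_le_mul_of_nonneg_left p1 hθ2pos.le
          have p3 := mul_le_mul_of_nonneg_right hn_h_low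
            (show (0:ℝ) ≤ 4 * (1 + η) ^ 2 * n by positivity)
          linarith only [p2, p3]
        have hQ2 : Real.log 3 ≤ (c * t ^ 2) *
            (((n:ℝ) - h) / (((h:ℝ) + b * t ^ γ) * ((n:ℝ) + b * t ^ γ))) := by
          have e1 : (c * t ^ 2) * (θ ^ 2 / (4 * (1 + η) ^ 2 * (n:ℝ))) = g₁ * (t ^ 2 / n) := by
            rw [hg₁_def]; field_simp
          have e2 := mul_le_mul_of_nonneg_left hQ (mul_nonneg hc.le (sq_nonneg t))
          have e6 := e1 ▸ e2
          have e3 : t ^ 2 / ((n:ℝ) + b * t ^ γ) ≤ t ^ 2 / (n:ℝ) :=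
            div_le_div_of_nonneg_left (sq_nonneg t) hn0' (by linarith only [hbt])
          have e4 := mul_le_mul_of_nonneg_left e3 hg₁.le
          have e5 := mul_le_mul_of_nonneg_left hu.le hg₁.le
          linarith only [hg₁u₀, e4, e5, e6]
        rw [neg_div, neg_div]
        linarith only [hid, hQ2]
      have hi : C * Real.exp (-(c * t ^ 2) / ((h:ℝ) + b * t ^ γ)) ≤
          C / 3 * Real.exp (-(c * t ^ 2) / ((n:ℝ) + b * t ^ γ)) := by
        have h7 := Real.exp_le_exp.mpr hgain1
        rw [Real.exp_sub, Real.exp_log (by norm_num : (0:ℝ) < 3)] at h7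
        calc C * Real.exp (-(c * t ^ 2) / ((h:ℝ) + b * t ^ γ))
            ≤ C * (Real.exp (-(c * t ^ 2) / ((n:ℝ) + b * t ^ γ)) / 3) :=
              mul_le_mul_of_nonneg_left h7 hC.le
          _ = C / 3 * Real.exp (-(c * t ^ 2) / ((n:ℝ) + b * t ^ γ)) := by ring
      -- (ii)
      have hii : A * Real.exp (-(a * ((1 - θ) * t) ^ 2) / ((h:ℝ) + b * ((1 - θ) * t) ^ γ)) ≤
          C / 3 * Real.exp (-(c * t ^ 2) / ((n:ℝ) + b * t ^ γ)) := by
        have hrp : ((1 - θ) * t) ^ γ ≤ t ^ γ := by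
          apply Real.rpow_le_rpow h1θt _ hγ0.le
          linarith only [mul_nonneg hθ0.le ht]
        have h8 : b * ((1 - θ) * t) ^ γ ≤ θ^2/4 * n :=
          le_trans (mul_le_mul_of_nonneg_left hrp hb) hbtle
        have hDh'le : (h:ℝ) + b * ((1 - θ) * t) ^ γ ≤ (n:ℝ) := by
          linarith only [hhle, h8, hηn']
        have hmono : -(a * ((1 - θ) * t) ^ 2) / ((h:ℝ) + b * ((1 - θ) * t) ^ γ) ≤
            -(c * t ^ 2) / ((n:ℝ) + b * t ^ γ) := by
          have p1 : c * t ^ 2 / ((n:ℝ) + b * t ^ γ) ≤ c * t ^ 2 / (n:ℝ) :=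
            div_le_div_of_nonneg_left (mul_nonneg hc.le (sq_nonneg t)) hn0'
              (by linarith only [hbt])
          have p2 : c * t ^ 2 / (n:ℝ) ≤ a * ((1 - θ) * t) ^ 2 / (n:ℝ) := by
            apply (div_le_div_iff_of_pos_right hn0').mpr
            have q : c * t ^ 2 ≤ a * (1 - θ) ^ 2 * t ^ 2 :=
              mul_le_mul_of_nonneg_right hkey.le (sq_nonneg t)
            calc c * t ^ 2 ≤ a * (1 - θ) ^ 2 * t ^ 2 := q
              _ = a * ((1 - θ) * t) ^ 2 := by ring
          have p3 : a * ((1 - θ) * t) ^ 2 / (n:ℝ) ≤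
              a * ((1 - θ) * t) ^ 2 / ((h:ℝ) + b * ((1 - θ) * t) ^ γ) :=
            div_le_div_of_nonneg_left (mul_nonneg ha.le (sq_nonneg _)) hDh' hDh'le
          rw [neg_div, neg_div]
          linarith only [p1, p2, p3]
        calc A * Real.exp (-(a * ((1 - θ) * t) ^ 2) / ((h:ℝ) + b * ((1 - θ) * t) ^ γ))
            ≤ A * Real.exp (-(c * t ^ 2) / ((n:ℝ) + b * t ^ γ)) :=
              mul_le_mul_of_nonneg_left (Real.exp_le_exp.mpr hmono) hA.le
          _ ≤ C / 3 * Real.exp (-(c * t ^ 2) / ((n:ℝ) + b * t ^ γ)) := by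
              apply mul_le_mul_of_nonneg_right _ (Real.exp_pos _).le
              rw [hC_def]
              linarith only [Real.exp_pos (c * u₀), hZ, mul_pos hn₁ hA, hA]
      -- (iii)
      have hiii : C * Real.exp (-(c * (θ * t) ^ 2) / (((n - h : ℕ):ℝ) + b * (θ * t) ^ γ)) ≤
          C / 3 * Real.exp (-(c * t ^ 2) / ((n:ℝ) + b * t ^ γ)) := by
        have hrp : (θ * t) ^ γ ≤ t ^ γ := by
          apply Real.rpow_le_rpow hθt _ hγ0.le
          linarith only [mul_nonneg (show (0:ℝ) ≤ 1 - θ by linarith only [hθ1]) ht]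
        have h8 : b * (θ * t) ^ γ ≤ θ^2/4 * n :=
          le_trans (mul_le_mul_of_nonneg_left hrp hb) hbtle
        have hD₃le : ((n - h : ℕ):ℝ) + b * (θ * t) ^ γ ≤ 3 * θ^2 * (n:ℝ) / 4 := by
          rw [hcast]; linarith only [hhge, h8]
        have hgain3 : -(c * (θ * t) ^ 2) / (((n - h : ℕ):ℝ) + b * (θ * t) ^ γ) ≤
            -(c * t ^ 2) / ((n:ℝ) + b * t ^ γ) - Real.log 3 := by
          have p1 : (4:ℝ)/3 * (t ^ 2 / (n:ℝ)) ≤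
              (θ * t) ^ 2 / (((n - h : ℕ):ℝ) + b * (θ * t) ^ γ) := by
            have e : (4:ℝ)/3 * (t ^ 2 / (n:ℝ)) = (4 * t ^ 2) / (3 * n) := by ring
            rw [e, div_le_div_iff₀ (by positivity) hD₃]
            have q1 := mul_le_mul_of_nonneg_left hD₃le
              (show (0:ℝ) ≤ 4 * t ^ 2 by positivity)
            linarith only [q1]
          have p2 : t ^ 2 / ((n:ℝ) + b * t ^ γ) ≤ t ^ 2 / (n:ℝ) :=
            div_le_div_of_nonneg_left (sq_nonneg t) hn0' (by linarith only [hbt])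
          have p3 := mul_le_mul_of_nonneg_left p1 hc.le
          have p4 := mul_le_mul_of_nonneg_left hu.le hg₃.le
          have p5 : c * (4/3 * (t ^ 2 / (n:ℝ))) = c * (t ^ 2 / (n:ℝ)) + g₃ * (t ^ 2 / (n:ℝ)) := by
            rw [hg₃_def]; ring
          have p6 := mul_le_mul_of_nonneg_left p2 hc.le
          have p7 := mul_le_mul_of_nonneg_left p2 hg₃.le
          rw [neg_div, neg_div, mul_div_assoc, mul_div_assoc]
          linarith only [hg₃u₀, p3, p4, p5, p6, p7]
        have h7 := Real.exp_le_exp.mpr hgain3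
        rw [Real.exp_sub, Real.exp_log (by norm_num : (0:ℝ) < 3)] at h7
        calc C * Real.exp (-(c * (θ * t) ^ 2) / (((n - h : ℕ):ℝ) + b * (θ * t) ^ γ))
            ≤ C * (Real.exp (-(c * t ^ 2) / ((n:ℝ) + b * t ^ γ)) / 3) :=
              mul_le_mul_of_nonneg_left h7 hC.le
          _ = C / 3 * Real.exp (-(c * t ^ 2) / ((n:ℝ) + b * t ^ γ)) := by ring
      refine le_trans (add_le_add (add_le_add hi hii) hiii) ?_
      apply le_of_eq
      ring
end

section
/- Let X₁, X₂, … be a sequence of real-valued random variables. Assume there exist constants A > 0 and a > 0 and a sequence of non-decreasing non-negative functions {g_n}_{n≥1} on (0,∞) such that for all t > 0 and n ≥ 1, g_n(t) ≤ g_{n+1}(t), and for every 0 < ρ < 1, lim_{n→∞} inf{ t²/(g_n(t)·log t) : t > 0, g_n(t) > ρn } = ∞ (where the infimum of the empty set is defined to be ∞), and such that for all integers m ≥ 0, n ≥ 1 and all t ≥ 0, P{|S(m+1, m+n)| > t} ≤ A·exp{ −a t² / (n + g_n(t)) }. Then for every 0 < c < a there exists a constant C > 0 (depending only on A, a and {g_n})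 such that for all n ≥ 1, m ≥ 0 and t ≥ 0, P{M(m+1, m+n) > t} ≤ C·exp{ −c t² / (n + g_n(t)) }. -/
open MeasureTheory

set_option maxHeartbeats 1600000

/-- General maximal Bernstein-type inequality: assume `g n` is a sequence of
non-decreasing non-negative functions on `(0,∞)`, non-decreasing in `n`,
such that for every `0 < ρ < 1`,
`lim_{n→∞} inf{ t²/(g n t · log t) : t > 0, g n t > ρ n } = ∞`
(the infimum of the empty set being `∞`, the limit condition is expressed as:
for every bound `K` there is `N` such that for `n ≥ N` every element of the set
is `≥ K`), and that
`P{|S(m+1,m+n)| > t} ≤ A exp{-a t² / (n + g n t)}`.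
Then for every `0 < c < a` there is `C > 0` such that
`P{M(m+1,m+n) > t} ≤ C exp{-c t² / (n + g n t)}`. -/
theorem maximal_bernstein_inequality_general
    {Ω : Type*} [MeasurableSpace Ω] (P : Measure Ω) [IsProbabilityMeasure P]
    (X : ℕ → Ω → ℝ) (A a : ℝ) (g : ℕ → ℝ → ℝ)
    (hA : 0 < A) (ha : 0 < a)
    (hg_nonneg : ∀ n : ℕ, 1 ≤ n → ∀ t : ℝ, 0 < t → 0 ≤ g n t)
    (hg_mono : ∀ n : ℕ, 1 ≤ n → ∀ s t : ℝ, 0 < s → s ≤ t → g n s ≤ g n t)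
    (hg_incr : ∀ n : ℕ, 1 ≤ n → ∀ t : ℝ, 0 < t → g n t ≤ g (n + 1) t)
    (hg_lim : ∀ ρ : ℝ, 0 < ρ → ρ < 1 → ∀ K : ℝ, ∃ N : ℕ, ∀ n : ℕ, N ≤ n →
      ∀ t : ℝ, 0 < t → ρ * n < g n t → K ≤ t ^ 2 / (g n t * Real.log t))
    (hS : ∀ m n : ℕ, 1 ≤ n → ∀ t : ℝ, 0 ≤ t →
      (P {ω | t < |∑ i ∈ Finset.Icc (m + 1) (m + n), X i ω|}).toReal ≤
        A * Real.exp (-(a * t ^ 2) / (n + g n t))) :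
    ∀ c : ℝ, 0 < c → c < a →
      ∃ C : ℝ, 0 < C ∧
        ∀ m n : ℕ, ∀ hn : 1 ≤ n, ∀ t : ℝ, 0 ≤ t →
          (P {ω | t < (Finset.Icc 1 n).sup' (Finset.nonempty_Icc.mpr hn)
              (fun j => |∑ i ∈ Finset.Icc (m + 1) (m + j), X i ω|)}).toReal ≤
            C * Real.exp (-(c * t ^ 2) / (n + g n t)) := by
  intro c hc hca
  -- monotonicity of g in n
  have hgmono2 : ∀ j n : ℕ, 1 ≤ j → j ≤ n → ∀ t : ℝ, 0 < t → g j t ≤ g n t := by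
    intro j n hj hjn t ht
    induction n, hjn using Nat.le_induction with
    | base => exact le_rfl
    | succ n hn ih => exact ih.trans (hg_incr n (hj.trans hn) t ht)
  -- denominator monotonicity
  have hden : ∀ j n : ℕ, 1 ≤ j → j ≤ n → ∀ s t : ℝ, 0 < s → s ≤ t →
      (j : ℝ) + g j s ≤ (n : ℝ) + g n t := by
    intro j n hj hjn s t hs hst
    have h1 : g j s ≤ g j t := hg_mono j hj s t hs (hst)
    have h2 : g j t ≤ g n t := hgmono2 j n hj hjn t (lt_of_lt_of_le hs hst)
    have h3 : (j : ℝ) ≤ n := Nat.cast_le.mpr hjn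
    linarith
  have hdpos : ∀ n : ℕ, 1 ≤ n → ∀ t : ℝ, 0 < t → 0 < (n : ℝ) + g n t := by
    intro n hn t ht
    have h1 : (1 : ℝ) ≤ n := Nat.one_le_cast.mpr hn
    have h2 := hg_nonneg n hn t ht
    linarith
  have hexp : ∀ x d1 d2 : ℝ, 0 ≤ x → 0 < d1 → d1 ≤ d2 →
      Real.exp (-x / d1) ≤ Real.exp (-x / d2) := by
    intro x d1 d2 hx h1 h2
    apply Real.exp_le_exp.mpr
    rw [neg_div, neg_div, neg_le_neg_iff]
    gcongr
  have htoReal1 : ∀ E : Set Ω, (P E).toReal ≤ 1 := by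
    intro E
    calc (P E).toReal ≤ (1 : ENNReal).toReal :=
          ENNReal.toReal_mono ENNReal.one_ne_top prob_le_one
      _ = 1 := ENNReal.toReal_one
  have htr3 : ∀ E1 E2 E3 : Set Ω, (P (E1 ∪ E2 ∪ E3)).toReal ≤
      (P E1).toReal + (P E2).toReal + (P E3).toReal := by
    intro E1 E2 E3
    have h1 : P (E1 ∪ E2 ∪ E3) ≤ P E1 + P E2 + P E3 :=
      le_trans (measure_union_le _ _) (add_le_add_left (measure_union_le _ _) _)
    have h2 : P E1 + P E2 + P E3 ≠ ⊤ := by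
      simp [ENNReal.add_ne_top, measure_ne_top]
    calc (P (E1 ∪ E2 ∪ E3)).toReal ≤ (P E1 + P E2 + P E3).toReal :=
          ENNReal.toReal_mono h2 h1
      _ = (P E1).toReal + (P E2).toReal + (P E3).toReal := by
          rw [ENNReal.toReal_add (by simp [ENNReal.add_ne_top, measure_ne_top]) (measure_ne_top _ _),
            ENNReal.toReal_add (measure_ne_top _ _) (measure_ne_top _ _)]
  -- union bound
  have hub : ∀ m n : ℕ, ∀ hn : 1 ≤ n, ∀ t : ℝ, 0 < t →
      (P {ω | t < (Finset.Icc 1 n).sup' (Finset.nonempty_Icc.mpr hn)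
          (fun j => |∑ i ∈ Finset.Icc (m + 1) (m + j), X i ω|)}).toReal ≤
        (n : ℝ) * (A * Real.exp (-(a * t ^ 2) / ((n : ℝ) + g n t))) := by
    intro m n hn t ht
    have hsub : {ω | t < (Finset.Icc 1 n).sup' (Finset.nonempty_Icc.mpr hn)
          (fun j => |∑ i ∈ Finset.Icc (m + 1) (m + j), X i ω|)} ⊆
        ⋃ j ∈ Finset.Icc 1 n, {ω | t < |∑ i ∈ Finset.Icc (m + 1) (m + j), X i ω|} := by
      intro ω hω
      rw [Set.mem_setOf_eq, Finset.lt_sup'_iff] at hω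
      obtain ⟨j, hj, hjt⟩ := hω
      exact Set.mem_biUnion hj hjt
    have h1 : (P {ω | t < (Finset.Icc 1 n).sup' (Finset.nonempty_Icc.mpr hn)
          (fun j => |∑ i ∈ Finset.Icc (m + 1) (m + j), X i ω|)}).toReal ≤
        (∑ j ∈ Finset.Icc 1 n,
          P {ω | t < |∑ i ∈ Finset.Icc (m + 1) (m + j), X i ω|}).toReal := by
      apply ENNReal.toReal_mono
      · exact ENNReal.sum_ne_top.mpr (fun j _ => measure_ne_top _ _)
      · exact le_trans (measure_mono hsub) (measure_biUnion_finset_le _ _)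
    rw [ENNReal.toReal_sum (fun j _ => measure_ne_top _ _)] at h1
    have h2 : ∑ j ∈ Finset.Icc 1 n,
          (P {ω | t < |∑ i ∈ Finset.Icc (m + 1) (m + j), X i ω|}).toReal ≤
        ∑ j ∈ Finset.Icc 1 n, A * Real.exp (-(a * t ^ 2) / ((n : ℝ) + g n t)) := by
      apply Finset.sum_le_sum
      intro j hj
      rw [Finset.mem_Icc] at hj
      calc (P {ω | t < |∑ i ∈ Finset.Icc (m + 1) (m + j), X i ω|}).toReal ≤
            A * Real.exp (-(a * t ^ 2) / ((j : ℝ) + g j t)) := hS m j hj.1 t ht.le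
        _ ≤ A * Real.exp (-(a * t ^ 2) / ((n : ℝ) + g n t)) := by
            apply mul_le_mul_of_nonneg_left _ hA.le
            exact hexp _ _ _ (by positivity) (hdpos j hj.1 t ht)
              (hden j n hj.1 hj.2 t t ht le_rfl)
    rw [Finset.sum_const, Nat.card_Icc] at h2
    have hcard : ((n + 1 - 1 : ℕ) : ℝ) = (n : ℝ) := by simp
    calc _ ≤ _ := h1
      _ ≤ _ := h2
      _ = (n : ℝ) * (A * Real.exp (-(a * t ^ 2) / ((n : ℝ) + g n t))) := by
          rw [nsmul_eq_mul, hcard]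
  -- constants
  have hc1c : c < (c + a) / 2 := by linarith
  have hc1a : (c + a) / 2 < a := by linarith
  obtain ⟨δ, hδ0, hδ1, hδa⟩ : ∃ δ : ℝ, 0 < δ ∧ δ < 1 ∧ a * (1 - δ) ^ 2 = (c + a) / 2 := by
    refine ⟨1 - Real.sqrt ((c + a) / (2 * a)), ?_, ?_, ?_⟩
    · have h1 : (c + a) / (2 * a) < 1 := by rw [div_lt_one (by linarith)]; linarith
      have h2 : Real.sqrt ((c + a) / (2 * a)) < 1 := by
        calc Real.sqrt ((c + a) / (2 * a)) < Real.sqrt 1 :=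
              Real.sqrt_lt_sqrt (by positivity) h1
          _ = 1 := Real.sqrt_one
      linarith
    · have h2 : 0 < Real.sqrt ((c + a) / (2 * a)) := Real.sqrt_pos.mpr (by positivity)
      linarith
    · have h3 : (1 - (1 - Real.sqrt ((c + a) / (2 * a)))) ^ 2 = (c + a) / (2 * a) := by
        rw [show 1 - (1 - Real.sqrt ((c + a) / (2 * a))) = Real.sqrt ((c + a) / (2 * a)) by ring]
        exact Real.sq_sqrt (by positivity)
      rw [h3]; field_simp
  have hδsq1 : δ ^ 2 < 1 := by nlinarith
  set ρ : ℝ := δ ^ 2 / 8 with hρdef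
  have hρ0 : 0 < ρ := by positivity
  have hρ1 : ρ < 1 := by rw [hρdef]; nlinarith
  have hac : 0 < a - c := by linarith
  set K : ℝ := (1 + 2 * (1 + ρ) / (a - c)) / ρ with hKdef
  have hρK : ρ * K = 1 + 2 * (1 + ρ) / (a - c) := by
    rw [hKdef, mul_comm]; exact div_mul_cancel₀ _ (ne_of_gt hρ0)
  have hfrac0 : 0 < 2 * (1 + ρ) / (a - c) := div_pos (by linarith) hac
  have hK0 : 0 < K := by
    rw [hKdef]; exact div_pos (by linarith) hρ0
  have hKρ1 : 1 ≤ ρ * K := by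
    linarith [hρK]
  have hKρ2 : 2 * (1 + ρ) ≤ K * ρ * (a - c) := by
    have h1 : K * ρ * (a - c) = (1 + 2 * (1 + ρ) / (a - c)) * (a - c) := by
      rw [mul_comm K ρ, hρK]
    have h2 : 2 * (1 + ρ) / (a - c) * (a - c) = 2 * (1 + ρ) :=
      div_mul_cancel₀ _ (ne_of_gt hac)
    rw [h1, add_mul, h2]
    nlinarith
  obtain ⟨N₁, hN₁⟩ := hg_lim ρ hρ0 hρ1 K
  set N₀ : ℕ := ⌈(8 : ℝ) / δ ^ 2⌉₊ + 1 with hN₀def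
  set Nm : ℕ := max N₀ N₁ with hNmdef
  have h8 : ∀ n : ℕ, Nm ≤ n → (8 : ℝ) / δ ^ 2 ≤ (n : ℝ) := by
    intro n hn
    have h1 : (8 : ℝ) / δ ^ 2 ≤ (⌈(8 : ℝ) / δ ^ 2⌉₊ : ℝ) := Nat.le_ceil _
    have h2 : N₀ ≤ n := le_trans (le_max_left _ _) hn
    have h3 : (⌈(8 : ℝ) / δ ^ 2⌉₊ : ℝ) ≤ (n : ℝ) := by
      have : ⌈(8 : ℝ) / δ ^ 2⌉₊ ≤ n := by omega
      exact_mod_cast this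
    linarith
  have hlog4 : 0 < Real.log 4 := Real.log_pos (by norm_num)
  set L : ℝ := (Real.exp 1) ^ 2 / ρ + 4 * Real.log 4 / (c * δ ^ 2) +
      5 * Real.log 4 / (3 * c) + 1 with hLdef
  have hL0 : 0 < L := by rw [hLdef]; positivity
  have hLe : (Real.exp 1) ^ 2 / ρ ≤ L := by
    rw [hLdef]
    have h1 : 0 ≤ 4 * Real.log 4 / (c * δ ^ 2) := by positivity
    have h2 : 0 ≤ 5 * Real.log 4 / (3 * c) := by positivity
    linarith
  have hL4 : Real.log 4 ≤ c * δ ^ 2 * L / 4 := by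
    have h1 : c * δ ^ 2 * (4 * Real.log 4 / (c * δ ^ 2)) / 4 = Real.log 4 := by
      field_simp
    have h2 : 4 * Real.log 4 / (c * δ ^ 2) ≤ L := by
      rw [hLdef]
      have h3 : 0 ≤ (Real.exp 1) ^ 2 / ρ := by positivity
      have h4 : 0 ≤ 5 * Real.log 4 / (3 * c) := by positivity
      linarith
    calc Real.log 4 = c * δ ^ 2 * (4 * Real.log 4 / (c * δ ^ 2)) / 4 := h1.symm
      _ ≤ c * δ ^ 2 * L / 4 := by gcongr
  have hL5 : Real.log 4 ≤ 3 * c * L / 5 := by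
    have h1 : 3 * c * (5 * Real.log 4 / (3 * c)) / 5 = Real.log 4 := by field_simp
    have h2 : 5 * Real.log 4 / (3 * c) ≤ L := by
      rw [hLdef]
      have h3 : 0 ≤ (Real.exp 1) ^ 2 / ρ := by positivity
      have h4 : 0 ≤ 4 * Real.log 4 / (c * δ ^ 2) := by positivity
      linarith
    calc Real.log 4 = 3 * c * (5 * Real.log 4 / (3 * c)) / 5 := h1.symm
      _ ≤ 3 * c * L / 5 := by gcongr
  set D : ℝ := 2 * A + (Nm : ℝ) * A + Real.exp (c * L) + 1 with hDdef
  have hD0 : 0 < D := by rw [hDdef]; positivity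
  have hD1 : 1 ≤ D := by
    rw [hDdef]
    have h1 : 0 ≤ 2 * A := by positivity
    have h2 : 0 ≤ (Nm : ℝ) * A := by positivity
    have h3 : 0 ≤ Real.exp (c * L) := (Real.exp_pos _).le
    linarith
  have hD2A : 2 * A ≤ D := by
    rw [hDdef]
    have h2 : 0 ≤ (Nm : ℝ) * A := by positivity
    have h3 : 0 ≤ Real.exp (c * L) := (Real.exp_pos _).le
    linarith
  have hDNm : (Nm : ℝ) * A ≤ D := by
    rw [hDdef]
    have h1 : 0 ≤ 2 * A := by positivity
    have h3 : 0 ≤ Real.exp (c * L) := (Real.exp_pos _).le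
    linarith
  have hDexp : Real.exp (c * L) ≤ D := by
    rw [hDdef]
    have h1 : 0 ≤ 2 * A := by positivity
    have h2 : 0 ≤ (Nm : ℝ) * A := by positivity
    linarith
  -- helper for exp/4
  have hq : ∀ x y : ℝ, x ≤ y - Real.log 4 → Real.exp x ≤ (1 / 4) * Real.exp y := by
    intro x y hxy
    have h1 : Real.exp x ≤ Real.exp (y - Real.log 4) := Real.exp_le_exp.mpr hxy
    rwa [Real.exp_sub, Real.exp_log (by norm_num : (0 : ℝ) < 4),
      div_eq_mul_inv, mul_comm, show ((4 : ℝ))⁻¹ = 1 / 4 by norm_num] at h1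
  refine ⟨D, hD0, ?_⟩
  have key : ∀ n m : ℕ, ∀ hn : 1 ≤ n, ∀ t : ℝ, 0 ≤ t →
      (P {ω | t < (Finset.Icc 1 n).sup' (Finset.nonempty_Icc.mpr hn)
          (fun j => |∑ i ∈ Finset.Icc (m + 1) (m + j), X i ω|)}).toReal ≤
        D * Real.exp (-(c * t ^ 2) / ((n : ℝ) + g n t)) := by
    intro n
    induction n using Nat.strong_induction_on with
    | _ n IH =>
    intro m hn t ht
    rcases ht.lt_or_eq with ht0 | ht0
    swap
    · -- t = 0
      subst ht0
      have : -(c * (0 : ℝ) ^ 2) / ((n : ℝ) + g n 0) = 0 := by norm_num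
      rw [this, Real.exp_zero, mul_one]
      exact le_trans (htoReal1 _) hD1
    -- t > 0
    have hdn : 0 < (n : ℝ) + g n t := hdpos n hn t ht0
    have hnc1 : (1 : ℝ) ≤ (n : ℝ) := Nat.one_le_cast.mpr hn
    have hφ0 : 0 ≤ t ^ 2 / ((n : ℝ) + g n t) := by positivity
    have hrwc : -(c * t ^ 2) / ((n : ℝ) + g n t) = -(c * (t ^ 2 / ((n : ℝ) + g n t))) := by
      rw [neg_div, mul_div_assoc]
    by_cases htriv : t ^ 2 / ((n : ℝ) + g n t) ≤ L
    · -- trivial regime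
      have h1 : Real.exp (-(c * L)) ≤ Real.exp (-(c * (t ^ 2 / ((n : ℝ) + g n t)))) := by
        apply Real.exp_le_exp.mpr
        have : c * (t ^ 2 / ((n : ℝ) + g n t)) ≤ c * L :=
          mul_le_mul_of_nonneg_left htriv hc.le
        linarith
      have h2 : (1 : ℝ) ≤ D * Real.exp (-(c * t ^ 2) / ((n : ℝ) + g n t)) := by
        rw [hrwc]
        calc (1 : ℝ) = Real.exp (c * L) * Real.exp (-(c * L)) := by
              rw [← Real.exp_add]; norm_num
          _ ≤ D * Real.exp (-(c * (t ^ 2 / ((n : ℝ) + g n t)))) := by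
              apply mul_le_mul hDexp h1 (Real.exp_pos _).le (by linarith)
      exact le_trans (htoReal1 _) h2
    push_neg at htriv
    by_cases hun : Real.log n ≤ (a - c) * (t ^ 2 / ((n : ℝ) + g n t))
    · -- large values : union bound
      have hrwa : -(a * t ^ 2) / ((n : ℝ) + g n t) = -(a * (t ^ 2 / ((n : ℝ) + g n t))) := by
        rw [neg_div, mul_div_assoc]
      have hnexp : (n : ℝ) ≤ Real.exp ((a - c) * (t ^ 2 / ((n : ℝ) + g n t))) := by
        have h := Real.exp_le_exp.mpr hun
        rwa [Real.exp_log (show (0 : ℝ) < (n : ℝ) by linarith)] at h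
      calc _ ≤ (n : ℝ) * (A * Real.exp (-(a * t ^ 2) / ((n : ℝ) + g n t))) := hub m n hn t ht0
        _ ≤ Real.exp ((a - c) * (t ^ 2 / ((n : ℝ) + g n t))) *
            (A * Real.exp (-(a * t ^ 2) / ((n : ℝ) + g n t))) := by
            apply mul_le_mul_of_nonneg_right hnexp (by positivity)
        _ = A * Real.exp (-(c * t ^ 2) / ((n : ℝ) + g n t)) := by
            rw [hrwa, hrwc, mul_comm, mul_assoc, ← Real.exp_add]
            ring_nf
        _ ≤ D * Real.exp (-(c * t ^ 2) / ((n : ℝ) + g n t)) := by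
            apply mul_le_mul_of_nonneg_right (by linarith) (Real.exp_pos _).le
    push_neg at hun
    by_cases hNm : n < Nm
    · -- small n : union bound
      have hnNm : (n : ℝ) ≤ (Nm : ℝ) := Nat.cast_le.mpr hNm.le
      have hexpac : Real.exp (-(a * t ^ 2) / ((n : ℝ) + g n t)) ≤
          Real.exp (-(c * t ^ 2) / ((n : ℝ) + g n t)) := by
        apply Real.exp_le_exp.mpr
        rw [neg_div, neg_div, neg_le_neg_iff]
        gcongr
      calc _ ≤ (n : ℝ) * (A * Real.exp (-(a * t ^ 2) / ((n : ℝ) + g n t))) := hub m n hn t ht0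
        _ ≤ (Nm : ℝ) * (A * Real.exp (-(a * t ^ 2) / ((n : ℝ) + g n t))) := by
            apply mul_le_mul_of_nonneg_right hnNm (by positivity)
        _ = ((Nm : ℝ) * A) * Real.exp (-(a * t ^ 2) / ((n : ℝ) + g n t)) := by ring
        _ ≤ D * Real.exp (-(c * t ^ 2) / ((n : ℝ) + g n t)) := by
            apply mul_le_mul hDNm hexpac (Real.exp_pos _).le hD0.le
    push_neg at hNm
    -- hard regime: first derive g n t ≤ ρ n
    have hgle : g n t ≤ ρ * (n : ℝ) := by
      by_contra hg'
      push_neg at hg'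
      have hgpos : 0 < g n t := lt_trans (mul_pos hρ0 (by linarith : (0:ℝ) < (n:ℝ))) hg'
      have hK := hN₁ n (le_trans (le_max_right N₀ N₁) hNm) t ht0 hg'
      rcases lt_trichotomy t 1 with h1 | h1 | h1
      · have hlt : Real.log t < 0 := Real.log_neg ht0 h1
        have hneg : t ^ 2 / (g n t * Real.log t) < 0 :=
          div_neg_of_pos_of_neg (by positivity) (mul_neg_of_pos_of_neg hgpos hlt)
        linarith
      · rw [h1] at hK
        simp [Real.log_one] at hK
        linarith
      · have hlt : 0 < Real.log t := Real.log_pos h1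
        have hKg : K * (g n t * Real.log t) ≤ t ^ 2 :=
          (le_div_iff₀ (mul_pos hgpos hlt)).mp hK
        rcases lt_or_ge t (Real.exp 1) with h2 | h2
        · -- 1 < t < e : φ ≤ e²/ρ ≤ L, contradiction with L < φ
          have hc1' : t ^ 2 / ((n : ℝ) + g n t) ≤ t ^ 2 / (g n t) :=
            div_le_div_of_nonneg_left (by positivity) hgpos (by linarith)
          have hρn : 0 < ρ * (n : ℝ) := mul_pos hρ0 (by linarith : (0:ℝ) < (n:ℝ))
          have hc2' : t ^ 2 / (g n t) ≤ t ^ 2 / (ρ * (n : ℝ)) :=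
            div_le_div_of_nonneg_left (by positivity) hρn hg'.le
          have hc3' : t ^ 2 / (ρ * (n : ℝ)) ≤ (Real.exp 1) ^ 2 / ρ := by
            have hρρn : ρ ≤ ρ * (n : ℝ) := by
              have := mul_le_mul_of_nonneg_left hnc1 hρ0.le
              rwa [mul_one] at this
            have hte : t ^ 2 ≤ (Real.exp 1) ^ 2 := pow_le_pow_left₀ ht0.le h2.le 2
            gcongr
          linarith
        · have hlog1 : 1 ≤ Real.log t := (Real.le_log_iff_exp_le ht0).mpr h2
          have hnt2 : (n : ℝ) ≤ t ^ 2 := by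
            have s1 : (n : ℝ) ≤ ρ * K * (n : ℝ) := by
              have := mul_nonneg (sub_nonneg.mpr hKρ1) (by linarith : (0:ℝ) ≤ (n:ℝ))
              linarith [this]
            have s2 : ρ * K * (n : ℝ) ≤ ρ * K * (n : ℝ) * Real.log t := by
              have := mul_nonneg (mul_nonneg (mul_nonneg hρ0.le hK0.le)
                (by linarith : (0:ℝ) ≤ (n:ℝ))) (sub_nonneg.mpr hlog1)
              linarith [this]
            have s3 : ρ * K * (n : ℝ) * Real.log t ≤ K * (g n t * Real.log t) := by
              have := mul_nonneg (mul_nonneg hK0.le hlt.le) (sub_nonneg.mpr (le_of_lt hg'))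
              linarith [this]
            linarith
          have hlogn : Real.log (n : ℝ) ≤ 2 * Real.log t := by
            have hl := Real.log_le_log (by linarith : (0:ℝ) < (n:ℝ)) hnt2
            rw [Real.log_pow] at hl
            push_cast at hl
            linarith
          have hd' : (n : ℝ) + g n t ≤ g n t * (1 + ρ) / ρ := by
            have h3 : (n : ℝ) < g n t / ρ := (lt_div_iff₀ hρ0).mpr (by linarith)
            have h4 : g n t / ρ + g n t = g n t * (1 + ρ) / ρ := by
              field_simp
            linarith
          have hφ1 : K * ρ * Real.log t / (1 + ρ) ≤ t ^ 2 / ((n : ℝ) + g n t) := by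
            have hgd : 0 < g n t * (1 + ρ) / ρ := by
              apply div_pos (mul_pos hgpos (by linarith)) hρ0
            have hgne : g n t ≠ 0 := ne_of_gt hgpos
            have hρne : ρ ≠ 0 := ne_of_gt hρ0
            have h1ρ : (1 : ℝ) + ρ ≠ 0 := by positivity
            calc K * ρ * Real.log t / (1 + ρ)
                = K * (g n t * Real.log t) / (g n t * (1 + ρ) / ρ) := by
                  field_simp
              _ ≤ t ^ 2 / (g n t * (1 + ρ) / ρ) := by gcongr
              _ ≤ t ^ 2 / ((n : ℝ) + g n t) :=
                  div_le_div_of_nonneg_left (by positivity) hdn hd'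
          have h6 : 2 * Real.log t ≤ (a - c) * (K * ρ * Real.log t / (1 + ρ)) := by
            rw [show (a - c) * (K * ρ * Real.log t / (1 + ρ)) =
                ((a - c) * (K * ρ) * Real.log t) / (1 + ρ) by ring]
            rw [le_div_iff₀ (by linarith : (0:ℝ) < 1 + ρ)]
            have := mul_nonneg hlt.le (sub_nonneg.mpr hKρ2)
            linarith [this]
          have h5 : (a - c) * (K * ρ * Real.log t / (1 + ρ)) ≤
              (a - c) * (t ^ 2 / ((n : ℝ) + g n t)) :=
            mul_le_mul_of_nonneg_left hφ1 hac.le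
          linarith
    have hg8 : g n t ≤ δ ^ 2 / 8 * (n : ℝ) := by rw [hρdef] at hgle; exact hgle
    -- bisection point
    set k : ℕ := ⌈(1 - δ ^ 2 / 2) * (n : ℝ)⌉₊ with hkdef
    have hnpos : (0:ℝ) < (n : ℝ) := by linarith
    have hβpos : 0 < 1 - δ ^ 2 / 2 := by linarith [hδsq1]
    have hk0 : 0 < k :=
      Nat.ceil_pos.mpr (mul_pos hβpos (by linarith : (0:ℝ) < (n:ℝ)))
    have hk1 : 1 ≤ k := hk0
    have hklow : (1 - δ ^ 2 / 2) * (n : ℝ) ≤ (k : ℝ) := Nat.le_ceil _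
    have hkup : (k : ℝ) ≤ (1 - δ ^ 2 / 2) * (n : ℝ) + 1 :=
      le_of_lt (Nat.ceil_lt_add_one (le_of_lt (mul_pos hβpos (by linarith))))
    have hn8' : (8 : ℝ) / δ ^ 2 ≤ (n : ℝ) := h8 n hNm
    have hone : (1 : ℝ) ≤ δ ^ 2 / 8 * (n : ℝ) := by
      have he1 : δ ^ 2 / 8 * ((8 : ℝ) / δ ^ 2) = 1 := by field_simp
      have h2' := mul_le_mul_of_nonneg_left hn8' (by positivity : (0:ℝ) ≤ δ ^ 2 / 8)
      rw [he1] at h2'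
      exact h2'
    have hδ2n : 0 < δ ^ 2 * (n : ℝ) := mul_pos (pow_pos hδ0 2) hnpos
    have hknR : (k : ℝ) < (n : ℝ) := by linarith [hkup, hone]
    have hkn : k < n := by exact_mod_cast hknR
    have hn2 : 1 ≤ n - k := by omega
    have hn2cast : ((n - k : ℕ) : ℝ) = (n : ℝ) - (k : ℝ) := by
      have := Nat.cast_sub (R := ℝ) hkn.le
      exact_mod_cast this
    have hδt0 : 0 < δ * t := mul_pos hδ0 ht0
    have h1δt0 : 0 < (1 - δ) * t := mul_pos (by linarith) ht0
    -- event inclusion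
    have hsub : {ω | t < (Finset.Icc 1 n).sup' (Finset.nonempty_Icc.mpr hn)
          (fun j => |∑ i ∈ Finset.Icc (m + 1) (m + j), X i ω|)} ⊆
        {ω | t < (Finset.Icc 1 k).sup' (Finset.nonempty_Icc.mpr hk1)
          (fun j => |∑ i ∈ Finset.Icc (m + 1) (m + j), X i ω|)} ∪
        {ω | (1 - δ) * t < |∑ i ∈ Finset.Icc (m + 1) (m + k), X i ω|} ∪
        {ω | δ * t < (Finset.Icc 1 (n - k)).sup' (Finset.nonempty_Icc.mpr hn2)
          (fun j => |∑ i ∈ Finset.Icc (m + k + 1) (m + k + j), X i ω|)} := by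
      intro ω hω
      simp only [Set.mem_setOf_eq, Set.mem_union, Finset.lt_sup'_iff] at hω ⊢
      obtain ⟨j, hjmem, hjt⟩ := hω
      rw [Finset.mem_Icc] at hjmem
      by_cases hjk : j ≤ k
      · exact Or.inl (Or.inl ⟨j, Finset.mem_Icc.mpr ⟨hjmem.1, hjk⟩, hjt⟩)
      · push_neg at hjk
        by_cases hE2 : (1 - δ) * t < |∑ i ∈ Finset.Icc (m + 1) (m + k), X i ω|
        · exact Or.inl (Or.inr hE2)
        · push_neg at hE2
          refine Or.inr ⟨j - k, Finset.mem_Icc.mpr ⟨by omega, by omega⟩, ?_⟩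
          have hjk2 : m + k + (j - k) = m + j := by omega
          rw [hjk2]
          have hsplit : ∑ i ∈ Finset.Icc (m + 1) (m + j), X i ω =
              (∑ i ∈ Finset.Icc (m + 1) (m + k), X i ω) +
                ∑ i ∈ Finset.Icc (m + k + 1) (m + j), X i ω := by
            rw [Finset.Icc_add_one_left_eq_Ioc m (m + j), Finset.Icc_add_one_left_eq_Ioc m (m + k),
              Finset.Icc_add_one_left_eq_Ioc (m + k) (m + j)]
            exact (Finset.sum_Ioc_consecutive _ (by omega) (by omega)).symm
          have habs : |∑ i ∈ Finset.Icc (m + 1) (m + j), X i ω| ≤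
              |∑ i ∈ Finset.Icc (m + 1) (m + k), X i ω| +
                |∑ i ∈ Finset.Icc (m + k + 1) (m + j), X i ω| := by
            rw [hsplit]
            exact abs_add_le _ _
          have := lt_of_lt_of_le hjt habs
          linarith
    -- use induction hypotheses and the basic bound
    have hIH1 := IH k hkn m hk1 t ht0.le
    have hIH3 := IH (n - k) (by omega) (m + k) hn2 (δ * t) hδt0.le
    have hS2 := hS m k hk1 ((1 - δ) * t) h1δt0.le
    -- denominators
    have hdk : 0 < (k : ℝ) + g k t := hdpos k hk1 t ht0
    have hdk2 : 0 < (k : ℝ) + g k ((1 - δ) * t) := hdpos k hk1 _ h1δt0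
    have hd3 : 0 < ((n - k : ℕ) : ℝ) + g (n - k) (δ * t) := hdpos (n - k) hn2 _ hδt0
    have hgkt : g k t ≤ g n t := hgmono2 k n hk1 hkn.le t ht0
    have hgk2 : g k ((1 - δ) * t) ≤ g n t :=
      le_trans (hg_mono k hk1 _ t h1δt0 (by linarith [hδt0.le])) hgkt
    have hg3 : g (n - k) (δ * t) ≤ g n t :=
      le_trans (hg_mono (n - k) hn2 _ t hδt0 (by linarith [h1δt0.le]))
        (hgmono2 (n - k) n hn2 (by omega) t ht0)
    have hgnt0 : 0 ≤ g n t := hg_nonneg n hn t ht0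
    -- numeric facts
    have htn : t ^ 2 / ((n : ℝ) + g n t) ≤ t ^ 2 / (n : ℝ) :=
      div_le_div_of_nonneg_left (sq_nonneg t) (by linarith) (by linarith)
    have hLtn : L ≤ t ^ 2 / (n : ℝ) := le_trans htriv.le htn
    -- first exponential bound
    have hdkσ : (k : ℝ) + g k t ≤ (1 - δ ^ 2 / 4) * (n : ℝ) := by linarith [hkup, hone, hgkt, hg8]
    have hf1 : Real.exp (-(c * t ^ 2) / ((k : ℝ) + g k t)) ≤
        (1 / 4) * Real.exp (-(c * t ^ 2) / ((n : ℝ) + g n t)) := by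
      apply hq
      rw [neg_div, mul_div_assoc, neg_div, mul_div_assoc]
      have hσpos : 0 < (1 - δ ^ 2 / 4) * (n : ℝ) := mul_pos (by linarith [hδsq1]) hnpos
      have s1 : t ^ 2 / ((1 - δ ^ 2 / 4) * (n : ℝ)) ≤ t ^ 2 / ((k : ℝ) + g k t) :=
        div_le_div_of_nonneg_left (sq_nonneg t) hdk hdkσ
      have s2 : t ^ 2 / (n : ℝ) + δ ^ 2 / 4 * (t ^ 2 / (n : ℝ)) ≤
          t ^ 2 / ((1 - δ ^ 2 / 4) * (n : ℝ)) := by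
        rw [mul_comm (1 - δ ^ 2 / 4) ((n : ℝ)), ← div_div,
          le_div_iff₀ (by linarith [hδsq1] : (0:ℝ) < 1 - δ ^ 2 / 4)]
        have hu : 0 ≤ t ^ 2 / (n : ℝ) := by positivity
        have := mul_nonneg hu (pow_nonneg hδ0.le 4)
        linarith [this]
      have h9 : δ ^ 2 / 4 * L ≤ δ ^ 2 / 4 * (t ^ 2 / (n : ℝ)) :=
        mul_le_mul_of_nonneg_left hLtn (by positivity)
      have s3 : t ^ 2 / ((n : ℝ) + g n t) + δ ^ 2 / 4 * L ≤ t ^ 2 / ((k : ℝ) + g k t) := by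
        linarith
      have h11 : Real.log 4 ≤ c * (δ ^ 2 / 4 * L) := by
        have he2 : c * (δ ^ 2 / 4 * L) = c * δ ^ 2 * L / 4 := by ring
        linarith [hL4]
      have h10 := mul_le_mul_of_nonneg_left s3 hc.le
      calc -(c * (t ^ 2 / ((k : ℝ) + g k t)))
          ≤ -(c * (t ^ 2 / ((n : ℝ) + g n t) + δ ^ 2 / 4 * L)) := by linarith
        _ = -(c * (t ^ 2 / ((n : ℝ) + g n t))) - c * (δ ^ 2 / 4 * L) := by ring
        _ ≤ -(c * (t ^ 2 / ((n : ℝ) + g n t))) - Real.log 4 := by linarith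
    -- third exponential bound
    have hd3σ : ((n - k : ℕ) : ℝ) + g (n - k) (δ * t) ≤ 5 * δ ^ 2 / 8 * (n : ℝ) := by
      rw [hn2cast]
      linarith [hklow, hg3, hg8]
    have hf3 : Real.exp (-(c * (δ * t) ^ 2) / (((n - k : ℕ) : ℝ) + g (n - k) (δ * t))) ≤
        (1 / 4) * Real.exp (-(c * t ^ 2) / ((n : ℝ) + g n t)) := by
      apply hq
      rw [neg_div, mul_div_assoc, neg_div, mul_div_assoc]
      have hσ3 : 0 < 5 * δ ^ 2 / 8 * (n : ℝ) := by
        apply mul_pos (by positivity) hnpos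
      have s1 : (δ * t) ^ 2 / (5 * δ ^ 2 / 8 * (n : ℝ)) ≤
          (δ * t) ^ 2 / (((n - k : ℕ) : ℝ) + g (n - k) (δ * t)) :=
        div_le_div_of_nonneg_left (sq_nonneg _) hd3 hd3σ
      have s2 : (δ * t) ^ 2 / (5 * δ ^ 2 / 8 * (n : ℝ)) = 8 / 5 * (t ^ 2 / (n : ℝ)) := by
        rw [mul_pow]
        have hδne : δ ≠ 0 := ne_of_gt hδ0
        have hnne : (n : ℝ) ≠ 0 := by positivity
        field_simp
      rw [s2] at s1
      have s3 : t ^ 2 / ((n : ℝ) + g n t) + 3 / 5 * L ≤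
          (δ * t) ^ 2 / (((n - k : ℕ) : ℝ) + g (n - k) (δ * t)) := by linarith
      have h11 : Real.log 4 ≤ c * (3 / 5 * L) := by
        have he2 : c * (3 / 5 * L) = 3 * c * L / 5 := by ring
        linarith [hL5]
      have h10 := mul_le_mul_of_nonneg_left s3 hc.le
      calc -(c * ((δ * t) ^ 2 / (((n - k : ℕ) : ℝ) + g (n - k) (δ * t))))
          ≤ -(c * (t ^ 2 / ((n : ℝ) + g n t) + 3 / 5 * L)) := by linarith
        _ = -(c * (t ^ 2 / ((n : ℝ) + g n t))) - c * (3 / 5 * L) := by ring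
        _ ≤ -(c * (t ^ 2 / ((n : ℝ) + g n t))) - Real.log 4 := by linarith
    -- second exponential bound
    have hdk2d : (k : ℝ) + g k ((1 - δ) * t) ≤ (n : ℝ) + g n t := by
      have hkc : (k : ℝ) ≤ (n : ℝ) := by exact_mod_cast hkn.le
      linarith
    have hf2 : Real.exp (-(a * ((1 - δ) * t) ^ 2) / ((k : ℝ) + g k ((1 - δ) * t))) ≤
        Real.exp (-(c * t ^ 2) / ((n : ℝ) + g n t)) := by
      apply Real.exp_le_exp.mpr
      rw [neg_div, neg_div, neg_le_neg_iff]
      have he : a * ((1 - δ) * t) ^ 2 = (c + a) / 2 * t ^ 2 := by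
        have he1 : a * ((1 - δ) * t) ^ 2 = a * (1 - δ) ^ 2 * t ^ 2 := by ring
        rw [he1, hδa]
      rw [he]
      have hnum : c * t ^ 2 ≤ (c + a) / 2 * t ^ 2 :=
        mul_le_mul_of_nonneg_right (by linarith) (sq_nonneg t)
      have hnum0 : 0 ≤ (c + a) / 2 * t ^ 2 :=
        mul_nonneg (by linarith) (sq_nonneg t)
      calc c * t ^ 2 / ((n : ℝ) + g n t) ≤ (c + a) / 2 * t ^ 2 / ((n : ℝ) + g n t) := by
            gcongr
        _ ≤ (c + a) / 2 * t ^ 2 / ((k : ℝ) + g k ((1 - δ) * t)) :=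
            div_le_div_of_nonneg_left hnum0 hdk2 hdk2d
    -- put everything together
    calc (P {ω | t < (Finset.Icc 1 n).sup' (Finset.nonempty_Icc.mpr hn)
          (fun j => |∑ i ∈ Finset.Icc (m + 1) (m + j), X i ω|)}).toReal
        ≤ (P ({ω | t < (Finset.Icc 1 k).sup' (Finset.nonempty_Icc.mpr hk1)
            (fun j => |∑ i ∈ Finset.Icc (m + 1) (m + j), X i ω|)} ∪
          {ω | (1 - δ) * t < |∑ i ∈ Finset.Icc (m + 1) (m + k), X i ω|} ∪
          {ω | δ * t < (Finset.Icc 1 (n - k)).sup' (Finset.nonempty_Icc.mpr hn2)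
            (fun j => |∑ i ∈ Finset.Icc (m + k + 1) (m + k + j), X i ω|)})).toReal :=
          ENNReal.toReal_mono (measure_ne_top _ _) (measure_mono hsub)
      _ ≤ (P {ω | t < (Finset.Icc 1 k).sup' (Finset.nonempty_Icc.mpr hk1)
            (fun j => |∑ i ∈ Finset.Icc (m + 1) (m + j), X i ω|)}).toReal +
          (P {ω | (1 - δ) * t < |∑ i ∈ Finset.Icc (m + 1) (m + k), X i ω|}).toReal +
          (P {ω | δ * t < (Finset.Icc 1 (n - k)).sup' (Finset.nonempty_Icc.mpr hn2)
            (fun j => |∑ i ∈ Finset.Icc (m + k + 1) (m + k + j), X i ω|)}).toReal :=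
          htr3 _ _ _
      _ ≤ D * Real.exp (-(c * t ^ 2) / ((k : ℝ) + g k t)) +
          A * Real.exp (-(a * ((1 - δ) * t) ^ 2) / ((k : ℝ) + g k ((1 - δ) * t))) +
          D * Real.exp (-(c * (δ * t) ^ 2) / (((n - k : ℕ) : ℝ) + g (n - k) (δ * t))) :=
          add_le_add (add_le_add hIH1 hS2) hIH3
      _ ≤ D * ((1 / 4) * Real.exp (-(c * t ^ 2) / ((n : ℝ) + g n t))) +
          A * Real.exp (-(c * t ^ 2) / ((n : ℝ) + g n t)) +
          D * ((1 / 4) * Real.exp (-(c * t ^ 2) / ((n : ℝ) + g n t))) :=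
          add_le_add (add_le_add (mul_le_mul_of_nonneg_left hf1 hD0.le)
            (mul_le_mul_of_nonneg_left hf2 hA.le))
            (mul_le_mul_of_nonneg_left hf3 hD0.le)
      _ ≤ D * Real.exp (-(c * t ^ 2) / ((n : ℝ) + g n t)) := by
          have hEc : 0 < Real.exp (-(c * t ^ 2) / ((n : ℝ) + g n t)) := Real.exp_pos _
          linarith [mul_nonneg (by linarith : (0:ℝ) ≤ D - 2 * A) hEc.le]
  intro m n hn t ht
  exact key n m hn t ht
end

section
/- Let X₁, X₂, … be a sequence of random variables taking values in a Banach space with norm ‖·‖. Assume there exist constants A > 0 and a > 0 and a sequence of non-decreasing non-negative functions {g_n}_{n≥1} on (0,∞) such that for all t > 0 and n ≥ 1, g_n(t) ≤ g_{n+1}(t), and for every 0 < ρ < 1, lim_{n→∞} inf{ t²/(g_n(t)·log t) : t > 0, g_n(t) > ρn } = ∞ (infimum of the empty set being ∞), and such that for all integers m ≥ 0, n ≥ 1 and all t ≥ 0, P{‖S(m+1, m+n)‖ > t} ≤ A·exp{ −a t² / (n + g_n(t)) }. Then for every 0 < c < a there exists a constant C > 0 (depending only on A, a and {g_n}) such that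 for all n ≥ 1, m ≥ 0 and t ≥ 0, P{M(m+1, m+n) > t} ≤ C·exp{ −c t² / (n + g_n(t)) }, where here M(k,l) = max{‖S(k,k)‖, …, ‖S(k,l)‖}. -/
open MeasureTheory

set_option maxHeartbeats 2000000 in
/-- Banach-space valued version of the general maximal Bernstein-type
inequality: with `E` a Banach space, partial sums `S(m+1, m+n)` of the
`E`-valued random variables `X i` and the maximum
`M(m+1, m+n) = max_{1 ≤ j ≤ n} ‖S(m+1, m+j)‖`, a Bernstein-type bound
`P{‖S(m+1,m+n)‖ > t} ≤ A exp{-a t² / (n + g n t)}` implies, for every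
`0 < c < a`, a bound `P{M(m+1,m+n) > t} ≤ C exp{-c t² / (n + g n t)}`. -/
theorem maximal_bernstein_inequality_banach
    {Ω : Type*} [MeasurableSpace Ω] (P : Measure Ω) [IsProbabilityMeasure P]
    {E : Type*} [NormedAddCommGroup E] [NormedSpace ℝ E] [CompleteSpace E]
    (X : ℕ → Ω → E) (A a : ℝ) (g : ℕ → ℝ → ℝ)
    (hA : 0 < A) (ha : 0 < a)
    (hg_nonneg : ∀ n : ℕ, 1 ≤ n → ∀ t : ℝ, 0 < t → 0 ≤ g n t)
    (hg_mono : ∀ n : ℕ, 1 ≤ n → ∀ s t : ℝ, 0 < s → s ≤ t → g n s ≤ g n t)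
    (hg_incr : ∀ n : ℕ, 1 ≤ n → ∀ t : ℝ, 0 < t → g n t ≤ g (n + 1) t)
    (hg_lim : ∀ ρ : ℝ, 0 < ρ → ρ < 1 → ∀ K : ℝ, ∃ N : ℕ, ∀ n : ℕ, N ≤ n →
      ∀ t : ℝ, 0 < t → ρ * n < g n t → K ≤ t ^ 2 / (g n t * Real.log t))
    (hS : ∀ m n : ℕ, 1 ≤ n → ∀ t : ℝ, 0 ≤ t →
      (P {ω | t < ‖∑ i ∈ Finset.Icc (m + 1) (m + n), X i ω‖}).toReal ≤
        A * Real.exp (-(a * t ^ 2) / (n + g n t))) :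
    ∀ c : ℝ, 0 < c → c < a →
      ∃ C : ℝ, 0 < C ∧
        ∀ m n : ℕ, ∀ hn : 1 ≤ n, ∀ t : ℝ, 0 ≤ t →
          (P {ω | t < (Finset.Icc 1 n).sup' (Finset.nonempty_Icc.mpr hn)
              (fun j => ‖∑ i ∈ Finset.Icc (m + 1) (m + j), X i ω‖)}).toReal ≤
            C * Real.exp (-(c * t ^ 2) / (n + g n t)) := by
  intro c hc hca
  -- parameters
  set x := Real.sqrt (c / a) with hxdef
  have hr0 : 0 < c / a := div_pos hc ha
  have hr1 : c / a < 1 := (div_lt_one ha).mpr hca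
  have hx0 : 0 < x := Real.sqrt_pos.mpr hr0
  have hxsq : x ^ 2 = c / a := Real.sq_sqrt hr0.le
  have hx1 : x < 1 := by nlinarith [Real.sqrt_nonneg (c/a)]
  have hceq : c = a * x ^ 2 := by rw [hxsq, mul_div_assoc', mul_comm, mul_div_assoc, div_self ha.ne', mul_one]
  set β := (1 - x) / 2 with hβdef
  have hβ0 : 0 < β := by rw [hβdef]; linarith
  have hβh : β < 1/2 := by rw [hβdef]; linarith
  have hβsq : β ^ 2 < 1/4 := by nlinarith
  set ρ := β ^ 2 / 4 with hρdef
  have hρ0 : 0 < ρ := by positivity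
  have hρ1 : ρ < 1 := by rw [hρdef]; nlinarith
  set K₀ := 4 / ((a - c) * ρ) + 1 / ρ with hK₀def
  have hac : 0 < a - c := by linarith
  have hKρ : K₀ * ρ = 4 / (a - c) + 1 := by
    rw [hK₀def]; field_simp
  have hK1 : 4 ≤ (a - c) * (K₀ * ρ) := by
    rw [hKρ, mul_add, mul_one]
    have h4 : (a - c) * (4 / (a - c)) = 4 := by field_simp
    linarith
  have hK2 : 1 ≤ K₀ * ρ := by
    rw [hKρ]
    have : 0 < 4 / (a - c) := by positivity
    linarith
  have hK₀0 : 0 < K₀ := by positivity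
  obtain ⟨N₁, hN₁⟩ := hg_lim ρ hρ0 hρ1 K₀
  set N := max N₁ ⌈(8:ℝ)/β^2⌉₊ with hNdef
  set δ := min (min (c * β ^ 2 / 8) (a * (1 - x) / 4)) (c / 3) with hδdef
  have hδ0 : 0 < δ := by
    rw [hδdef, lt_min_iff, lt_min_iff]
    have h1 : 0 < 1 - x := by linarith
    refine ⟨⟨by positivity, by positivity⟩, by positivity⟩
  have hδ1 : δ ≤ c * β ^ 2 / 8 := (min_le_left _ _).trans (min_le_left _ _)
  have hδ2 : δ ≤ a * (1 - x) / 4 := (min_le_left _ _).trans (min_le_right _ _)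
  have hδ3 : δ ≤ c / 3 := min_le_right _ _
  set Q₀ := Real.log 3 / δ + Real.exp 2 with hQ₀def
  have hQ₀e : Real.exp 2 ≤ Q₀ := by
    have : 0 < Real.log 3 / δ := div_pos (Real.log_pos (by norm_num)) hδ0
    rw [hQ₀def]; linarith
  have hQ₀l : Real.log 3 / δ ≤ Q₀ := by
    rw [hQ₀def]; linarith [Real.exp_pos 2]
  have hQ₀log : Real.log 3 ≤ δ * Q₀ := by
    have h1 : δ * (Real.log 3 / δ) = Real.log 3 := by
      rw [mul_comm]; exact div_mul_cancel₀ _ hδ0.ne'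
    have h2 := mul_le_mul_of_nonneg_left hQ₀l hδ0.le
    rwa [h1] at h2
  have hQ₀0 : 0 < Q₀ := lt_of_lt_of_le (Real.exp_pos 2) hQ₀e
  set C := (N:ℝ) * A + A + Real.exp (c * Q₀) + 1 with hCdef
  have hNA0 : (0:ℝ) ≤ (N:ℝ) * A := by positivity
  have hexpQ₀0 := (Real.exp_pos (c * Q₀)).le
  have hC1 : 1 ≤ C := by rw [hCdef]; linarith
  have hC0 : 0 < C := lt_of_lt_of_le one_pos hC1
  have hCA : A ≤ C := by rw [hCdef]; linarith
  have hCNA : (N:ℝ) * A ≤ C := by rw [hCdef]; linarith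
  have hCexp : Real.exp (c * Q₀) ≤ C := by rw [hCdef]; linarith
  -- monotonicity of g in the index
  have hgidx : ∀ t : ℝ, 0 < t → ∀ j k : ℕ, 1 ≤ j → j ≤ k → g j t ≤ g k t := by
    intro t ht j k hj hjk
    induction hjk with
    | refl => exact le_refl _
    | step hk ih => exact ih.trans (hg_incr _ (hj.trans hk) t ht)
  -- neg-div monotonicity helper
  have hdivmono : ∀ Y d₁ d₂ : ℝ, 0 ≤ Y → 0 < d₁ → d₁ ≤ d₂ → -Y/d₁ ≤ -Y/d₂ := by
    intro Y d₁ d₂ hY hd₁ hd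
    have h1 : Y / d₂ ≤ Y / d₁ := div_le_div_of_nonneg_left hY hd₁ hd
    rw [neg_div, neg_div]
    exact neg_le_neg h1
  -- trivial probability bound
  have hP1 : ∀ s : Set Ω, (P s).toReal ≤ 1 := fun s =>
    ENNReal.toReal_le_of_le_ofReal one_pos.le (by simpa using prob_le_one)
  -- union bound
  have hUB : ∀ m n : ℕ, ∀ hn : 1 ≤ n, ∀ t : ℝ, 0 < t →
      (P {ω | t < (Finset.Icc 1 n).sup' (Finset.nonempty_Icc.mpr hn)
          (fun j => ‖∑ i ∈ Finset.Icc (m + 1) (m + j), X i ω‖)}).toReal ≤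
        (n:ℝ) * A * Real.exp (-(a * t ^ 2) / (n + g n t)) := by
    intro m n hn t ht
    have hsub : {ω | t < (Finset.Icc 1 n).sup' (Finset.nonempty_Icc.mpr hn)
          (fun j => ‖∑ i ∈ Finset.Icc (m + 1) (m + j), X i ω‖)} ⊆
        ⋃ j ∈ Finset.Icc 1 n, {ω | t < ‖∑ i ∈ Finset.Icc (m + 1) (m + j), X i ω‖} := by
      intro ω hω
      simp only [Set.mem_setOf_eq, Finset.lt_sup'_iff] at hω
      obtain ⟨j, hj, hjt⟩ := hω
      exact Set.mem_biUnion hj hjt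
    calc (P _).toReal
        ≤ ((∑ j ∈ Finset.Icc 1 n, P {ω | t < ‖∑ i ∈ Finset.Icc (m + 1) (m + j), X i ω‖})).toReal := by
          refine ENNReal.toReal_mono (ENNReal.sum_ne_top.mpr fun _ _ => measure_ne_top _ _) ?_
          exact (measure_mono hsub).trans (measure_biUnion_finset_le _ _)
      _ = ∑ j ∈ Finset.Icc 1 n, (P {ω | t < ‖∑ i ∈ Finset.Icc (m + 1) (m + j), X i ω‖}).toReal :=
          ENNReal.toReal_sum (fun _ _ => measure_ne_top _ _)
      _ ≤ ∑ _j ∈ Finset.Icc 1 n, A * Real.exp (-(a * t ^ 2) / (n + g n t)) := by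
          refine Finset.sum_le_sum fun j hj => ?_
          obtain ⟨hj1, hjn⟩ := Finset.mem_Icc.mp hj
          refine (hS m j hj1 t ht.le).trans ?_
          refine mul_le_mul_of_nonneg_left (Real.exp_le_exp.mpr ?_) hA.le
          have hgj : 0 ≤ g j t := hg_nonneg j hj1 t ht
          have hd1 : (0:ℝ) < j + g j t := by
            have : (1:ℝ) ≤ j := by exact_mod_cast hj1
            linarith
          have hd : (j:ℝ) + g j t ≤ n + g n t := by
            have h1 := hgidx t ht j n hj1 hjn
            have h2 : (j:ℝ) ≤ n := by exact_mod_cast hjn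
            linarith
          exact hdivmono (a * t ^ 2) _ _ (by positivity) hd1 hd
      _ = (n:ℝ) * A * Real.exp (-(a * t ^ 2) / (n + g n t)) := by
          rw [Finset.sum_const, Nat.card_Icc, Nat.add_sub_cancel, nsmul_eq_mul, mul_assoc]
  -- main claim by strong induction
  have key : ∀ n m : ℕ, ∀ hn : 1 ≤ n, ∀ t : ℝ, 0 ≤ t →
      (P {ω | t < (Finset.Icc 1 n).sup' (Finset.nonempty_Icc.mpr hn)
          (fun j => ‖∑ i ∈ Finset.Icc (m + 1) (m + j), X i ω‖)}).toReal ≤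
        C * Real.exp (-(c * t ^ 2) / (n + g n t)) := by
    intro n
    induction n using Nat.strong_induction_on with
    | _ n IH =>
    intro m hn t ht0
    rcases eq_or_lt_of_le ht0 with h0 | ht
    · -- t = 0
      have he : Real.exp (-(c * t ^ 2) / (↑n + g n t)) = 1 := by
        rw [← h0]; norm_num
      rw [he, mul_one]
      exact (hP1 _).trans hC1
    -- 0 < t
    have hn1 : (1:ℝ) ≤ n := by exact_mod_cast hn
    have hG0 : 0 ≤ g n t := hg_nonneg n hn t ht
    have hD0 : (0:ℝ) < ↑n + g n t := by linarith
    set Q := t ^ 2 / (↑n + g n t) with hQdef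
    have hQ0 : 0 < Q := div_pos (by positivity) hD0
    have hexpc : -(c * t ^ 2) / (↑n + g n t) = -(c * Q) := by
      rw [hQdef, neg_div, mul_div_assoc]
    have hexpa : -(a * t ^ 2) / (↑n + g n t) = -(a * Q) := by
      rw [hQdef, neg_div, mul_div_assoc]
    by_cases hQQ : Q ≤ Q₀
    · -- trivial bound
      rw [hexpc]
      have h2 : Real.exp (c * Q) ≤ C :=
        le_trans (Real.exp_le_exp.mpr (mul_le_mul_of_nonneg_left hQQ hc.le)) hCexp
      have h3 : (1:ℝ) ≤ C * Real.exp (-(c * Q)) := by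
        have hmul : Real.exp (c * Q) * Real.exp (-(c * Q)) = 1 := by
          rw [← Real.exp_add]; simp
        have h4 := mul_le_mul_of_nonneg_right h2 (Real.exp_pos (-(c * Q))).le
        rw [hmul] at h4
        exact h4
      exact (hP1 _).trans h3
    push_neg at hQQ
    by_cases hnN : n < N
    · -- small n : union bound
      rw [hexpc]
      refine (hUB m n hn t ht).trans ?_
      rw [hexpa]
      have e1 : Real.exp (-(a * Q)) ≤ Real.exp (-(c * Q)) := by
        refine Real.exp_le_exp.mpr ?_
        linarith only [mul_le_mul_of_nonneg_right hca.le hQ0.le]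
      have e2 : (n:ℝ) * A ≤ C := by
        refine le_trans ?_ hCNA
        have h5 : (n:ℝ) ≤ N := by exact_mod_cast hnN.le
        exact mul_le_mul_of_nonneg_right h5 hA.le
      exact mul_le_mul e2 e1 (Real.exp_pos _).le hC0.le
    push_neg at hnN
    have hnN1 : N₁ ≤ n := le_trans (le_max_left _ _) hnN
    have hn8 : (8:ℝ) / β ^ 2 ≤ n := by
      have h1 : ⌈(8:ℝ)/β^2⌉₊ ≤ n := le_trans (le_max_right _ _) hnN
      exact (Nat.ceil_le.mp h1)
    have hβn : 8 ≤ β ^ 2 * n := by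
      rw [div_le_iff₀ (by positivity)] at hn8
      linarith
    by_cases hcase : g n t ≤ ρ * n
    swap
    · -- Case B : g n t > ρ n, union bound with hg_lim
      push_neg at hcase
      have hKle := hN₁ n hnN1 t ht hcase
      have hGpos : 0 < g n t := lt_of_le_of_lt (by positivity) hcase
      have hte : Real.exp 1 ≤ t := by
        have h0 : Q₀ * (↑n + g n t) < t ^ 2 := by
          rw [hQdef] at hQQ
          exact (lt_div_iff₀ hD0).mp hQQ
        have h1 : Real.exp 2 * 1 ≤ Q₀ * (↑n + g n t) := by
          have := mul_le_mul hQ₀e (by linarith : (1:ℝ) ≤ ↑n + g n t) one_pos.le hQ₀0.le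
          linarith
        have h2 : Real.exp 2 = Real.exp 1 * Real.exp 1 := by
          rw [← Real.exp_add]; norm_num
        nlinarith only [h0, h1, h2, Real.exp_pos 1, ht]
      have hlogt : 1 ≤ Real.log t := (Real.le_log_iff_exp_le ht).mpr hte
      have hlogt0 : (0:ℝ) ≤ Real.log t := by linarith
      have hglog : 0 < g n t * Real.log t := mul_pos hGpos (by linarith)
      have ht2 : K₀ * (g n t * Real.log t) ≤ t ^ 2 := (le_div_iff₀ hglog).mp hKle
      have hnt2 : (n:ℝ) ≤ t ^ 2 := by
        have hn0 : (0:ℝ) ≤ n := by positivity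
        have h_a : K₀ * Real.log t * (ρ * n) ≤ K₀ * Real.log t * (g n t) :=
          mul_le_mul_of_nonneg_left hcase.le (by positivity)
        have h_b : (n:ℝ) * Real.log t * 1 ≤ (n:ℝ) * Real.log t * (K₀ * ρ) :=
          mul_le_mul_of_nonneg_left hK2 (by positivity)
        have h_c : (n:ℝ) * 1 ≤ (n:ℝ) * Real.log t := mul_le_mul_of_nonneg_left hlogt hn0
        nlinarith only [ht2, h_a, h_b, h_c]
      have hlogn : Real.log n ≤ 2 * Real.log t := by
        have h1 : Real.log n ≤ Real.log (t ^ 2) := Real.log_le_log (by positivity) hnt2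
        rwa [Real.log_pow, Nat.cast_ofNat] at h1
      have hQlb : 2 * Real.log t ≤ (a - c) * Q := by
        have hn_le : ρ * (↑n + g n t) ≤ 2 * g n t := by
          have h1 : ρ * g n t ≤ g n t := by nlinarith only [hρ1, hGpos, hρ0]
          have h2 : ρ * n ≤ g n t := hcase.le
          linarith only [h1, h2]
        have step2 : 2 * Real.log t * (ρ * (↑n + g n t)) ≤ 2 * Real.log t * (2 * g n t) :=
          mul_le_mul_of_nonneg_left hn_le (by positivity)
        have step3 : 4 * (g n t * Real.log t) ≤ (a - c) * (K₀ * ρ) * (g n t * Real.log t) :=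
          mul_le_mul_of_nonneg_right hK1 hglog.le
        have step4 : (a - c) * ρ * (K₀ * (g n t * Real.log t)) ≤ (a - c) * ρ * t ^ 2 :=
          mul_le_mul_of_nonneg_left ht2 (by positivity)
        have hfinal : ρ * (2 * Real.log t * (↑n + g n t)) ≤ ρ * ((a - c) * t ^ 2) := by
          nlinarith only [step2, step3, step4]
        have h5 : 2 * Real.log t * (↑n + g n t) ≤ (a - c) * t ^ 2 :=
          le_of_mul_le_mul_left (by linarith) hρ0
        rw [hQdef, mul_div_assoc', le_div_iff₀ hD0]
        linarith
      have h7 : (n:ℝ) ≤ Real.exp ((a - c) * Q) := by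
        rw [← Real.exp_log (by positivity : (0:ℝ) < (n:ℝ))]
        exact Real.exp_le_exp.mpr (hlogn.trans hQlb)
      rw [hexpc]
      refine (hUB m n hn t ht).trans ?_
      rw [hexpa]
      have hee : Real.exp ((a - c) * Q) * Real.exp (-(a * Q)) = Real.exp (-(c * Q)) := by
        rw [← Real.exp_add]; congr 1; ring
      calc (n:ℝ) * A * Real.exp (-(a * Q))
          ≤ Real.exp ((a - c) * Q) * A * Real.exp (-(a * Q)) := by
            exact mul_le_mul_of_nonneg_right (mul_le_mul_of_nonneg_right h7 hA.le) (Real.exp_pos _).le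
        _ = A * (Real.exp ((a - c) * Q) * Real.exp (-(a * Q))) := by ring
        _ = A * Real.exp (-(c * Q)) := by rw [hee]
        _ ≤ C * Real.exp (-(c * Q)) := mul_le_mul_of_nonneg_right hCA (Real.exp_pos _).le
    -- Case A : g n t ≤ ρ n, bisection
    have hcase2 : g n t ≤ β ^ 2 / 4 * n := by rw [hρdef] at hcase; exact hcase
    set k := ⌈(1 - β ^ 2 / 2) * (n:ℝ)⌉₊ with hkdef
    have hn0' : (0:ℝ) ≤ n := by positivity
    have hθn0 : (0:ℝ) ≤ (1 - β ^ 2 / 2) * (n:ℝ) :=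
      mul_nonneg (by linarith only [hβsq]) hn0'
    have hkge : (1 - β ^ 2 / 2) * (n:ℝ) ≤ k := Nat.le_ceil _
    have hkle : (k:ℝ) ≤ (1 - β ^ 2 / 2) * n + 1 := (Nat.ceil_lt_add_one hθn0).le
    have hβ2n : β ^ 2 * n ≤ n / 4 := by
      have h1 := mul_le_mul_of_nonneg_right hβsq.le hn0'
      linarith only [h1]
    have hn32 : (32:ℝ) ≤ n := by linarith
    have hk1 : 1 ≤ k := by
      have h1 : (1:ℝ) ≤ (k:ℝ) := by linarith only [hkge, hβ2n, hn32]
      exact_mod_cast h1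
    have hkn : k < n := by
      have h1 : (k:ℝ) < n := by linarith only [hkle, hβn]
      exact_mod_cast h1
    have hnk1 : 1 ≤ n - k := by omega
    have hnkc : ((n - k : ℕ):ℝ) = (n:ℝ) - k := by
      rw [Nat.cast_sub hkn.le]
    have hnklt : n - k < n := by omega
    have hgk : 0 ≤ g k t := hg_nonneg k hk1 t ht
    have hgkn : g k t ≤ g n t := hgidx t ht k n hk1 hkn.le
    have hμgn : (0:ℝ) ≤ (1 - β ^ 2 / 8) * g n t :=
      mul_nonneg (by linarith only [hβsq]) hG0
    have hd1 : (k:ℝ) + g k t ≤ (1 - β ^ 2 / 8) * (↑n + g n t) := by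
      linarith only [hkle, hgkn, hcase2, hβn, hμgn]
    have hd1pos : (0:ℝ) < (k:ℝ) + g k t := by
      have h1 : (1:ℝ) ≤ (k:ℝ) := by exact_mod_cast hk1
      linarith
    have hμ0 : (0:ℝ) < 1 - β ^ 2 / 8 := by linarith only [hβsq]
    have hμD : (0:ℝ) < (1 - β ^ 2 / 8) * (↑n + g n t) := by positivity
    have hbt : (0:ℝ) < β * t := by positivity
    have h1βt : (0:ℝ) < (1 - β) * t := mul_pos (by linarith only [hβh]) ht
    -- bounds from IH and hS
    have T1 := IH k hkn m hk1 t ht0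
    have T2 := hS m k hk1 ((1 - β) * t) h1βt.le
    have T3 := IH (n - k) hnklt (m + k) hnk1 (β * t) hbt.le
    -- exponential comparisons
    have e1 : Real.exp (-(c * t ^ 2) / ((k:ℝ) + g k t)) ≤ Real.exp (-((c + δ) * Q)) := by
      refine Real.exp_le_exp.mpr ?_
      refine le_trans (hdivmono _ _ _ (by positivity) hd1pos hd1) ?_
      have s2 : -(c * t ^ 2) / ((1 - β ^ 2 / 8) * (↑n + g n t)) = -(c / (1 - β ^ 2 / 8) * Q) := by
        rw [hQdef]; field_simp
      rw [s2]
      have s3 : c + δ ≤ c / (1 - β ^ 2 / 8) := by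
        rw [le_div_iff₀ hμ0]
        have h1 : 0 ≤ δ * (β ^ 2 / 8) := by positivity
        linarith only [hδ1, h1]
      exact neg_le_neg (mul_le_mul_of_nonneg_right s3 hQ0.le)
    have e2 : Real.exp (-(a * ((1 - β) * t) ^ 2) / ((k:ℝ) + g k ((1 - β) * t))) ≤
        Real.exp (-((c + δ) * Q)) := by
      refine Real.exp_le_exp.mpr ?_
      have hgk2 : g k ((1 - β) * t) ≤ g k t := hg_mono k hk1 _ t h1βt (by linarith only [hbt])
      have hgk2' : 0 ≤ g k ((1 - β) * t) := hg_nonneg k hk1 _ h1βt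
      have hd2pos : (0:ℝ) < (k:ℝ) + g k ((1 - β) * t) := by
        have h1 : (1:ℝ) ≤ (k:ℝ) := by exact_mod_cast hk1
        linarith
      have hd2 : (k:ℝ) + g k ((1 - β) * t) ≤ (1 - β ^ 2 / 8) * (↑n + g n t) := by linarith
      refine le_trans (hdivmono _ _ _ (by positivity) hd2pos hd2) ?_
      have s2 : -(a * ((1 - β) * t) ^ 2) / ((1 - β ^ 2 / 8) * (↑n + g n t)) =
          -(a * (1 - β) ^ 2 / (1 - β ^ 2 / 8) * Q) := by
        rw [hQdef]; field_simp
      rw [s2]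
      have s4 : c + a * (1 - x) / 4 ≤ a * (1 - β) ^ 2 := by
        have hax : 0 ≤ a * x * (1 - x) := by
          have : 0 ≤ 1 - x := by linarith
          positivity
        rw [hβdef, hceq]; linarith only [hax]
      have s5 : c + δ ≤ a * (1 - β) ^ 2 := by linarith
      have s6 : a * (1 - β) ^ 2 ≤ a * (1 - β) ^ 2 / (1 - β ^ 2 / 8) := by
        rw [le_div_iff₀ hμ0]
        have h2 : 0 ≤ a * (1 - β) ^ 2 * (β ^ 2 / 8) := by positivity
        linarith only [h2]
      exact neg_le_neg (mul_le_mul_of_nonneg_right (s5.trans s6) hQ0.le)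
    have e3 : Real.exp (-(c * (β * t) ^ 2) / (((n - k : ℕ):ℝ) + g (n - k) (β * t))) ≤
        Real.exp (-((c + δ) * Q)) := by
      refine Real.exp_le_exp.mpr ?_
      have hg3 : g (n - k) (β * t) ≤ g n t := by
        refine le_trans (hgidx (β * t) hbt (n - k) n hnk1 (by omega)) ?_
        exact hg_mono n hn _ t hbt (by linarith only [h1βt])
      have hg3' : 0 ≤ g (n - k) (β * t) := hg_nonneg _ hnk1 _ hbt
      have hν0 : (0:ℝ) < 3 * β ^ 2 / 4 := by positivity
      have hd3pos : (0:ℝ) < ((n - k : ℕ):ℝ) + g (n - k) (β * t) := by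
        have h1 : (1:ℝ) ≤ ((n - k : ℕ):ℝ) := by exact_mod_cast hnk1
        linarith
      have hd3 : ((n - k : ℕ):ℝ) + g (n - k) (β * t) ≤ 3 * β ^ 2 / 4 * (↑n + g n t) := by
        rw [hnkc]
        have h1 : 0 ≤ 3 * β ^ 2 / 4 * g n t := by positivity
        linarith only [hkge, hg3, hcase2, h1]
      refine le_trans (hdivmono _ _ _ (by positivity) hd3pos hd3) ?_
      have s2 : -(c * (β * t) ^ 2) / (3 * β ^ 2 / 4 * (↑n + g n t)) = -(4 * c / 3 * Q) := by
        rw [hQdef]; field_simp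
      rw [s2]
      have s3 : c + δ ≤ 4 * c / 3 := by linarith
      exact neg_le_neg (mul_le_mul_of_nonneg_right s3 hQ0.le)
    -- set inclusion and subadditivity
    have htri : (P {ω | t < (Finset.Icc 1 n).sup' (Finset.nonempty_Icc.mpr hn)
          (fun j => ‖∑ i ∈ Finset.Icc (m + 1) (m + j), X i ω‖)}).toReal ≤
        (P {ω | t < (Finset.Icc 1 k).sup' (Finset.nonempty_Icc.mpr hk1)
          (fun j => ‖∑ i ∈ Finset.Icc (m + 1) (m + j), X i ω‖)}).toReal +
        (P {ω | (1 - β) * t < ‖∑ i ∈ Finset.Icc (m + 1) (m + k), X i ω‖}).toReal +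
        (P {ω | β * t < (Finset.Icc 1 (n - k)).sup' (Finset.nonempty_Icc.mpr hnk1)
          (fun j => ‖∑ i ∈ Finset.Icc (m + k + 1) (m + k + j), X i ω‖)}).toReal := by
      have hsub : {ω | t < (Finset.Icc 1 n).sup' (Finset.nonempty_Icc.mpr hn)
          (fun j => ‖∑ i ∈ Finset.Icc (m + 1) (m + j), X i ω‖)} ⊆
        ({ω | t < (Finset.Icc 1 k).sup' (Finset.nonempty_Icc.mpr hk1)
          (fun j => ‖∑ i ∈ Finset.Icc (m + 1) (m + j), X i ω‖)} ∪
        {ω | (1 - β) * t < ‖∑ i ∈ Finset.Icc (m + 1) (m + k), X i ω‖}) ∪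
        {ω | β * t < (Finset.Icc 1 (n - k)).sup' (Finset.nonempty_Icc.mpr hnk1)
          (fun j => ‖∑ i ∈ Finset.Icc (m + k + 1) (m + k + j), X i ω‖)} := by
        intro ω hω
        simp only [Set.mem_setOf_eq, Finset.lt_sup'_iff] at hω
        obtain ⟨j, hj, hjt⟩ := hω
        obtain ⟨hj1, hjn⟩ := Finset.mem_Icc.mp hj
        by_cases hjk : j ≤ k
        · refine Or.inl (Or.inl ?_)
          simp only [Set.mem_setOf_eq, Finset.lt_sup'_iff]
          exact ⟨j, Finset.mem_Icc.mpr ⟨hj1, hjk⟩, hjt⟩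
        · push_neg at hjk
          have hsum : (∑ i ∈ Finset.Icc (m + 1) (m + j), X i ω) =
              (∑ i ∈ Finset.Icc (m + 1) (m + k), X i ω) +
              ∑ i ∈ Finset.Icc (m + k + 1) (m + j), X i ω := by
            rw [Finset.Icc_add_one_left_eq_Ioc, Finset.Icc_add_one_left_eq_Ioc, Finset.Icc_add_one_left_eq_Ioc]
            exact (Finset.sum_Ioc_consecutive _ (by omega) (by omega)).symm
          have h2 : ‖∑ i ∈ Finset.Icc (m + 1) (m + j), X i ω‖ ≤
              ‖∑ i ∈ Finset.Icc (m + 1) (m + k), X i ω‖ +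
              ‖∑ i ∈ Finset.Icc (m + k + 1) (m + j), X i ω‖ := by
            rw [hsum]; exact norm_add_le _ _
          have h3 : ‖∑ i ∈ Finset.Icc (m + k + 1) (m + k + (j - k)), X i ω‖ ≤
              (Finset.Icc 1 (n - k)).sup' (Finset.nonempty_Icc.mpr hnk1)
                (fun j' => ‖∑ i ∈ Finset.Icc (m + k + 1) (m + k + j'), X i ω‖) :=
            Finset.le_sup' (fun j' => ‖∑ i ∈ Finset.Icc (m + k + 1) (m + k + j'), X i ω‖)
              (Finset.mem_Icc.mpr ⟨by omega, by omega⟩)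
          rw [show m + k + (j - k) = m + j by omega] at h3
          rcases le_or_gt ‖∑ i ∈ Finset.Icc (m + 1) (m + k), X i ω‖ ((1 - β) * t) with h4 | h4
          · refine Or.inr ?_
            simp only [Set.mem_setOf_eq]
            linarith
          · exact Or.inl (Or.inr h4)
      have hm : P {ω | t < (Finset.Icc 1 n).sup' (Finset.nonempty_Icc.mpr hn)
            (fun j => ‖∑ i ∈ Finset.Icc (m + 1) (m + j), X i ω‖)} ≤
          P {ω | t < (Finset.Icc 1 k).sup' (Finset.nonempty_Icc.mpr hk1)
            (fun j => ‖∑ i ∈ Finset.Icc (m + 1) (m + j), X i ω‖)} +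
          P {ω | (1 - β) * t < ‖∑ i ∈ Finset.Icc (m + 1) (m + k), X i ω‖} +
          P {ω | β * t < (Finset.Icc 1 (n - k)).sup' (Finset.nonempty_Icc.mpr hnk1)
            (fun j => ‖∑ i ∈ Finset.Icc (m + k + 1) (m + k + j), X i ω‖)} :=
        (measure_mono hsub).trans ((measure_union_le _ _).trans
          (add_le_add_left (measure_union_le _ _) _))
      calc (P _).toReal ≤ (P _ + P _ + P _).toReal := ENNReal.toReal_mono (by finiteness) hm
        _ = _ := by
          rw [ENNReal.toReal_add (by finiteness) (by finiteness),
            ENNReal.toReal_add (by finiteness) (by finiteness)]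
    -- combine
    have h9 : Real.exp (-(δ * Q)) ≤ 1 / 3 := by
      have h10 : (3:ℝ) ≤ Real.exp (δ * Q) := by
        rw [show (3:ℝ) = Real.exp (Real.log 3) from (Real.exp_log (by norm_num)).symm]
        refine Real.exp_le_exp.mpr (hQ₀log.trans ?_)
        exact mul_le_mul_of_nonneg_left hQQ.le hδ0.le
      rw [Real.exp_neg]
      rw [inv_le_comm₀ (Real.exp_pos _) (by norm_num)]
      simpa using h10
    have h11 : Real.exp (-((c + δ) * Q)) = Real.exp (-(c * Q)) * Real.exp (-(δ * Q)) := by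
      rw [← Real.exp_add]; congr 1; ring
    have hfin : C * Real.exp (-((c + δ) * Q)) + A * Real.exp (-((c + δ) * Q)) +
        C * Real.exp (-((c + δ) * Q)) ≤ C * Real.exp (-(c * Q)) := by
      rw [h11]
      have hE1 := (Real.exp_pos (-(c * Q))).le
      have hE2 := (Real.exp_pos (-(δ * Q))).le
      have h13 : A * (Real.exp (-(c * Q)) * Real.exp (-(δ * Q))) ≤
          C * (Real.exp (-(c * Q)) * Real.exp (-(δ * Q))) :=
        mul_le_mul_of_nonneg_right hCA (by positivity)
      have h14 : C * Real.exp (-(c * Q)) * (3 * Real.exp (-(δ * Q))) ≤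
          C * Real.exp (-(c * Q)) * 1 :=
        mul_le_mul_of_nonneg_left (by linarith) (by positivity)
      linarith only [h13, h14]
    rw [hexpc]
    refine htri.trans ?_
    refine le_trans ?_ hfin
    refine add_le_add (add_le_add ?_ ?_) ?_
    · exact T1.trans (mul_le_mul_of_nonneg_left e1 hC0.le)
    · exact T2.trans (mul_le_mul_of_nonneg_left e2 hA.le)
    · exact T3.trans (mul_le_mul_of_nonneg_left e3 hC0.le)
  exact ⟨C, hC0, fun m n hn t ht => key n m hn t ht⟩
end

section
/- Let X₁, X₂, … be a sequence of real-valued random variables and suppose there exist constants D > 0, v > 0 and M > 0 such that for all integers m ≥ 0, n ≥ 1 and all t ≥ 0, P{|S(m+1, m+n)| ≥ t} ≤ D·exp( −D t² / (n v² + M² + t M (log n)²) ). Then for any 0 < c < 1 there exists a constant C ≥ D (depending on c, D/v² and the functions g_n(t) = M²/v² + (tM/v²)(log n)²) such that for all n ≥ 1 and t > 0, P{ max_{1 ≤ m ≤ n} |S(1,m)| ≥ t } ≤ C·exp( −c D t² / (n v² + M² + t M (log n)²) ). -/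
set_option maxHeartbeats 4000000
open MeasureTheory Finset Filter

private def njseq (b n : ℕ) : ℕ → ℕ
  | 0 => n
  | (j+1) => njseq b n j / b + 1

private lemma njseq_pos (b n : ℕ) (hn : 1 ≤ n) : ∀ j, 1 ≤ njseq b n j
  | 0 => hn
  | (j+1) => Nat.le_add_left 1 _

private lemma njseq_le (b n : ℕ) (hb : 2 ≤ b) (hn : 1 ≤ n) : ∀ j, njseq b n j ≤ n
  | 0 => le_refl n
  | (j+1) => by
      have h1 := njseq_pos b n hn j
      have h2 := njseq_le b n hb hn j
      have h3 : njseq b n j / b ≤ njseq b n j / 2 := Nat.div_le_div_left hb (by norm_num)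
      have : njseq b n (j+1) = njseq b n j / b + 1 := rfl
      omega

private lemma njseq_real (b n : ℕ) (hb : 2 ≤ b) :
    ∀ j, (njseq b n j : ℝ) ≤ (n : ℝ) * ((b : ℝ)⁻¹) ^ j + 2
  | 0 => by simp [njseq]
  | (j+1) => by
      have hb0 : (0:ℝ) < b := by positivity
      have ih := njseq_real b n hb j
      have h1 : ((njseq b n (j+1) : ℕ) : ℝ) = ((njseq b n j / b : ℕ) : ℝ) + 1 := by
        show ((njseq b n j / b + 1 : ℕ) : ℝ) = _
        push_cast; ring
      have h2 : ((njseq b n j / b : ℕ) : ℝ) ≤ (njseq b n j : ℝ) / b := Nat.cast_div_le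
      have h3 : (njseq b n j : ℝ) / b ≤ ((n : ℝ) * ((b : ℝ)⁻¹) ^ j + 2) / b := by
        gcongr
      have h4 : ((n : ℝ) * ((b : ℝ)⁻¹) ^ j + 2) / b
          = (n : ℝ) * ((b : ℝ)⁻¹) ^ (j+1) + 2 / b := by
        ring
      have h5 : (2:ℝ) / b ≤ 1 := by
        rw [div_le_one hb0]; exact_mod_cast hb
      calc ((njseq b n (j+1) : ℕ) : ℝ) = ((njseq b n j / b : ℕ) : ℝ) + 1 := h1
        _ ≤ (n : ℝ) * ((b : ℝ)⁻¹) ^ (j+1) + 2 / b + 1 := by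
            have := h2.trans (h3.trans_eq h4); linarith
        _ ≤ (n : ℝ) * ((b : ℝ)⁻¹) ^ (j+1) + 2 := by linarith

private lemma njseq_pow_le (b n : ℕ) (hb : 4 ≤ b) (hn : 1 ≤ n) :
    ∀ j, 2 ≤ njseq b n j → (b : ℝ) ^ j ≤ 2 * n
  | 0, _ => by
      have : (1:ℝ) ≤ (n:ℝ) := by exact_mod_cast hn
      simpa using by linarith
  | (j+1), h => by
      have hb2 : 2 ≤ b := by omega
      have hb0 : (0:ℝ) < b := by positivity
      have hbig : b ≤ njseq b n j := by
        have : 1 ≤ njseq b n j / b := by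
          have : njseq b n (j+1) = njseq b n j / b + 1 := rfl
          omega
        exact (Nat.one_le_div_iff (by omega)).mp this
      have hreal : (b : ℝ) ≤ (n : ℝ) * ((b : ℝ)⁻¹) ^ j + 2 :=
        le_trans (by exact_mod_cast hbig) (njseq_real b n hb2 j)
      have hpowpos : (0:ℝ) < (b:ℝ) ^ j := by positivity
      have hb4 : (4:ℝ) ≤ (b:ℝ) := by exact_mod_cast hb
      have hinv : ((b : ℝ)⁻¹) ^ j = ((b:ℝ) ^ j)⁻¹ := by
        rw [inv_pow]
      have key : ((b:ℝ) - 2) * (b:ℝ)^j ≤ n := by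
        rw [hinv] at hreal
        have := mul_le_mul_of_nonneg_right hreal (le_of_lt hpowpos)
        calc ((b:ℝ) - 2) * (b:ℝ)^j = ((b:ℝ) - 2) * (b:ℝ)^j := rfl
          _ ≤ ((n : ℝ) * ((b:ℝ)^j)⁻¹) * (b:ℝ)^j := by nlinarith
          _ = n := by field_simp
      calc (b:ℝ) ^ (j+1) = (b:ℝ) * (b:ℝ)^j := by ring
        _ ≤ 2 * (((b:ℝ) - 2) * (b:ℝ)^j) := by nlinarith
        _ ≤ 2 * n := by nlinarith


section Helpers
variable {Ω : Type*} [MeasurableSpace Ω] (P : Measure Ω) [IsProbabilityMeasure P]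

private lemma meas_toReal_mono {A B : Set Ω} (h : A ⊆ B) : (P A).toReal ≤ (P B).toReal :=
  ENNReal.toReal_mono (measure_ne_top P B) (measure_mono h)

private lemma meas_toReal_le_one (A : Set Ω) : (P A).toReal ≤ 1 := by
  have h1 : P A ≤ 1 := prob_le_one
  have := ENNReal.toReal_mono (by simp) h1
  simpa using this

private lemma meas_biUnion_toReal_le {ι : Type*} (s : Finset ι) (f : ι → Set Ω) (g : ι → ℝ)
    (h : ∀ i ∈ s, (P (f i)).toReal ≤ g i) :
    (P (⋃ i ∈ s, f i)).toReal ≤ ∑ i ∈ s, g i := by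
  have h1 : P (⋃ i ∈ s, f i) ≤ ∑ i ∈ s, P (f i) := measure_biUnion_finset_le s f
  have h2 : (∑ i ∈ s, P (f i)) ≠ ⊤ := by
    refine (ENNReal.sum_lt_top.mpr ?_).ne
    exact fun i _ => (measure_ne_top P _).lt_top
  calc (P (⋃ i ∈ s, f i)).toReal ≤ (∑ i ∈ s, P (f i)).toReal := ENNReal.toReal_mono h2 h1
    _ = ∑ i ∈ s, (P (f i)).toReal := ENNReal.toReal_sum (fun i _ => measure_ne_top P _)
    _ ≤ ∑ i ∈ s, g i := Finset.sum_le_sum h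

private lemma meas_union_toReal_le {A B : Set Ω} {x y : ℝ}
    (hx : (P A).toReal ≤ x) (hy : (P B).toReal ≤ y) : (P (A ∪ B)).toReal ≤ x + y := by
  have h1 : P (A ∪ B) ≤ P A + P B := measure_union_le A B
  have h2 : P A + P B ≠ ⊤ := by
    simp [measure_ne_top]
  calc (P (A ∪ B)).toReal ≤ (P A + P B).toReal := ENNReal.toReal_mono h2 h1
    _ = (P A).toReal + (P B).toReal := ENNReal.toReal_add (measure_ne_top P _) (measure_ne_top P _)
    _ ≤ x + y := add_le_add hx hy

end Helpers


private lemma sqrt_add_le' (a b : ℝ) (ha : 0 ≤ a) (hb : 0 ≤ b) :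
    Real.sqrt (a + b) ≤ Real.sqrt a + Real.sqrt b := by
  have h1 : a + b ≤ (Real.sqrt a + Real.sqrt b)^2 := by
    have ha' := Real.sq_sqrt ha
    have hb' := Real.sq_sqrt hb
    have := mul_nonneg (Real.sqrt_nonneg a) (Real.sqrt_nonneg b)
    nlinarith
  calc Real.sqrt (a + b) ≤ Real.sqrt ((Real.sqrt a + Real.sqrt b)^2) := Real.sqrt_le_sqrt h1
    _ = Real.sqrt a + Real.sqrt b := Real.sqrt_sq (by positivity)

private lemma sqrt_succ_le_pow (i : ℕ) : Real.sqrt (i + 1) ≤ (Real.sqrt 2)^i := by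
  have h1 : ((i:ℝ) + 1) ≤ 2^i := by
    have := Nat.lt_two_pow_self (n := i)
    have : (i:ℝ) + 1 ≤ ((2^i : ℕ) : ℝ) := by exact_mod_cast this
    simpa using this
  calc Real.sqrt (i+1) ≤ Real.sqrt (2^i) := Real.sqrt_le_sqrt h1
    _ = (Real.sqrt 2)^i := by
        rw [← Real.sqrt_sq (by positivity : (0:ℝ) ≤ (Real.sqrt 2)^i)]
        congr 1
        rw [← pow_mul, mul_comm i 2, pow_mul, Real.sq_sqrt (by norm_num : (0:ℝ) ≤ 2)]

private lemma eventually_pow_log_lt (A : ℝ) (p : ℕ) :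
    ∀ᶠ (n:ℕ) in atTop, A * (Real.log n)^p < n := by
  have h := Real.tendsto_pow_log_div_mul_add_atTop 1 0 p one_ne_zero
  have hcast : Tendsto (fun n : ℕ => (n:ℝ)) atTop atTop := tendsto_natCast_atTop_atTop
  have h2 : Tendsto (fun n : ℕ => (Real.log n)^p / (1 * (n:ℝ) + 0)) atTop (nhds 0) :=
    h.comp hcast
  have hδ : (0:ℝ) < 1/(|A|+1) := by positivity
  have h3 := h2.eventually_lt_const hδ
  filter_upwards [h3, Filter.eventually_ge_atTop 1] with n hn hn1
  have hnR : (1:ℝ) ≤ (n:ℝ) := by exact_mod_cast hn1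
  have hlog : (0:ℝ) ≤ Real.log n := Real.log_nonneg hnR
  have hpow : (0:ℝ) ≤ (Real.log n)^p := by positivity
  have h4 : (Real.log n)^p < (n:ℝ) / (|A|+1) := by
    rw [div_lt_div_iff₀ (by positivity) (by positivity)] at hn
    rw [lt_div_iff₀ (by positivity)]
    nlinarith
  have h5 : A * (Real.log n)^p ≤ |A| * (Real.log n)^p :=
    mul_le_mul_of_nonneg_right (le_abs_self A) hpow
  have h6 : |A| * (Real.log n)^p < |A| * ((n:ℝ)/(|A|+1)) + (n:ℝ)/(|A|+1) := by
    have h7 : |A| * (Real.log n)^p ≤ |A| * ((n:ℝ)/(|A|+1)) :=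
      mul_le_mul_of_nonneg_left h4.le (abs_nonneg A)
    have : (0:ℝ) < (n:ℝ)/(|A|+1) := by positivity
    linarith
  have h8 : |A| * ((n:ℝ)/(|A|+1)) + (n:ℝ)/(|A|+1) = (n:ℝ) := by
    field_simp
  linarith

private lemma phi_mono_lem (D v M : ℝ) (hD : 0 < D) (hv : 0 < v) (hM : 0 < M)
    (r r' : ℕ) (s s' : ℝ) (hr : 1 ≤ r) (hrr : r ≤ r') (hs' : 0 ≤ s') (hss : s' ≤ s) :
    D * Real.exp (-(D * s^2) / (r*v^2 + M^2 + s*M*(Real.log r)^2))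
      ≤ D * Real.exp (-(D * s'^2) / ((r':ℝ)*v^2 + M^2 + s'*M*(Real.log r')^2)) := by
  have hs : 0 ≤ s := le_trans hs' hss
  have hr1 : (1:ℝ) ≤ (r:ℝ) := by exact_mod_cast hr
  have hr'1 : (1:ℝ) ≤ (r':ℝ) := le_trans hr1 (by exact_mod_cast hrr)
  have hlogr : (0:ℝ) ≤ Real.log r := Real.log_nonneg hr1
  have hlogr' : (0:ℝ) ≤ Real.log r' := Real.log_nonneg hr'1
  have hlogle : Real.log r ≤ Real.log r' := by
    apply Real.log_le_log (by linarith)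
    exact_mod_cast hrr
  have hQ1 : (0:ℝ) < r*v^2 + M^2 + s*M*(Real.log r)^2 := by positivity
  have hQ2 : (0:ℝ) < (r:ℝ)*v^2 + M^2 + s'*M*(Real.log r)^2 := by positivity
  have hQ3 : (0:ℝ) < (r':ℝ)*v^2 + M^2 + s'*M*(Real.log r')^2 := by positivity
  apply mul_le_mul_of_nonneg_left _ hD.le
  apply Real.exp_le_exp.mpr
  rw [neg_div, neg_div, neg_le_neg_iff]
  -- goal: D*s'^2/Q3 ≤ D*s^2/Q1
  have step1 : D*s'^2 / ((r':ℝ)*v^2 + M^2 + s'*M*(Real.log r')^2)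
      ≤ D*s'^2 / ((r:ℝ)*v^2 + M^2 + s'*M*(Real.log r)^2) := by
    apply div_le_div_of_nonneg_left (by positivity) hQ2
    have h1 : (r:ℝ)*v^2 ≤ (r':ℝ)*v^2 := by
      have : (r:ℝ) ≤ (r':ℝ) := by exact_mod_cast hrr
      nlinarith
    have h2 : (Real.log r)^2 ≤ (Real.log r')^2 := by nlinarith
    nlinarith [mul_nonneg hs' hM.le]
  have step2 : D*s'^2 / ((r:ℝ)*v^2 + M^2 + s'*M*(Real.log r)^2)
      ≤ D*s^2 / ((r:ℝ)*v^2 + M^2 + s*M*(Real.log r)^2) := by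
    rw [div_le_div_iff₀ hQ2 hQ1]
    have hA : (0:ℝ) < (r:ℝ)*v^2 + M^2 := by positivity
    have hB : (0:ℝ) ≤ M*(Real.log r)^2 := by positivity
    have hss0 : 0 ≤ s - s' := by linarith
    have e1 : 0 ≤ D * ((r:ℝ)*v^2 + M^2) * ((s - s')*(s+s')) :=
      mul_nonneg (mul_nonneg hD.le hA.le) (mul_nonneg hss0 (by linarith))
    have e2 : 0 ≤ D * (M*(Real.log r)^2) * (s * s' * (s - s')) :=
      mul_nonneg (mul_nonneg hD.le hB) (mul_nonneg (mul_nonneg hs hs') hss0)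
    nlinarith [e1, e2]
  linarith

private lemma chain_lemma {Ω : Type*} [MeasurableSpace Ω] (P : Measure Ω)
    [IsProbabilityMeasure P] (X : ℕ → Ω → ℝ) (φ : ℕ → ℝ → ℝ) (b n : ℕ) (t V : ℝ)
    (θ : ℕ → ℝ)
    (hb : 4 ≤ b) (hn : 1 ≤ n) (ht : 0 < t) (hV : 0 ≤ V)
    (hφmono : ∀ (r r' : ℕ) (s s' : ℝ), 1 ≤ r → r ≤ r' → 0 ≤ s' → s' ≤ s → φ r s ≤ φ r' s')
    (hφ0 : ∀ r s, 0 ≤ φ r s)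
    (hT : ∀ a k : ℕ, ∀ s : ℝ, 1 ≤ k → 0 ≤ s →
      (P {ω | s ≤ |∑ i ∈ Finset.Ioc a (a+k), X i ω|}).toReal ≤ φ k s)
    (hθpos : ∀ j : ℕ, (b:ℝ)^j ≤ 2*b*n → 0 < θ j)
    (hθsum : ∀ j : ℕ, (b:ℝ)^j ≤ 2*b*n → ∑ i ∈ Finset.range (j+1), θ i ≤ 1)
    (hmain : ∀ j : ℕ, (b:ℝ)^j ≤ 2*b*n →
      2 * b * φ (njseq b n j) (θ j * t) ≤ V / (2*(b:ℝ))^j) :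
    ∀ r j a : ℕ, ∀ τ : ℝ, (b:ℝ)^j ≤ 2*b*n → ∀ hr : 1 ≤ r, r ≤ njseq b n j →
      (1 - ∑ i ∈ Finset.range j, θ i) * t ≤ τ →
      (P {ω | τ ≤ (Finset.Icc 1 r).sup' (Finset.nonempty_Icc.mpr hr)
          (fun k => |∑ i ∈ Finset.Ioc a (a+k), X i ω|)}).toReal ≤ V / (2*(b:ℝ))^j := by
  intro r
  induction r using Nat.strong_induction_on with
  | _ r IH =>
  intro j a τ hjb hr hrn hτ
  have hb0 : (0:ℕ) < b := by omega
  have hbR : (0:ℝ) < (b:ℝ) := by positivity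
  have hb1R : (1:ℝ) ≤ (b:ℝ) := by exact_mod_cast (by omega : 1 ≤ b)
  have h2b : (0:ℝ) < (2*(b:ℝ))^j := by positivity
  have hθj : 0 < θ j := hθpos j hjb
  have hsum1 : ∑ i ∈ Finset.range (j+1), θ i ≤ 1 := hθsum j hjb
  have hsumsplit : ∑ i ∈ Finset.range (j+1), θ i
      = ∑ i ∈ Finset.range j, θ i + θ j := Finset.sum_range_succ θ j
  have hρθ : θ j * t ≤ (1 - ∑ i ∈ Finset.range j, θ i) * t := by
    have : θ j ≤ 1 - ∑ i ∈ Finset.range j, θ i := by linarith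
    nlinarith
  have hτθ : θ j * t ≤ τ := le_trans hρθ hτ
  have hθt0 : 0 < θ j * t := by positivity
  have hnj1 : 1 ≤ njseq b n j := le_trans hr hrn
  -- base bound: φ (njseq j) (θ j * t) ≤ V / (2b)^j / (2b)
  have hmainj := hmain j hjb
  have hφjnonneg := hφ0 (njseq b n j) (θ j * t)
  rcases eq_or_lt_of_le hr with hr1 | hr2
  · -- r = 1
    have hr1' : r = 1 := hr1.symm
    subst hr1'
    have hincl : {ω | τ ≤ (Finset.Icc 1 1).sup' (Finset.nonempty_Icc.mpr hr)
          (fun k => |∑ i ∈ Finset.Ioc a (a+k), X i ω|)}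
        ⊆ {ω | τ ≤ |∑ i ∈ Finset.Ioc a (a+1), X i ω|} := by
      intro ω hω
      simp only [Set.mem_setOf_eq] at hω ⊢
      obtain ⟨k, hkmem, hkeq⟩ := Finset.exists_mem_eq_sup' (Finset.nonempty_Icc.mpr hr)
        (fun k => |∑ i ∈ Finset.Ioc a (a+k), X i ω|)
      rw [Finset.mem_Icc] at hkmem
      have : k = 1 := by omega
      rw [hkeq, this] at hω
      exact hω
    have h1 := hT a 1 τ le_rfl (le_of_lt (lt_of_lt_of_le hθt0 hτθ))
    have h2 : φ 1 τ ≤ φ (njseq b n j) (θ j * t) :=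
      hφmono 1 (njseq b n j) τ (θ j * t) le_rfl hnj1 (le_of_lt hθt0) hτθ
    have h3 : φ (njseq b n j) (θ j * t) ≤ V / (2*(b:ℝ))^j := by
      have hprod : 0 ≤ (2*(b:ℝ) - 1) * φ (njseq b n j) (θ j * t) :=
        mul_nonneg (by linarith) hφjnonneg
      nlinarith [hmainj]
    exact le_trans (meas_toReal_mono P hincl) (by linarith)
  · -- r ≥ 2
    obtain ⟨q, hq⟩ : ∃ q, q = r / b := ⟨_, rfl⟩
    obtain ⟨h, hdefh⟩ : ∃ h, h = q + 1 := ⟨_, rfl⟩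
    have hh1 : 1 ≤ h := by omega
    have hhr : h < r := by
      have h4 : (r-1)*4 ≤ (r-1)*b := Nat.mul_le_mul_left _ hb
      have h5 : q < r - 1 := by
        rw [hq, Nat.div_lt_iff_lt_mul hb0]
        omega
      omega
    have hbh : r < b * h := by
      have h1 := Nat.div_add_mod r b
      rw [← hq] at h1
      have h2 : r % b < b := Nat.mod_lt r hb0
      have h3 : b * h = b * q + b := by rw [hdefh]; ring
      omega
    set σ := (1 - ∑ i ∈ Finset.range (j+1), θ i) * t with hdefσ
    have hσ0 : 0 ≤ σ := by
      have : 0 ≤ 1 - ∑ i ∈ Finset.range (j+1), θ i := by linarith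
      positivity
    have hτσ : θ j * t ≤ τ - σ := by
      have : τ - σ ≥ (1 - ∑ i ∈ Finset.range j, θ i) * t - σ := by linarith
      rw [hdefσ] at this ⊢
      rw [hsumsplit] at this
      nlinarith
    -- events
    set Asp : ℕ → Set Ω := fun i => {ω | τ - σ ≤ |∑ i' ∈ Finset.Ioc a (a + i*h), X i' ω|}
      with hAsp
    set Ach : ℕ → Set Ω := fun i => {ω | σ ≤ (Finset.Icc 1 h).sup' (Finset.nonempty_Icc.mpr hh1)
      (fun k => |∑ i' ∈ Finset.Ioc (a + i*h) ((a + i*h) + k), X i' ω|)} with hAch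
    set s : Finset ℕ := (Finset.range b).filter (fun i => i*h < r) with hdefs
    -- inclusion
    have hincl : {ω | τ ≤ (Finset.Icc 1 r).sup' (Finset.nonempty_Icc.mpr hr)
          (fun k => |∑ i ∈ Finset.Ioc a (a+k), X i ω|)} ⊆ ⋃ i ∈ s, (Asp i ∪ Ach i) := by
      intro ω hω
      simp only [Set.mem_setOf_eq] at hω
      obtain ⟨k, hkmem, hkeq⟩ := Finset.exists_mem_eq_sup' (Finset.nonempty_Icc.mpr hr)
        (fun k => |∑ i ∈ Finset.Ioc a (a+k), X i ω|)
      rw [hkeq] at hω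
      rw [Finset.mem_Icc] at hkmem
      obtain ⟨hk1, hkr⟩ := hkmem
      set i := (k-1)/h with hdefi
      have hih : i * h ≤ k - 1 := by
        rw [hdefi]; exact Nat.div_mul_le_self _ _
      have hihr : i * h < r := by omega
      have hib : i < b := by
        rw [hdefi, Nat.div_lt_iff_lt_mul (by omega : 0 < h)]
        omega
      have hkih : k ≤ i * h + h := by
        have h1 : h * ((k-1)/h) + (k-1) % h = k - 1 := Nat.div_add_mod _ _
        have h2 : (k-1) % h < h := Nat.mod_lt _ (by omega)
        have hcomm : i * h = h * ((k-1)/h) := by rw [hdefi, Nat.mul_comm]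
        omega
      have hmem : i ∈ s := by
        rw [hdefs, Finset.mem_filter, Finset.mem_range]
        exact ⟨hib, hihr⟩
      have hsplit : ∑ i' ∈ Finset.Ioc a (a+k), X i' ω
          = (∑ i' ∈ Finset.Ioc a (a + i*h), X i' ω)
            + ∑ i' ∈ Finset.Ioc (a + i*h) ((a + i*h) + (k - i*h)), X i' ω := by
        have e1 : (a + i*h) + (k - i*h) = a + k := by omega
        rw [e1]
        exact (Finset.sum_Ioc_consecutive _ (by omega) (by omega)).symm
      refine Set.mem_biUnion hmem ?_
      by_cases hcase : τ - σ ≤ |∑ i' ∈ Finset.Ioc a (a + i*h), X i' ω|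
      · exact Or.inl hcase
      · right
        push_neg at hcase
        have habs : |∑ i' ∈ Finset.Ioc a (a+k), X i' ω|
            ≤ |∑ i' ∈ Finset.Ioc a (a + i*h), X i' ω|
              + |∑ i' ∈ Finset.Ioc (a + i*h) ((a + i*h) + (k - i*h)), X i' ω| := by
          rw [hsplit]; exact abs_add_le _ _
        have hch : σ ≤ |∑ i' ∈ Finset.Ioc (a + i*h) ((a + i*h) + (k - i*h)), X i' ω| := by
          linarith
        have hkmem2 : k - i*h ∈ Finset.Icc 1 h := by
          rw [Finset.mem_Icc]; omega
        simp only [hAch, Set.mem_setOf_eq]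
        exact le_trans hch (Finset.le_sup'
          (f := fun k => |∑ i' ∈ Finset.Ioc (a + i*h) ((a + i*h) + k), X i' ω|) hkmem2)
    -- bounds per i
    have hbnd : ∀ i ∈ s, (P (Asp i ∪ Ach i)).toReal
        ≤ φ (njseq b n j) (θ j * t) + V / (2*(b:ℝ))^(j+1) := by
      intro i hi
      rw [hdefs, Finset.mem_filter, Finset.mem_range] at hi
      obtain ⟨hib, hihr⟩ := hi
      have hspbd : (P (Asp i)).toReal ≤ φ (njseq b n j) (θ j * t) := by
        rcases Nat.eq_zero_or_pos i with hi0 | hi1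
        · have : Asp i = (∅ : Set Ω) := by
            rw [hAsp, hi0]
            ext ω
            simp only [Set.mem_setOf_eq, Set.mem_empty_iff_false, iff_false, not_le,
              Nat.zero_mul, Nat.add_zero]
            rw [Finset.Ioc_self, Finset.sum_empty, abs_zero]
            linarith
          rw [this]
          simpa using hφ0 (njseq b n j) (θ j * t)
        · have hih1 : 1 ≤ i * h := Nat.mul_pos hi1 (by omega)
          have h1 := hT a (i*h) (τ - σ) hih1 (by linarith)
          have h2 : φ (i*h) (τ - σ) ≤ φ (njseq b n j) (θ j * t) := by
            apply hφmono
            · exact hih1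
            · omega
            · positivity
            · exact hτσ
          exact le_trans h1 (le_trans (le_of_eq rfl) (by linarith))
      have hchbd : (P (Ach i)).toReal ≤ V / (2*(b:ℝ))^(j+1) := by
        have hnj2 : 2 ≤ njseq b n j := le_trans hr2 hrn
        have hpow : (b:ℝ)^(j+1) ≤ 2*b*n := by
          have := njseq_pow_le b n hb hn j hnj2
          calc (b:ℝ)^(j+1) = (b:ℝ) * (b:ℝ)^j := by ring
            _ ≤ (b:ℝ) * (2*n) := by nlinarith
            _ = 2*b*n := by ring
        have hhnj : h ≤ njseq b n (j+1) := by
          rw [hdefh, hq]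
          exact Nat.succ_le_succ (Nat.div_le_div_right hrn)
        exact IH h hhr (j+1) (a + i*h) σ hpow hh1 hhnj hdefσ.ge
      exact meas_union_toReal_le P hspbd hchbd
    have hcard : (s.card : ℝ) ≤ b := by
      have := Finset.card_filter_le (Finset.range b) (fun i => i*h < r)
      have h2 : (Finset.range b).card = b := Finset.card_range b
      exact_mod_cast le_trans this (le_of_eq h2)
    have hterm0 : 0 ≤ φ (njseq b n j) (θ j * t) + V / (2*(b:ℝ))^(j+1) := by positivity
    calc (P {ω | τ ≤ (Finset.Icc 1 r).sup' (Finset.nonempty_Icc.mpr hr)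
          (fun k => |∑ i ∈ Finset.Ioc a (a+k), X i ω|)}).toReal
        ≤ (P (⋃ i ∈ s, (Asp i ∪ Ach i))).toReal := meas_toReal_mono P hincl
      _ ≤ ∑ _i ∈ s, (φ (njseq b n j) (θ j * t) + V / (2*(b:ℝ))^(j+1)) :=
          meas_biUnion_toReal_le P s _ _ hbnd
      _ = (s.card : ℝ) * (φ (njseq b n j) (θ j * t) + V / (2*(b:ℝ))^(j+1)) := by
          rw [Finset.sum_const, nsmul_eq_mul]
      _ ≤ (b:ℝ) * (φ (njseq b n j) (θ j * t) + V / (2*(b:ℝ))^(j+1)) := by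
          exact mul_le_mul_of_nonneg_right hcard hterm0
      _ ≤ V / (2*(b:ℝ))^j / 2 + V / (2*(b:ℝ))^j / 2 := by
          have e1 : (b:ℝ) * (V / (2*(b:ℝ))^(j+1)) = V / (2*(b:ℝ))^j / 2 := by
            field_simp
            ring
          have e2 : (b:ℝ) * φ (njseq b n j) (θ j * t) ≤ V / (2*(b:ℝ))^j / 2 := by
            nlinarith [hmainj]
          nlinarith [e1, e2]
      _ = V / (2*(b:ℝ))^j := by ring

private lemma sqrt_pow' (x : ℝ) (hx : 0 ≤ x) (n : ℕ) :
    Real.sqrt (x^n) = (Real.sqrt x)^n := by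
  have h1 : ((Real.sqrt x)^n)^2 = x^n := by
    rw [← pow_mul, mul_comm n 2, pow_mul, Real.sq_sqrt hx]
  rw [← h1, Real.sqrt_sq (by positivity)]

private lemma geom_sum_le_inv (q : ℝ) (hq0 : 0 ≤ q) (hq1 : q < 1) (m : ℕ) :
    ∑ i ∈ Finset.range m, q^i ≤ (1-q)⁻¹ := by
  have hq1' : (0:ℝ) < 1 - q := by linarith
  have h1 : ∑ i ∈ Finset.range m, q^i = (1 - q^m)/(1-q) := by
    rw [geom_sum_eq hq1.ne]
    rw [div_eq_div_iff (by linarith) hq1'.ne']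
    ring
  rw [h1, inv_eq_one_div]
  have hqm : 0 ≤ q^m := pow_nonneg hq0 m
  gcongr
  linarith

/-- Maximal version of the Merlevède–Peligrad–Rio Bernstein-type inequality for
strongly mixing sequences: if
`P{|S(m+1,m+n)| ≥ t} ≤ D exp(-D t² / (n v² + M² + t M (log n)²))` for all
`m ≥ 0`, `n ≥ 1`, `t ≥ 0`, then for any `0 < c < 1` there is `C ≥ D` such that
for all `n ≥ 1` and `t > 0`,
`P{max_{1 ≤ m ≤ n} |S(1,m)| ≥ t} ≤ C exp(-c D t² / (n v² + M² + t M (log n)²))`. -/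
theorem maximal_merlevede_peligrad_rio_inequality
    {Ω : Type*} [MeasurableSpace Ω] (P : Measure Ω) [IsProbabilityMeasure P]
    (X : ℕ → Ω → ℝ) (D v M : ℝ)
    (hD : 0 < D) (hv : 0 < v) (hM : 0 < M)
    (hS : ∀ m n : ℕ, 1 ≤ n → ∀ t : ℝ, 0 ≤ t →
      (P {ω | t ≤ |∑ i ∈ Finset.Icc (m + 1) (m + n), X i ω|}).toReal ≤
        D * Real.exp (-(D * t ^ 2) / (n * v ^ 2 + M ^ 2 + t * M * (Real.log n) ^ 2))) :
    ∀ c : ℝ, 0 < c → c < 1 →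
      ∃ C : ℝ, D ≤ C ∧
        ∀ n : ℕ, ∀ hn : 1 ≤ n, ∀ t : ℝ, 0 < t →
          (P {ω | t ≤ (Finset.Icc 1 n).sup' (Finset.nonempty_Icc.mpr hn)
              (fun m => |∑ i ∈ Finset.Icc 1 m, X i ω|)}).toReal ≤
            C * Real.exp (-(c * D * t ^ 2) / (n * v ^ 2 + M ^ 2 + t * M * (Real.log n) ^ 2)) := by
  intro c hc hc1
  have hc0 : (0:ℝ) ≤ c := hc.le
  have hsc0 : 0 < Real.sqrt c := Real.sqrt_pos.mpr hc
  have hsc1 : Real.sqrt c < 1 := by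
    have h := Real.sqrt_lt_sqrt hc0 hc1
    simpa using h
  have hscle : Real.sqrt c ≤ 1 := hsc1.le
  obtain ⟨ε, hεdef⟩ : ∃ ε:ℝ, ε = (1 - Real.sqrt c)/8 := ⟨_, rfl⟩
  have hε : 0 < ε := by rw [hεdef]; linarith
  -- choose base b
  obtain ⟨b, hb4, hbε⟩ : ∃ b:ℕ, 4 ≤ b ∧ 2 / Real.sqrt b ≤ ε := by
    refine ⟨max 4 ⌈(2/ε)*(2/ε)⌉₊, le_max_left _ _, ?_⟩
    set m := max 4 ⌈(2/ε)*(2/ε)⌉₊ with hm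
    have h1 : (2/ε)*(2/ε) ≤ (m : ℝ) := by
      calc (2/ε)*(2/ε) ≤ (⌈(2/ε)*(2/ε)⌉₊ : ℝ) := Nat.le_ceil _
        _ ≤ (m:ℝ) := by exact_mod_cast le_max_right 4 ⌈(2/ε)*(2/ε)⌉₊
    have h3 : 2/ε ≤ Real.sqrt m := by
      have h4 : Real.sqrt ((2/ε)*(2/ε)) ≤ Real.sqrt m := Real.sqrt_le_sqrt h1
      rwa [Real.sqrt_mul_self (by positivity)] at h4
    have h5 : 0 < Real.sqrt m := lt_of_lt_of_le (by positivity) h3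
    rw [div_le_iff₀ h5]
    have h6 := (div_le_iff₀ hε).mp h3
    nlinarith
  have hbR : (0:ℝ) < (b:ℝ) := by
    have : (4:ℝ) ≤ (b:ℝ) := by exact_mod_cast hb4
    linarith
  have hb4R : (4:ℝ) ≤ (b:ℝ) := by exact_mod_cast hb4
  have hsqb2 : (2:ℝ) ≤ Real.sqrt b := by
    have h1 : Real.sqrt 4 ≤ Real.sqrt b := Real.sqrt_le_sqrt hb4R
    have h2 : Real.sqrt 4 = 2 := by
      rw [show (4:ℝ) = 2^2 by norm_num, Real.sqrt_sq (by norm_num)]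
    linarith
  obtain ⟨β, hβdef⟩ : ∃ β:ℝ, β = Real.log (2*b) := ⟨_,rfl⟩
  have hβ0 : 0 < β := by
    rw [hβdef]; apply Real.log_pos; linarith
  obtain ⟨K, hKdef⟩ : ∃ K:ℝ, K = 1 + 16*β/ε^2 + 8*β/ε := ⟨_,rfl⟩
  have hK1 : 1 ≤ K := by rw [hKdef]; have h1 : 0 ≤ 16*β/ε^2 := by positivity
                         have h2 : 0 ≤ 8*β/ε := by positivity
                         linarith
  have hKpos : 0 < K := by linarith
  have hK16 : 16*β/ε^2 ≤ K := by
    rw [hKdef]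
    have h2 : 0 ≤ 8*β/ε := by positivity
    linarith
  have hK8 : 8*β/ε ≤ K := by
    rw [hKdef]
    have h2 : 0 ≤ 16*β/ε^2 := by positivity
    linarith
  -- choose N
  have hEv : ∀ᶠ (n:ℕ) in atTop,
      (3 ≤ n ∧ M^2/v^2 ≤ (n:ℝ)) ∧
      ((3*M^2/(D*(1-c))/v^2) * (Real.log n)^9 < (n:ℝ) ∧ β + 1 ≤ Real.log n) ∧
      ((8*(M^2/v^2+2)/ε^2) * (Real.log n)^2 < (n:ℝ) ∧
        (16*β*(M^2/v^2+2)/ε^2) * (Real.log n)^3 < (n:ℝ) ∧ 4 ≤ ε * Real.log n) := by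
    have hcast : Tendsto (fun n:ℕ => (n:ℝ)) atTop atTop := tendsto_natCast_atTop_atTop
    have hlogT : Tendsto (fun n:ℕ => Real.log n) atTop atTop :=
      Real.tendsto_log_atTop.comp hcast
    have e1 : ∀ᶠ (n:ℕ) in atTop, 3 ≤ n := eventually_ge_atTop 3
    have e2 := hcast.eventually_ge_atTop (M^2/v^2)
    have e3 := eventually_pow_log_lt (3*M^2/(D*(1-c))/v^2) 9
    have e4 := hlogT.eventually_ge_atTop (β+1)
    have e5 := eventually_pow_log_lt (8*(M^2/v^2+2)/ε^2) 2
    have e6 := eventually_pow_log_lt (16*β*(M^2/v^2+2)/ε^2) 3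
    have e7 := hlogT.eventually_ge_atTop (4/ε)
    filter_upwards [e1,e2,e3,e4,e5,e6,e7] with n h1 h2 h3 h4 h5 h6 h7
    refine ⟨⟨h1,h2⟩,⟨h3,h4⟩,h5,h6,?_⟩
    have h8 := (div_le_iff₀ hε).mp h7
    nlinarith
  obtain ⟨N, hN⟩ := Filter.eventually_atTop.mp hEv
  obtain ⟨C, hCdef⟩ : ∃ C:ℝ, C = Real.exp (c*K) + (N:ℝ)*D + 3*D := ⟨_,rfl⟩
  have hND : (0:ℝ) ≤ (N:ℝ)*D := by positivity
  have hexpK : 0 < Real.exp (c*K) := Real.exp_pos _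
  have hDC : D ≤ C := by rw [hCdef]; nlinarith
  refine ⟨C, hDC, ?_⟩
  intro n hn t ht
  have hnR : (1:ℝ) ≤ (n:ℝ) := by exact_mod_cast hn
  have hnR0 : (0:ℝ) < (n:ℝ) := by linarith
  have hLn0 : 0 ≤ Real.log n := Real.log_nonneg hnR
  obtain ⟨Q, hQdef⟩ : ∃ Q:ℝ, Q = n*v^2+M^2+t*M*(Real.log n)^2 := ⟨_,rfl⟩
  have hQpos : 0 < Q := by rw [hQdef]; positivity
  obtain ⟨E, hEdef⟩ : ∃ E:ℝ, E = D*t^2/Q := ⟨_,rfl⟩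
  have hEQ : D*t^2 = E*Q := by rw [hEdef]; field_simp
  have hE0 : 0 < E := by rw [hEdef]; positivity
  -- rewrite target
  have hgoalarg : -(c*D*t^2)/((n:ℝ)*v^2+M^2+t*M*(Real.log n)^2) = -(c*E) := by
    rw [hEdef, ← hQdef]
    ring
  -- event rewrite to Ioc
  have hsetEq : {ω | t ≤ (Finset.Icc 1 n).sup' (Finset.nonempty_Icc.mpr hn)
        (fun m => |∑ i ∈ Finset.Icc 1 m, X i ω|)}
      = {ω | t ≤ (Finset.Icc 1 n).sup' (Finset.nonempty_Icc.mpr hn)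
        (fun k => |∑ i ∈ Finset.Ioc 0 (0+k), X i ω|)} := by
    ext ω
    have hsup : (Finset.Icc 1 n).sup' (Finset.nonempty_Icc.mpr hn)
        (fun m => |∑ i ∈ Finset.Icc 1 m, X i ω|)
        = (Finset.Icc 1 n).sup' (Finset.nonempty_Icc.mpr hn)
        (fun k => |∑ i ∈ Finset.Ioc 0 (0+k), X i ω|) := by
      apply Finset.sup'_congr _ rfl
      intro m hm
      rw [show Finset.Icc 1 m = Finset.Ioc 0 m from Finset.Icc_add_one_left_eq_Ioc 0 m, zero_add]
    simp only [Set.mem_setOf_eq, hsup]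
  rw [hgoalarg, hsetEq]
  -- hT
  have hT : ∀ (a k : ℕ) (s : ℝ), 1 ≤ k → 0 ≤ s →
      (P {ω | s ≤ |∑ i ∈ Finset.Ioc a (a+k), X i ω|}).toReal
        ≤ D * Real.exp (-(D * s^2) / ((k:ℝ)*v^2+M^2+s*M*(Real.log k)^2)) := by
    intro a k s hk hs
    have h1 := hS a k hk s hs
    have h2 : Finset.Icc (a+1) (a+k) = Finset.Ioc a (a+k) := Finset.Icc_add_one_left_eq_Ioc a (a+k)
    rw [h2] at h1
    exact h1
  -- union bound
  have hUB : (P {ω | t ≤ (Finset.Icc 1 n).sup' (Finset.nonempty_Icc.mpr hn)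
        (fun k => |∑ i ∈ Finset.Ioc 0 (0+k), X i ω|)}).toReal
      ≤ (n:ℝ) * (D * Real.exp (-E)) := by
    have hincl : {ω | t ≤ (Finset.Icc 1 n).sup' (Finset.nonempty_Icc.mpr hn)
          (fun k => |∑ i ∈ Finset.Ioc 0 (0+k), X i ω|)}
        ⊆ ⋃ m ∈ Finset.Icc 1 n, {ω | t ≤ |∑ i ∈ Finset.Ioc 0 (0+m), X i ω|} := by
      intro ω hω
      simp only [Set.mem_setOf_eq] at hω
      obtain ⟨k, hk, hkeq⟩ := Finset.exists_mem_eq_sup' (Finset.nonempty_Icc.mpr hn)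
        (fun k => |∑ i ∈ Finset.Ioc 0 (0+k), X i ω|)
      rw [hkeq] at hω
      exact Set.mem_biUnion hk hω
    have hbd : ∀ m ∈ Finset.Icc 1 n, (P {ω | t ≤ |∑ i ∈ Finset.Ioc 0 (0+m), X i ω|}).toReal
        ≤ D * Real.exp (-E) := by
      intro m hm
      rw [Finset.mem_Icc] at hm
      have h1 := hT 0 m t hm.1 ht.le
      have h2 := phi_mono_lem D v M hD hv hM m n t t hm.1 hm.2 ht.le le_rfl
      have h3 : D * Real.exp (-(D*t^2)/((n:ℝ)*v^2+M^2+t*M*(Real.log n)^2))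
          = D * Real.exp (-E) := by
        rw [hEdef, ← hQdef, neg_div]
      exact le_trans h1 (le_trans h2 (le_of_eq h3))
    calc (P {ω | t ≤ (Finset.Icc 1 n).sup' (Finset.nonempty_Icc.mpr hn)
          (fun k => |∑ i ∈ Finset.Ioc 0 (0+k), X i ω|)}).toReal
        ≤ (P (⋃ m ∈ Finset.Icc 1 n, {ω | t ≤ |∑ i ∈ Finset.Ioc 0 (0+m), X i ω|})).toReal :=
          meas_toReal_mono P hincl
      _ ≤ ∑ _m ∈ Finset.Icc 1 n, (D * Real.exp (-E)) := meas_biUnion_toReal_le P _ _ _ hbd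
      _ = (n:ℝ) * (D * Real.exp (-E)) := by
          rw [Finset.sum_const, nsmul_eq_mul, Nat.card_Icc]
          simp
  have hexpcE : 0 < Real.exp (-(c*E)) := Real.exp_pos _
  -- case 1 : E ≤ K
  rcases le_or_gt E K with hEK | hEK
  · refine le_trans (meas_toReal_le_one P _) ?_
    have h1 : 0 ≤ c*K + -(c*E) := by nlinarith
    have h2 : Real.exp 0 ≤ Real.exp (c*K + -(c*E)) := Real.exp_le_exp.mpr h1
    have h3 : (1:ℝ) ≤ Real.exp (c*K) * Real.exp (-(c*E)) := by
      rw [← Real.exp_add]; simpa using h2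
    have h4 : Real.exp (c*K) * Real.exp (-(c*E)) ≤ C * Real.exp (-(c*E)) := by
      apply mul_le_mul_of_nonneg_right _ hexpcE.le
      rw [hCdef]; nlinarith
    linarith
  -- case 2 : log n ≤ (1-c) E
  rcases le_or_gt (Real.log n) ((1-c)*E) with hcase2 | hcase2
  · refine le_trans hUB ?_
    have h2 : (n:ℝ) * Real.exp (-E) = Real.exp (Real.log n + -E) := by
      rw [Real.exp_add, Real.exp_log hnR0]
    have h3 : Real.log n + -E ≤ -(c*E) := by nlinarith
    have h4 : Real.exp (Real.log n + -E) ≤ Real.exp (-(c*E)) := Real.exp_le_exp.mpr h3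
    have h1 : (n:ℝ) * (D * Real.exp (-E)) ≤ D * Real.exp (-(c*E)) := by
      calc (n:ℝ) * (D * Real.exp (-E)) = D * ((n:ℝ) * Real.exp (-E)) := by ring
        _ = D * Real.exp (Real.log n + -E) := by rw [h2]
        _ ≤ D * Real.exp (-(c*E)) := mul_le_mul_of_nonneg_left h4 hD.le
    exact le_trans h1 (mul_le_mul_of_nonneg_right hDC hexpcE.le)
  -- case 3 : n < N
  rcases lt_or_ge n N with hnN | hnN
  · refine le_trans hUB ?_
    have h1 : (n:ℝ) ≤ (N:ℝ) := by exact_mod_cast hnN.le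
    have h2 : Real.exp (-E) ≤ Real.exp (-(c*E)) := by
      apply Real.exp_le_exp.mpr; nlinarith
    calc (n:ℝ) * (D * Real.exp (-E)) = ((n:ℝ)*D) * Real.exp (-E) := by ring
      _ ≤ ((N:ℝ)*D) * Real.exp (-E) := by
          apply mul_le_mul_of_nonneg_right _ (Real.exp_pos _).le
          nlinarith
      _ ≤ ((N:ℝ)*D) * Real.exp (-(c*E)) := mul_le_mul_of_nonneg_left h2 (by positivity)
      _ ≤ C * Real.exp (-(c*E)) := by
          apply mul_le_mul_of_nonneg_right _ hexpcE.le
          rw [hCdef]; nlinarith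
  -- case 4 : hard regime
  · obtain ⟨⟨hn3, hn0cond⟩, ⟨hC3, hC4⟩, hC5a, hC5b, hC6⟩ := hN n hnN
    clear hUB hsetEq hEv hN
    have hLn1 : 1 ≤ Real.log n := by
      have h1 := Real.exp_one_lt_d9
      have h3 : (3:ℝ) ≤ (n:ℝ) := by exact_mod_cast hn3
      rw [Real.le_log_iff_exp_le hnR0]
      linarith only [h1, h3]
    have hLnpos : (0:ℝ) < Real.log n := by linarith only [hLn1]
    have hLn2 : 0 < (Real.log n)^2 := pow_pos hLnpos 2
    have hLn21 : 1 ≤ (Real.log n)^2 := by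
      have h := mul_le_mul hLn1 hLn1 (by norm_num) (by linarith only [hLn1])
      linarith only [h]
    have hMG : M^2 ≤ (n:ℝ)*v^2 := by
      have h1 : M^2/v^2*v^2 ≤ (n:ℝ)*v^2 :=
        mul_le_mul_of_nonneg_right hn0cond (sq_nonneg v)
      have h2 : M^2/v^2*v^2 = M^2 := by field_simp
      linarith only [h1, h2]
    have hc1' : 0 < 1 - c := by linarith only [hc1]
    have hHG : t*M*(Real.log n)^2*(Real.log n)^2 ≤ (n:ℝ)*v^2 := by
      by_contra hcon
      push_neg at hcon
      have hH0 : 0 ≤ t*M*(Real.log n)^2 := by positivity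
      have hQle : Q ≤ 3*(t*M*(Real.log n)^2*(Real.log n)^2) := by
        rw [hQdef]
        linarith only [mul_le_mul_of_nonneg_left hLn21 hH0, hcon, hMG]
      have h5a := mul_lt_mul_of_pos_right hcase2 hQpos
      have h5b := mul_le_mul_of_nonneg_left hQle hLn0
      have h5 : (1-c)*(D*t^2) < 3*t*M*(Real.log n)^5 := by
        rw [hEQ]
        linarith only [h5a, h5b]
      have h6 : (1-c)*D*t ≤ 3*M*(Real.log n)^5 := by
        by_contra hcon2
        push_neg at hcon2
        have h := mul_lt_mul_of_pos_right hcon2 ht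
        linarith only [h5, h]
      have h7 := mul_lt_mul_of_pos_left hcon (by positivity : (0:ℝ) < (1-c)*D)
      have h8 := mul_le_mul_of_nonneg_right h6 (by positivity : (0:ℝ) ≤ M*(Real.log n)^4)
      have h9 : 3*M^2*(Real.log n)^9 < (1-c)*D*((n:ℝ)*v^2) := by
        have h11 := mul_lt_mul_of_pos_right hC3 (by positivity : (0:ℝ) < D*(1-c)*v^2)
        have h12 : 3*M^2/(D*(1-c))/v^2 * (Real.log n)^9 * (D*(1-c)*v^2)
            = 3*M^2*(Real.log n)^9 := by
          field_simp
        linarith only [h11, h12]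
      linarith only [h7, h8, h9]
    -- weights
    obtain ⟨θ, hθdef⟩ : ∃ θ : ℕ → ℝ, θ = fun j : ℕ =>
        Real.sqrt ((c + ((j:ℝ)+1)*β/K) * (((b:ℝ)⁻¹)^j + (M^2/v^2 + 2)/n))
          + (c + ((j:ℝ)+1)*β/K)/(Real.log n)^2 := ⟨_, rfl⟩
    obtain ⟨V, hVdef⟩ : ∃ V:ℝ, V = 2*D*Real.exp (-(c*E)) := ⟨_,rfl⟩
    have hV0 : 0 ≤ V := by rw [hVdef]; positivity
    have hθeval : ∀ j:ℕ, θ j = Real.sqrt ((c + ((j:ℝ)+1)*β/K)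
        * (((b:ℝ)⁻¹)^j + (M^2/v^2 + 2)/n)) + (c + ((j:ℝ)+1)*β/K)/(Real.log n)^2 := by
      intro j; rw [hθdef]
    have hcj0 : ∀ j:ℕ, 0 < c + ((j:ℝ)+1)*β/K := by intro j; positivity
    have hθposlem : ∀ j:ℕ, 0 < θ j := by
      intro j
      rw [hθeval]
      have h2 : 0 < (c + ((j:ℝ)+1)*β/K)/(Real.log n)^2 := div_pos (hcj0 j) hLn2
      linarith only [h2, Real.sqrt_nonneg ((c + ((j:ℝ)+1)*β/K) * (((b:ℝ)⁻¹)^j + (M^2/v^2 + 2)/n))]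
    -- hmain
    have hmain : ∀ j:ℕ, (b:ℝ)^j ≤ 2*(b:ℝ)*(n:ℝ) →
        2*(b:ℝ) * (D * Real.exp (-(D*(θ j * t)^2)/(((njseq b n j):ℝ)*v^2+M^2
          +(θ j * t)*M*(Real.log (njseq b n j))^2))) ≤ V / (2*(b:ℝ))^j := by
      intro j hjb
      have hnj1 : 1 ≤ njseq b n j := njseq_pos b n hn j
      have hnjle : njseq b n j ≤ n := njseq_le b n (by omega) hn j
      have hnjreal := njseq_real b n (by omega) j
      have hrR1 : (1:ℝ) ≤ (njseq b n j : ℝ) := by exact_mod_cast hnj1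
      have hlogr0 : 0 ≤ Real.log (njseq b n j) := Real.log_nonneg hrR1
      have hlogrle : Real.log (njseq b n j) ≤ Real.log n :=
        Real.log_le_log (by linarith only [hrR1]) (by exact_mod_cast hnjle)
      have hlogr2 : (Real.log (njseq b n j))^2 ≤ (Real.log n)^2 :=
        pow_le_pow_left₀ hlogr0 hlogrle 2
      obtain ⟨cj, hcjdef⟩ : ∃ cj, cj = c + ((j:ℝ)+1)*β/K := ⟨_, rfl⟩
      obtain ⟨w, hwdef⟩ : ∃ w:ℝ, w = ((b:ℝ)⁻¹)^j := ⟨_, rfl⟩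
      obtain ⟨z, hzdef⟩ : ∃ z:ℝ, z = (M^2/v^2+2)/n := ⟨_, rfl⟩
      have hθjxy : θ j = Real.sqrt (cj*(w+z)) + cj/(Real.log n)^2 := by
        rw [hθeval, hcjdef, hwdef, hzdef]
      have hcjpos : 0 < cj := by rw [hcjdef]; exact hcj0 j
      have hw0 : 0 ≤ w := by rw [hwdef]; positivity
      have hz0 : 0 ≤ z := by rw [hzdef]; positivity
      have hx0 : 0 ≤ Real.sqrt (cj*(w+z)) := Real.sqrt_nonneg _
      have hy0 : 0 < cj/(Real.log n)^2 := div_pos hcjpos hLn2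
      have hθpos' : 0 < θ j := hθposlem j
      have hθt : 0 < θ j * t := mul_pos hθpos' ht
      have hx2 : (Real.sqrt (cj*(w+z)))^2 = cj*(w+z) := Real.sq_sqrt (by positivity)
      have hQj0 : 0 < ((njseq b n j):ℝ)*v^2+M^2+(θ j * t)*M*(Real.log (njseq b n j))^2 := by
        have h1 : 0 ≤ (θ j * t)*M*(Real.log (njseq b n j))^2 :=
          mul_nonneg (mul_nonneg hθt.le hM.le) (sq_nonneg _)
        have h2 : 0 < ((njseq b n j):ℝ)*v^2 :=
          mul_pos (lt_of_lt_of_le one_pos hrR1) (pow_pos hv 2)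
        linarith only [h1, h2, pow_pos hM 2]
      have hQjle : ((njseq b n j):ℝ)*v^2+M^2+(θ j * t)*M*(Real.log (njseq b n j))^2
          ≤ ((n:ℝ)*w + 2)*v^2 + M^2 + (θ j * t)*M*(Real.log n)^2 := by
        have h1 : ((njseq b n j):ℝ)*v^2 ≤ ((n:ℝ)*w+2)*v^2 := by
          rw [hwdef]
          exact mul_le_mul_of_nonneg_right hnjreal (sq_nonneg v)
        have h2 : (θ j * t)*M*(Real.log (njseq b n j))^2 ≤ (θ j * t)*M*(Real.log n)^2 :=
          mul_le_mul_of_nonneg_left hlogr2 (mul_nonneg hθt.le hM.le)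
        linarith only [h1, h2]
      have hkey : cj * (((n:ℝ)*w + 2)*v^2 + M^2 + (θ j * t)*M*(Real.log n)^2)
          ≤ (θ j)^2 * ((n:ℝ)*v^2) := by
        have hsq : (Real.sqrt (cj*(w+z)))^2 + (cj/(Real.log n)^2)*(θ j) ≤ (θ j)^2 := by
          rw [hθjxy]
          linarith only [mul_nonneg hx0 hy0.le]
        have hx2G : (Real.sqrt (cj*(w+z)))^2 * ((n:ℝ)*v^2)
            = cj*((n:ℝ)*w*v^2 + M^2 + 2*v^2) := by
          rw [hx2, hzdef]
          field_simp
          ring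
        have hyG : cj*(θ j)*(t*M*(Real.log n)^2)
            ≤ (cj/(Real.log n)^2)*(θ j)*((n:ℝ)*v^2) := by
          have e : 0 ≤ cj*(θ j)*((n:ℝ)*v^2 - t*M*(Real.log n)^2*(Real.log n)^2) :=
            mul_nonneg (mul_nonneg hcjpos.le hθpos'.le) (sub_nonneg.mpr hHG)
          have h3 : 0 ≤ (cj*(θ j)*((n:ℝ)*v^2 - t*M*(Real.log n)^2*(Real.log n)^2))
              /(Real.log n)^2 := div_nonneg e hLn2.le
          have heq2 : (cj*(θ j)*((n:ℝ)*v^2 - t*M*(Real.log n)^2*(Real.log n)^2))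
                /(Real.log n)^2
              = (cj/(Real.log n)^2)*(θ j)*((n:ℝ)*v^2) - cj*(θ j)*(t*M*(Real.log n)^2) := by
            field_simp
          rw [heq2] at h3
          linarith only [h3]
        have hG0 : (0:ℝ) ≤ (n:ℝ)*v^2 := by positivity
        have h4 := mul_le_mul_of_nonneg_right hsq hG0
        linarith only [h4, hx2G, hyG]
      have hQge : (n:ℝ)*v^2 ≤ Q := by
        rw [hQdef]
        linarith only [pow_pos hM 2,
          mul_nonneg (mul_nonneg ht.le hM.le) (sq_nonneg (Real.log n))]
      have hEG : E*((n:ℝ)*v^2) ≤ D*t^2 := by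
        calc E*((n:ℝ)*v^2) ≤ E*Q := mul_le_mul_of_nonneg_left hQge hE0.le
          _ = D*t^2 := hEQ.symm
      have hcjE : c*E + ((j:ℝ)+1)*β ≤ cj*E := by
        have h1 : 0 ≤ ((j:ℝ)+1)*β/K := by positivity
        have h2 : ((j:ℝ)+1)*β/K*K ≤ ((j:ℝ)+1)*β/K*E := mul_le_mul_of_nonneg_left hEK.le h1
        have h3 : ((j:ℝ)+1)*β/K*K = ((j:ℝ)+1)*β := by field_simp
        rw [hcjdef]
        have h4 : (c + ((j:ℝ)+1)*β/K)*E = c*E + ((j:ℝ)+1)*β/K*E := by ring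
        linarith only [h2, h3, h4]
      have hDiv : cj*E ≤ D*(θ j*t)^2/(((njseq b n j):ℝ)*v^2+M^2
          +(θ j * t)*M*(Real.log (njseq b n j))^2) := by
        rw [le_div_iff₀ hQj0]
        calc cj*E*(((njseq b n j):ℝ)*v^2+M^2+(θ j*t)*M*(Real.log (njseq b n j))^2)
            ≤ cj*E*(((n:ℝ)*w + 2)*v^2 + M^2 + (θ j * t)*M*(Real.log n)^2) :=
              mul_le_mul_of_nonneg_left hQjle (mul_nonneg hcjpos.le hE0.le)
          _ ≤ E*((θ j)^2*((n:ℝ)*v^2)) := by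
              have h := mul_le_mul_of_nonneg_left hkey hE0.le
              linarith only [h]
          _ ≤ (θ j)^2*(D*t^2) := by
              have h := mul_le_mul_of_nonneg_left hEG (sq_nonneg (θ j))
              linarith only [h]
          _ = D*(θ j*t)^2 := by ring
      have hexp : c*E + ((j:ℝ)+1)*β ≤ D*(θ j*t)^2/(((njseq b n j):ℝ)*v^2+M^2
          +(θ j * t)*M*(Real.log (njseq b n j))^2) := le_trans hcjE hDiv
      have hφle : D * Real.exp (-(D*(θ j*t)^2)/(((njseq b n j):ℝ)*v^2+M^2
            +(θ j * t)*M*(Real.log (njseq b n j))^2))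
          ≤ D * Real.exp (-(c*E + ((j:ℝ)+1)*β)) := by
        apply mul_le_mul_of_nonneg_left _ hD.le
        apply Real.exp_le_exp.mpr
        rw [neg_div]
        exact neg_le_neg hexp
      have hexpeq : Real.exp (-(c*E + ((j:ℝ)+1)*β))
          = Real.exp (-(c*E)) * ((2*(b:ℝ))^(j+1))⁻¹ := by
        rw [neg_add, Real.exp_add]
        congr 1
        rw [show -(((j:ℝ)+1)*β) = -((((j+1):ℕ):ℝ)*β) by push_cast; ring]
        rw [Real.exp_neg, Real.exp_nat_mul, hβdef, Real.exp_log (by positivity)]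
      have hfin1 : 2*(b:ℝ) * (D * (Real.exp (-(c*E)) * ((2*(b:ℝ))^(j+1))⁻¹))
          = D*Real.exp (-(c*E))/(2*(b:ℝ))^j := by
        field_simp
        ring
      have hfin : 2*(b:ℝ) * (D * (Real.exp (-(c*E)) * ((2*(b:ℝ))^(j+1))⁻¹))
          ≤ V / (2*(b:ℝ))^j := by
        rw [hfin1, hVdef]
        exact (div_le_div_iff_of_pos_right (by positivity)).mpr
          (by linarith only [mul_pos hD (Real.exp_pos (-(c*E)))])
      calc 2*(b:ℝ) * (D * Real.exp (-(D*(θ j*t)^2)/(((njseq b n j):ℝ)*v^2+M^2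
            +(θ j * t)*M*(Real.log (njseq b n j))^2)))
          ≤ 2*(b:ℝ) * (D * Real.exp (-(c*E + ((j:ℝ)+1)*β))) := by
            apply mul_le_mul_of_nonneg_left hφle (by linarith only [hbR])
        _ = 2*(b:ℝ) * (D * (Real.exp (-(c*E)) * ((2*(b:ℝ))^(j+1))⁻¹)) := by rw [hexpeq]
        _ ≤ V / (2*(b:ℝ))^j := hfin
    -- hθsum
    have hθsum : ∀ j:ℕ, (b:ℝ)^j ≤ 2*(b:ℝ)*(n:ℝ) →
        ∑ i ∈ Finset.range (j+1), θ i ≤ 1 := by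
      intro j hjb
      have hlogb1 : 1 ≤ Real.log b := by
        rw [Real.le_log_iff_exp_le (by linarith only [hbR])]
        have h1 := Real.exp_one_lt_d9
        linarith only [h1, hb4R]
      have hjLn : (j:ℝ) + 1 ≤ 2*Real.log n := by
        have h1 : (j:ℝ)*Real.log b ≤ Real.log (2*(b:ℝ)*(n:ℝ)) := by
          rw [← Real.log_pow]
          exact Real.log_le_log (by positivity) hjb
        have h2 : Real.log (2*(b:ℝ)*(n:ℝ)) = β + Real.log n := by
          rw [hβdef, Real.log_mul (by positivity : (0:ℝ) < 2*(b:ℝ)).ne' hnR0.ne']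
        have hj0 : (0:ℝ) ≤ (j:ℝ) := Nat.cast_nonneg j
        linarith only [h1, h2, hC4, mul_le_mul_of_nonneg_left hlogb1 hj0]
      obtain ⟨cjj, hcjjdef⟩ : ∃ cjj, cjj = c + ((j:ℝ)+1)*β/K := ⟨_, rfl⟩
      obtain ⟨z, hzdef⟩ : ∃ z:ℝ, z = (M^2/v^2+2)/n := ⟨_, rfl⟩
      have hz0 : 0 ≤ z := by rw [hzdef]; positivity
      have hcjj0 : 0 < cjj := by rw [hcjjdef]; positivity
      obtain ⟨q, hqdef⟩ : ∃ q:ℝ, q = (Real.sqrt b)⁻¹ := ⟨_, rfl⟩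
      have hq0 : 0 ≤ q := by rw [hqdef]; positivity
      have hqhalf : q ≤ 1/2 := by
        rw [hqdef]
        have h2 := inv_anti₀ (by norm_num : (0:ℝ) < 2) hsqb2
        calc (Real.sqrt (b:ℝ))⁻¹ ≤ (2:ℝ)⁻¹ := h2
          _ = 1/2 := by norm_num
      have hterm : ∀ i ∈ Finset.range (j+1),
          θ i ≤ Real.sqrt c * q^i + Real.sqrt (β/K) * (Real.sqrt 2 * q)^i
            + (Real.sqrt (cjj*z) + cjj/(Real.log n)^2) := by
        intro i hi
        rw [Finset.mem_range] at hi
        have hij : (i:ℝ) ≤ (j:ℝ) := by exact_mod_cast Nat.lt_succ_iff.mp hi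
        rw [hθeval]
        obtain ⟨ci, hcidef⟩ : ∃ ci, ci = c + ((i:ℝ)+1)*β/K := ⟨_, rfl⟩
        have hci0 : 0 < ci := by rw [hcidef]; positivity
        have hcile : ci ≤ cjj := by
          rw [hcidef, hcjjdef]
          have h1 : ((i:ℝ)+1) ≤ ((j:ℝ)+1) := by linarith only [hij]
          have h2 : ((i:ℝ)+1)*β/K ≤ ((j:ℝ)+1)*β/K := by gcongr
          linarith only [h2]
        have hzz : (M^2/v^2+2)/(n:ℝ) = z := hzdef.symm
        rw [hzz, show c + ((i:ℝ)+1)*β/K = ci from hcidef.symm]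
        have s1 : Real.sqrt (ci*(((b:ℝ)⁻¹)^i + z))
            ≤ Real.sqrt (ci*((b:ℝ)⁻¹)^i) + Real.sqrt (ci*z) := by
          have harg : ci*(((b:ℝ)⁻¹)^i + z) = ci*((b:ℝ)⁻¹)^i + ci*z := by ring
          rw [harg]
          exact sqrt_add_le' _ _ (by positivity) (by positivity)
        have s2 : Real.sqrt (ci*((b:ℝ)⁻¹)^i) = Real.sqrt ci * q^i := by
          rw [Real.sqrt_mul hci0.le, sqrt_pow' ((b:ℝ)⁻¹) (by positivity) i,
            Real.sqrt_inv, hqdef]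
        have s3 : Real.sqrt ci ≤ Real.sqrt c + Real.sqrt (((i:ℝ)+1)*β/K) := by
          rw [hcidef]; exact sqrt_add_le' _ _ hc0 (by positivity)
        have s4 : Real.sqrt (((i:ℝ)+1)*β/K) = Real.sqrt (β/K) * Real.sqrt ((i:ℝ)+1) := by
          rw [show ((i:ℝ)+1)*β/K = (β/K)*((i:ℝ)+1) by ring,
            Real.sqrt_mul (by positivity)]
        have s5 : Real.sqrt ((i:ℝ)+1) * q^i ≤ (Real.sqrt 2)^i * q^i :=
          mul_le_mul_of_nonneg_right (sqrt_succ_le_pow i) (pow_nonneg hq0 i)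
        have s6 : Real.sqrt (ci*z) ≤ Real.sqrt (cjj*z) :=
          Real.sqrt_le_sqrt (mul_le_mul_of_nonneg_right hcile hz0)
        have s7 : ci/(Real.log n)^2 ≤ cjj/(Real.log n)^2 := by gcongr
        have s8 : (Real.sqrt 2)^i * q^i = (Real.sqrt 2 * q)^i := (mul_pow _ _ i).symm
        have hqi : 0 ≤ q^i := pow_nonneg hq0 i
        have s9 := mul_le_mul_of_nonneg_right s3 hqi
        have s10 := mul_le_mul_of_nonneg_left s5 (Real.sqrt_nonneg (β/K))
        have s4' : Real.sqrt (((i:ℝ)+1)*β/K) * q^i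
            = Real.sqrt (β/K) * Real.sqrt ((i:ℝ)+1) * q^i := by rw [s4]
        calc Real.sqrt (ci*(((b:ℝ)⁻¹)^i + z)) + ci/(Real.log n)^2
            ≤ (Real.sqrt ci * q^i + Real.sqrt (ci*z)) + cjj/(Real.log n)^2 := by
              rw [← s2]; linarith only [s1, s7]
          _ ≤ Real.sqrt c * q^i + Real.sqrt (β/K) * (Real.sqrt 2 * q)^i
              + (Real.sqrt (cjj*z) + cjj/(Real.log n)^2) := by
              rw [← s8]
              linarith only [s9, s10, s4', s6]
      have hsum2 := Finset.sum_le_sum hterm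
      have hsplit : ∑ i ∈ Finset.range (j+1), (Real.sqrt c * q^i
            + Real.sqrt (β/K) * (Real.sqrt 2 * q)^i
            + (Real.sqrt (cjj*z) + cjj/(Real.log n)^2))
          = Real.sqrt c * (∑ i ∈ Finset.range (j+1), q^i)
            + Real.sqrt (β/K) * (∑ i ∈ Finset.range (j+1), (Real.sqrt 2 * q)^i)
            + ((j:ℝ)+1)*(Real.sqrt (cjj*z) + cjj/(Real.log n)^2) := by
        rw [Finset.sum_add_distrib, Finset.sum_add_distrib, ← Finset.mul_sum,
          ← Finset.mul_sum, Finset.sum_const, Finset.card_range, nsmul_eq_mul]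
        push_cast
        ring
      have hg1 : ∑ i ∈ Finset.range (j+1), q^i ≤ 1 + 2*q := by
        have h1 := geom_sum_le_inv q hq0 (by linarith only [hqhalf]) (j+1)
        have h3 : (0:ℝ) < 1 - q := by linarith only [hqhalf]
        have h2 : (1-q)⁻¹ ≤ 1 + 2*q := by
          rw [inv_eq_one_div, div_le_iff₀ h3]
          have h4 := mul_le_mul_of_nonneg_left hqhalf (by linarith only [hq0] : (0:ℝ) ≤ 2*q)
          linarith only [h4, hq0]
        linarith only [h1, h2]
      have hg2 : ∑ i ∈ Finset.range (j+1), (Real.sqrt 2 * q)^i ≤ 4 := by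
        have hsqrt2 : Real.sqrt 2 ≤ 1.5 := by
          have h := Real.sqrt_le_sqrt (by norm_num : (2:ℝ) ≤ 1.5^2)
          rwa [Real.sqrt_sq (by norm_num)] at h
        have hq2 : Real.sqrt 2 * q ≤ 3/4 := by
          have h := mul_le_mul hsqrt2 hqhalf hq0 (by norm_num)
          linarith only [h]
        have hq20 : 0 ≤ Real.sqrt 2 * q := mul_nonneg (Real.sqrt_nonneg 2) hq0
        have h1 := geom_sum_le_inv (Real.sqrt 2 * q) hq20 (by linarith only [hq2]) (j+1)
        have h2 : (1 - Real.sqrt 2*q)⁻¹ ≤ 4 := by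
          rw [inv_eq_one_div, div_le_iff₀ (by linarith only [hq2])]
          linarith only [hq2]
        linarith only [h1, h2]
      have hS3 : ((j:ℝ)+1)*Real.sqrt (cjj*z) ≤ ε := by
        have hjβ0 : 0 ≤ ((j:ℝ)+1)*β := by positivity
        have hcjjle : cjj ≤ 1 + 2*β*Real.log n := by
          rw [hcjjdef]
          have h1 : ((j:ℝ)+1)*β/K ≤ ((j:ℝ)+1)*β := by
            rw [div_le_iff₀ hKpos]
            linarith only [mul_le_mul_of_nonneg_left hK1 hjβ0]
          have h2 : ((j:ℝ)+1)*β ≤ 2*Real.log n*β :=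
            mul_le_mul_of_nonneg_right hjLn hβ0.le
          linarith only [h1, h2, hc1]
        have ha0 : 0 ≤ ((j:ℝ)+1)*Real.sqrt (cjj*z) := by positivity
        have hsq : (((j:ℝ)+1)*Real.sqrt (cjj*z))^2 = ((j:ℝ)+1)^2*(cjj*z) := by
          rw [mul_pow, Real.sq_sqrt (by positivity)]
        have hsqle : (((j:ℝ)+1)*Real.sqrt (cjj*z))^2 ≤ ε^2 := by
          rw [hsq, hzdef]
          have hjsq : ((j:ℝ)+1)^2 ≤ 4*(Real.log n)^2 := by
            have h := mul_self_le_mul_self (by positivity : (0:ℝ) ≤ (j:ℝ)+1) hjLn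
            linarith only [h]
          have hA : (0:ℝ) ≤ M^2/v^2 + 2 := by positivity
          have h1 : ((j:ℝ)+1)^2*cjj ≤ 4*(Real.log n)^2*(1 + 2*β*Real.log n) :=
            mul_le_mul hjsq hcjjle hcjj0.le (by positivity)
          have f1 : 8*(M^2/v^2+2)*(Real.log n)^2 < ε^2*(n:ℝ) := by
            have e5a := hC5a
            rw [div_mul_eq_mul_div, div_lt_iff₀ (by positivity : (0:ℝ) < ε^2)] at e5a
            linarith only [e5a]
          have f2 : 16*β*(M^2/v^2+2)*(Real.log n)^3 < ε^2*(n:ℝ) := by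
            have e5b := hC5b
            rw [div_mul_eq_mul_div, div_lt_iff₀ (by positivity : (0:ℝ) < ε^2)] at e5b
            linarith only [e5b]
          have h2 : 4*(Real.log n)^2*(1 + 2*β*Real.log n)*(M^2/v^2+2) < ε^2*(n:ℝ) := by
            linarith only [f1, f2]
          have h3 : ((j:ℝ)+1)^2*(cjj*((M^2/v^2+2)/(n:ℝ)))
              = (((j:ℝ)+1)^2*cjj*(M^2/v^2+2))/(n:ℝ) := by ring
          rw [h3, div_le_iff₀ hnR0]
          linarith only [mul_le_mul_of_nonneg_right h1 hA, h2]
        have h := Real.sqrt_le_sqrt hsqle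
        rwa [Real.sqrt_sq ha0, Real.sqrt_sq hε.le] at h
      have hS4 : ((j:ℝ)+1)*(cjj/(Real.log n)^2) ≤ ε := by
        have h1a : ((j:ℝ)+1)*β ≤ 2*Real.log n*β :=
          mul_le_mul_of_nonneg_right hjLn hβ0.le
        have h1 : cjj ≤ c + 2*Real.log n*β/K := by
          rw [hcjjdef]
          have h1b : ((j:ℝ)+1)*β/K ≤ 2*Real.log n*β/K := by gcongr
          linarith only [h1b]
        have h2 : ((j:ℝ)+1)*(cjj/(Real.log n)^2)
            ≤ (2*Real.log n)*((c + 2*Real.log n*β/K)/(Real.log n)^2) := by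
          apply mul_le_mul hjLn _ _ (by positivity)
          · gcongr
          · positivity
        have h3 : (2*Real.log n)*((c + 2*Real.log n*β/K)/(Real.log n)^2)
            = 2*c/Real.log n + 4*β/K := by
          field_simp
          ring
        rw [h3] at h2
        have h4 : 2*c/Real.log n ≤ ε/2 := by
          rw [div_le_iff₀ hLnpos]
          linarith only [hC6, hc1, hLn1]
        have h5 : 4*β/K ≤ ε/2 := by
          rw [div_le_iff₀ hKpos]
          have h6 := (div_le_iff₀ hε).mp hK8
          linarith only [h6]
        linarith only [h2, h4, h5]
      have hfin1 : Real.sqrt c*(1+2*q) ≤ Real.sqrt c + ε := by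
        have h2q : 2*q ≤ ε := by
          rw [hqdef, show (2:ℝ)*(Real.sqrt (b:ℝ))⁻¹ = 2/Real.sqrt (b:ℝ) from
            (div_eq_mul_inv 2 _).symm]
          exact hbε
        have h := mul_le_mul_of_nonneg_right hscle (by positivity : (0:ℝ) ≤ 2*q)
        linarith only [h, h2q]
      have hfin2 : Real.sqrt (β/K)*4 ≤ ε := by
        have h1 : β/K ≤ ε^2/16 := by
          rw [div_le_div_iff₀ hKpos (by norm_num : (0:ℝ) < 16)]
          have h6 := (div_le_iff₀ (by positivity : (0:ℝ) < ε^2)).mp hK16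
          linarith only [h6]
        have h2 : Real.sqrt (β/K) ≤ Real.sqrt (ε^2/16) := Real.sqrt_le_sqrt h1
        have h3 : Real.sqrt (ε^2/16) = ε/4 := by
          rw [show ε^2/16 = (ε/4)^2 by ring, Real.sqrt_sq (by positivity)]
        rw [h3] at h2
        linarith only [h2]
      have hb1 : Real.sqrt c * (∑ i ∈ Finset.range (j+1), q^i)
          ≤ Real.sqrt c * (1+2*q) := mul_le_mul_of_nonneg_left hg1 (Real.sqrt_nonneg c)
      have hb2 : Real.sqrt (β/K) * (∑ i ∈ Finset.range (j+1), (Real.sqrt 2 * q)^i)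
          ≤ Real.sqrt (β/K)*4 := mul_le_mul_of_nonneg_left hg2 (Real.sqrt_nonneg _)
      have htotal : ∑ i ∈ Finset.range (j+1), θ i ≤ Real.sqrt c + 4*ε := by
        rw [hsplit] at hsum2
        linarith only [hsum2, hb1, hb2, hfin1, hfin2, hS3, hS4]
      rw [hεdef] at htotal
      linarith only [htotal, hscle]
    -- apply chain lemma
    have hθpos2 : ∀ j:ℕ, (b:ℝ)^j ≤ 2*(b:ℝ)*(n:ℝ) → 0 < θ j := fun j _ => hθposlem j
    have hb1R : (1:ℝ) ≤ (b:ℝ) := by linarith only [hb4R]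
    have hchain := chain_lemma P X
      (fun r s => D * Real.exp (-(D*s^2)/((r:ℝ)*v^2+M^2+s*M*(Real.log r)^2)))
      b n t V θ hb4 hn ht hV0
      (fun r r' s s' h1 h2 h3 h4 => phi_mono_lem D v M hD hv hM r r' s s' h1 h2 h3 h4)
      (fun r s => by positivity)
      hT hθpos2 hθsum hmain n 0 0 t
      (by
        have h := mul_le_mul hb1R hnR (by norm_num) (by linarith)
        simpa using by linarith only [h])
      hn (le_refl _) (by simp)
    have hVC : V ≤ C * Real.exp (-(c*E)) := by
      rw [hVdef]
      apply mul_le_mul_of_nonneg_right _ hexpcE.le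
      rw [hCdef]
      linarith only [hexpK, hND, hD]
    have hchain2 : (P {ω | t ≤ (Finset.Icc 1 n).sup' (Finset.nonempty_Icc.mpr hn)
        (fun k => |∑ i ∈ Finset.Ioc 0 (0+k), X i ω|)}).toReal ≤ V := by
      have h := hchain
      simpa using h
    exact le_trans hchain2 hVC
end

section
/- Let d₁ > 0 and d₂ > 0, and for each integer n ≥ 1 define g_n(t) = (t d₂/d₁)·log n for t > 0 (so g₁ ≡ 0). Then the sequence {g_n} satisfies: each g_n is non-decreasing and non-negative, g_n(t) ≤ g_{n+1}(t) for all t > 0 and n ≥ 1, and for every 0 < ρ < 1, lim_{n→∞} inf{ t²/(g_n(t)·log t) : t > 0, g_n(t) > ρ n } = ∞, where the infimum of the empty set is defined to be ∞. -/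
open Real Filter

private lemma div_log_cube_tendsto : Tendsto (fun x : ℝ => x / (Real.log x)^3) atTop atTop := by
  have h1 : (fun x : ℝ => (Real.log x)^3) =o[atTop] (fun x : ℝ => x) := by
    have := (isLittleO_log_rpow_atTop (by norm_num : (0:ℝ) < 1/3)).pow (n := 3) (by norm_num)
    refine this.congr' (Eventually.of_forall fun x => rfl) ?_
    filter_upwards [eventually_ge_atTop (0:ℝ)] with x hx
    rw [← Real.rpow_natCast (x ^ (1/3 : ℝ)) 3, ← Real.rpow_mul hx]
    norm_num
  have h3 : Tendsto (fun x : ℝ => (Real.log x)^3 / x) atTop (nhdsWithin 0 (Set.Ioi 0)) := by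
    refine tendsto_nhdsWithin_iff.2 ⟨h1.tendsto_div_nhds_zero, ?_⟩
    filter_upwards [eventually_gt_atTop (1:ℝ)] with x hx
    exact div_pos (pow_pos (Real.log_pos hx) 3) (by linarith)
  refine h3.inv_tendsto_nhdsGT_zero.congr' ?_
  filter_upwards [eventually_gt_atTop (1:ℝ)] with x hx
  simp [div_eq_mul_inv, mul_comm]

/-- The choice `g n t = (t d₂ / d₁) log n` (arising from Adamczak's inequality)
satisfies the hypotheses of the general maximal Bernstein-type inequality:
each `g n` (for `n ≥ 1`) is non-negative and non-decreasing on `(0,∞)`,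
`g n t ≤ g (n+1) t`, and for every `0 < ρ < 1`,
`lim_{n→∞} inf{ t²/(g n t · log t) : t > 0, g n t > ρ n } = ∞`
(the infimum of the empty set being `∞`, the limit condition is expressed as:
for every `K` there is `N` such that for all `n ≥ N` every element of the set
is `≥ K`). -/
theorem adamczak_g_satisfies_hypotheses
    (d₁ d₂ : ℝ) (hd₁ : 0 < d₁) (hd₂ : 0 < d₂) :
    (∀ n : ℕ, 1 ≤ n → ∀ t : ℝ, 0 < t → 0 ≤ t * d₂ / d₁ * Real.log n) ∧
    (∀ n : ℕ, 1 ≤ n → ∀ s t : ℝ, 0 < s → s ≤ t →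
      s * d₂ / d₁ * Real.log n ≤ t * d₂ / d₁ * Real.log n) ∧
    (∀ n : ℕ, 1 ≤ n → ∀ t : ℝ, 0 < t →
      t * d₂ / d₁ * Real.log n ≤ t * d₂ / d₁ * Real.log (n + 1)) ∧
    (∀ ρ : ℝ, 0 < ρ → ρ < 1 → ∀ K : ℝ, ∃ N : ℕ, ∀ n : ℕ, N ≤ n →
      ∀ t : ℝ, 0 < t → ρ * n < t * d₂ / d₁ * Real.log n →
        K ≤ t ^ 2 / (t * d₂ / d₁ * Real.log n * Real.log t)) := by
  have hlogn : ∀ n : ℕ, (0:ℝ) ≤ Real.log n := fun n => Real.log_natCast_nonneg n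
  refine ⟨?_, ?_, ?_, ?_⟩
  · intro n hn t ht
    have : (0:ℝ) ≤ t * d₂ / d₁ := by positivity
    exact mul_nonneg this (hlogn n)
  · intro n hn s t hs hst
    gcongr
  · intro n hn t ht
    have h0 : (0:ℝ) < (n:ℝ) := by exact_mod_cast hn
    have hlog : Real.log n ≤ Real.log ((n:ℝ)+1) := Real.log_le_log h0 (by linarith)
    exact mul_le_mul_of_nonneg_left hlog (by positivity)
  · intro ρ hρ hρ1 K
    set c : ℝ := d₂ / d₁ with hc
    have hcpos : 0 < c := div_pos hd₂ hd₁
    set K' : ℝ := max K 1 with hK'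
    have hK'1 : (1:ℝ) ≤ K' := le_max_right _ _
    have hK'pos : 0 < K' := lt_of_lt_of_le one_pos hK'1
    set M : ℝ := max (c / ρ) (4 * c^3 * K'^2 / ρ) with hM
    have T : Tendsto (fun n : ℕ => (n:ℝ) / (Real.log n)^3) atTop atTop :=
      div_log_cube_tendsto.comp tendsto_natCast_atTop_atTop
    obtain ⟨N, hN⟩ := eventually_atTop.1 ((T.eventually_ge_atTop M).and (eventually_ge_atTop 3))
    refine ⟨N, fun n hn t ht hρt => ?_⟩
    obtain ⟨hM1, hn3⟩ := hN n hn
    have hn3' : (3:ℝ) ≤ (n:ℝ) := by exact_mod_cast hn3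
    set L : ℝ := Real.log n with hL
    have hL1 : 1 < L := by
      rw [hL, ← Real.exp_lt_exp, Real.exp_log (by linarith)]
      calc Real.exp 1 < 2.7182818286 := Real.exp_one_lt_d9
        _ ≤ (n:ℝ) := by linarith
    have hLpos : 0 < L := by linarith
    -- from hM1 : M ≤ n / L^3
    have hML : M ≤ (n:ℝ) / L^3 := hM1
    have hL3pos : 0 < L^3 := by positivity
    have h1 : c / ρ ≤ (n:ℝ) / L^3 := le_trans (le_max_left _ _) hML
    have h2 : 4 * c^3 * K'^2 / ρ ≤ (n:ℝ) / L^3 := le_trans (le_max_right _ _) hML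
    have hn1 : c * L^3 ≤ ρ * n := by
      rw [div_le_div_iff₀ hρ hL3pos] at h1; nlinarith
    have hn2 : 4 * c^3 * K'^2 * L^3 ≤ ρ * n := by
      rw [div_le_div_iff₀ hρ hL3pos] at h2; nlinarith
    -- rewrite t * d₂ / d₁ as t * c
    have hrw : t * d₂ / d₁ = t * c := by rw [hc]; ring
    rw [hrw] at hρt ⊢
    -- t > 1
    have htcL : ρ * n < t * c * L := hρt
    have hL2 : L ≤ L^3 := by
      calc L = L^1 := (pow_one L).symm
        _ ≤ L^3 := pow_le_pow_right₀ hL1.le (by norm_num)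
    have hcLpos : 0 < c * L := mul_pos hcpos hLpos
    have ht1 : 1 < t := by
      by_contra h
      push_neg at h
      have h' : t * (c * L) ≤ 1 * (c * L) := mul_le_mul_of_nonneg_right h hcLpos.le
      have hcL3 : c * L ≤ c * L^3 := by nlinarith
      nlinarith
    have hlt : 0 < Real.log t := Real.log_pos ht1
    -- t ≥ 4 K'^2 c^2 L^2
    have h5 : 4 * c^3 * K'^2 * L^3 < t * c * L := lt_of_le_of_lt hn2 htcL
    have ht2 : 4 * K'^2 * c^2 * L^2 ≤ t := by
      have h6 : (4 * K'^2 * c^2 * L^2) * (c * L) < t * (c * L) := by linarith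
      exact (lt_of_mul_lt_mul_right h6 hcLpos.le).le
    -- sqrt facts
    set s : ℝ := Real.sqrt t with hs
    have hspos : 0 < s := Real.sqrt_pos.2 ht
    have hs2 : s^2 = t := Real.sq_sqrt ht.le
    have hlog2s : Real.log t ≤ 2 * s := by
      have h2 : Real.log s ≤ s - 1 := Real.log_le_sub_one_of_pos hspos
      have hhalf : Real.log s = Real.log t / 2 := by rw [hs]; exact Real.log_sqrt ht.le
      linarith
    have hsbig : 2 * K' * c * L ≤ s := by
      by_contra h
      push_neg at h
      have h1 : s * s < (2 * K' * c * L) * (2 * K' * c * L) :=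
        mul_lt_mul'' h h hspos.le hspos.le
      linarith [hs2, h1, ht2]
    -- final bound
    have hD : 0 < t * c * L * Real.log t := by positivity
    have key : K' * (t * c * L * Real.log t) ≤ t^2 := by
      calc K' * (t * c * L * Real.log t) ≤ K' * (t * c * L * (2 * s)) := by
            exact mul_le_mul_of_nonneg_left
              (mul_le_mul_of_nonneg_left hlog2s (by positivity : (0:ℝ) ≤ t * c * L)) hK'pos.le
        _ = (2 * K' * c * L) * (t * s) := by ring
        _ ≤ s * (t * s) := mul_le_mul_of_nonneg_right hsbig (by positivity)
        _ = t * s^2 := by ring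
        _ = t^2 := by rw [hs2]; ring
    calc K ≤ K' := le_max_left _ _
      _ ≤ t^2 / (t * c * L * Real.log t) := (le_div_iff₀ hD).2 key
end

section
/- Let M > 0 and v > 0, and for each integer n ≥ 1 define g_n(t) = M²/v² + (tM/v²)·(log n)² for t > 0. Then the sequence {g_n} satisfies: each g_n is non-decreasing and non-negative, g_n(t) ≤ g_{n+1}(t) for all t > 0 and n ≥ 1, and for every 0 < ρ < 1, lim_{n→∞} inf{ t²/(g_n(t)·log t) : t > 0, g_n(t) > ρ n } = ∞, where the infimum of the empty set is defined to be ∞. -/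
open Real Filter

lemma aux_log_pow_lt (k : ℕ) (C : ℝ) :
    ∀ᶠ n : ℕ in atTop, C * Real.log n ^ k < n := by
  rcases le_or_gt C 0 with hC | hC
  · filter_upwards [eventually_ge_atTop 1] with n hn
    have h1 : (1:ℝ) ≤ (n:ℝ) := by exact_mod_cast hn
    have hlog : 0 ≤ Real.log n := Real.log_nonneg h1
    nlinarith [pow_nonneg hlog k]
  · have h := (Real.tendsto_pow_log_div_mul_add_atTop 1 0 k one_ne_zero).comp
      tendsto_natCast_atTop_atTop
    simp only [one_mul, add_zero, Function.comp_def] at h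
    have h2 := h.eventually (gt_mem_nhds (show (0:ℝ) < 1/C by positivity))
    filter_upwards [h2, eventually_gt_atTop 0] with n hn hn0
    have hnpos : (0:ℝ) < n := by exact_mod_cast hn0
    have h3 := (div_lt_iff₀ hnpos).mp hn
    calc C * Real.log n ^ k < C * (1/C * n) := by nlinarith
      _ = n := by field_simp


set_option maxHeartbeats 1600000 in
/-- The choice `g n t = M²/v² + (t M / v²)(log n)²` (arising from the
Merlevède–Peligrad–Rio inequality) satisfies the hypotheses of the general
maximal Bernstein-type inequality: each `g n` (for `n ≥ 1`) is non-negative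
and non-decreasing on `(0,∞)`, `g n t ≤ g (n+1) t`, and for every `0 < ρ < 1`,
`lim_{n→∞} inf{ t²/(g n t · log t) : t > 0, g n t > ρ n } = ∞`
(the infimum of the empty set being `∞`, the limit condition is expressed as:
for every `K` there is `N` such that for all `n ≥ N` every element of the set
is `≥ K`). -/
theorem mpr_g_satisfies_hypotheses
    (M v : ℝ) (hM : 0 < M) (hv : 0 < v) :
    (∀ n : ℕ, 1 ≤ n → ∀ t : ℝ, 0 < t →
      0 ≤ M ^ 2 / v ^ 2 + t * M / v ^ 2 * (Real.log n) ^ 2) ∧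
    (∀ n : ℕ, 1 ≤ n → ∀ s t : ℝ, 0 < s → s ≤ t →
      M ^ 2 / v ^ 2 + s * M / v ^ 2 * (Real.log n) ^ 2 ≤
        M ^ 2 / v ^ 2 + t * M / v ^ 2 * (Real.log n) ^ 2) ∧
    (∀ n : ℕ, 1 ≤ n → ∀ t : ℝ, 0 < t →
      M ^ 2 / v ^ 2 + t * M / v ^ 2 * (Real.log n) ^ 2 ≤
        M ^ 2 / v ^ 2 + t * M / v ^ 2 * (Real.log (n + 1)) ^ 2) ∧
    (∀ ρ : ℝ, 0 < ρ → ρ < 1 → ∀ K : ℝ, ∃ N : ℕ, ∀ n : ℕ, N ≤ n →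
      ∀ t : ℝ, 0 < t →
        ρ * n < M ^ 2 / v ^ 2 + t * M / v ^ 2 * (Real.log n) ^ 2 →
        K ≤ t ^ 2 / ((M ^ 2 / v ^ 2 + t * M / v ^ 2 * (Real.log n) ^ 2) * Real.log t)) := by
  obtain ⟨a, ha⟩ : ∃ a, a = M ^ 2 / v ^ 2 := ⟨_, rfl⟩
  refine ⟨?_, ?_, ?_, ?_⟩
  · intro n hn t ht
    have h1 : (1:ℝ) ≤ (n:ℝ) := by exact_mod_cast hn
    have hlog : 0 ≤ Real.log n := Real.log_nonneg h1
    positivity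
  · intro n hn s t hs hst
    have h1 : (1:ℝ) ≤ (n:ℝ) := by exact_mod_cast hn
    have hlog : 0 ≤ Real.log n := Real.log_nonneg h1
    have : s * M ≤ t * M := by nlinarith
    have h2 : s * M / v ^ 2 ≤ t * M / v ^ 2 := by
      apply div_le_div_of_nonneg_right this -- fix
      positivity
    nlinarith [sq_nonneg (Real.log n)]
  · intro n hn t ht
    have h1 : (1:ℝ) ≤ (n:ℝ) := by exact_mod_cast hn
    have hlog : 0 ≤ Real.log n := Real.log_nonneg h1
    have hle : Real.log n ≤ Real.log (n + 1) := by
      apply Real.log_le_log (by positivity)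
      linarith
    have hsq : (Real.log n) ^ 2 ≤ (Real.log (n + 1)) ^ 2 := by nlinarith
    have htM : 0 ≤ t * M / v ^ 2 := by positivity
    nlinarith
  · intro ρ hρ0 hρ1 K
    set K' := max K 1 with hK'def
    have hK'1 : (1:ℝ) ≤ K' := le_max_right _ _
    have hK'pos : (0:ℝ) < K' := lt_of_lt_of_le one_pos hK'1
    have hKK' : K ≤ K' := le_max_left _ _
    set b := M / v ^ 2 with hbdef
    have hapos : 0 < a := by rw [ha]; positivity
    have hbpos : 0 < b := by rw [hbdef]; positivity
    set C := 8 * b / ρ * (a + b) ^ 2 * K' ^ 2 with hCdef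
    have E1 := aux_log_pow_lt 6 C
    have E2 := aux_log_pow_lt 2 (16 * b / ρ)
    have E3 : ∀ᶠ n : ℕ in atTop, 2 * a / ρ < (n:ℝ) :=
      tendsto_natCast_atTop_atTop.eventually_gt_atTop _
    have E4 : ∀ᶠ n : ℕ in atTop, 1 ≤ Real.log n :=
      (Real.tendsto_log_atTop.comp tendsto_natCast_atTop_atTop).eventually_ge_atTop 1
    obtain ⟨N, hN⟩ := eventually_atTop.mp (E1.and (E2.and (E3.and E4)))
    refine ⟨N, fun n hn t ht hgt => ?_⟩
    obtain ⟨h1, h2, h3, h4⟩ := hN n hn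
    set L := Real.log (n:ℝ) with hLdef
    have hL1 : (1:ℝ) ≤ L := h4
    have hLpos : (0:ℝ) < L := lt_of_lt_of_le one_pos hL1
    have hL2ge : (1:ℝ) ≤ L ^ 2 := by nlinarith
    have key : M ^ 2 / v ^ 2 + t * M / v ^ 2 * L ^ 2 = a + t * b * L ^ 2 := by
      rw [ha, hbdef]; ring
    rw [key] at hgt ⊢
    have hnpos : (0:ℝ) < (n:ℝ) := lt_of_le_of_lt (by positivity) h3
    -- from h3 : 2a/ρ < n we get 2a < ρ n
    have h3' : 2 * a < ρ * (n:ℝ) := by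
      have := (div_lt_iff₀ hρ0).mp h3; nlinarith
    have hT : ρ * (n:ℝ) / 2 < t * b * L ^ 2 := by linarith
    -- from h2 : 16b/ρ * L² < n we get 16 b L² < ρ n
    have h2' : 16 * b * L ^ 2 < ρ * (n:ℝ) := by
      have h := h2
      rw [div_mul_eq_mul_div, div_lt_iff₀ hρ0] at h
      linarith [mul_comm (n:ℝ) ρ]
    have hbL2 : 0 < b * L ^ 2 := by positivity
    have ht8 : 8 < t := by
      have e1 : t * b * L ^ 2 = t * (b * L ^ 2) := by ring
      have h8 : (8:ℝ) * (b * L ^ 2) < t * (b * L ^ 2) := by linarith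
      exact lt_of_mul_lt_mul_right h8 (by positivity)
    have hlogt : 0 < Real.log t := Real.log_pos (by linarith)
    have hgpos : 0 < a + t * b * L ^ 2 := by positivity
    have hsqrt_pos : 0 < Real.sqrt t := Real.sqrt_pos.mpr ht
    have hsq : Real.sqrt t * Real.sqrt t = t := Real.mul_self_sqrt ht.le
    -- log t ≤ 2 √t
    have hlog_le : Real.log t ≤ 2 * Real.sqrt t := by
      have hls : Real.log (Real.sqrt t) = Real.log t / 2 := Real.log_sqrt ht.le
      have := Real.log_le_sub_one_of_pos hsqrt_pos
      linarith
    -- g ≤ t (a + b L²)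
    have hg_le : a + t * b * L ^ 2 ≤ t * (a + b * L ^ 2) := by
      have hta : a ≤ t * a := le_mul_of_one_le_left hapos.le (by linarith)
      have e2 : t * (a + b * L ^ 2) = t * a + t * b * L ^ 2 := by ring
      linarith
    -- from h1 : C L⁶ < n derive 4 (a+b)² K'² L⁴ < t
    have hC' : ρ * C = 8 * b * (a + b) ^ 2 * K' ^ 2 := by
      rw [hCdef]; field_simp
    have h6 : 8 * b * (a + b) ^ 2 * K' ^ 2 * L ^ 6 < 2 * (t * b * L ^ 2) := by
      have hmul : ρ * (C * L ^ 6) < ρ * (n:ℝ) := mul_lt_mul_of_pos_left h1 hρ0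
      have e3 : 8 * b * (a + b) ^ 2 * K' ^ 2 * L ^ 6 = ρ * (C * L ^ 6) := by
        linear_combination L ^ 6 * hC'.symm
      linarith
    have step : 4 * (a + b) ^ 2 * K' ^ 2 * L ^ 4 < t := by
      rw [show (8:ℝ) * b * (a + b) ^ 2 * K' ^ 2 * L ^ 6
            = (4 * (a + b) ^ 2 * K' ^ 2 * L ^ 4) * (2 * b * L ^ 2) by ring,
          show (2:ℝ) * (t * b * L ^ 2) = t * (2 * b * L ^ 2) by ring] at h6
      exact lt_of_mul_lt_mul_right h6 (by positivity)
    have hfle : a + b * L ^ 2 ≤ (a + b) * L ^ 2 := by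
      have haL : a ≤ a * L ^ 2 := le_mul_of_one_le_right hapos.le hL2ge
      have e4 : (a + b) * L ^ 2 = a * L ^ 2 + b * L ^ 2 := by ring
      linarith
    have hsqK : (2 * (a + b * L ^ 2) * K') ^ 2 ≤ t := by
      have hXY : (a + b * L ^ 2) ^ 2 ≤ ((a + b) * L ^ 2) ^ 2 := by
        apply pow_le_pow_left₀ (by positivity) hfle
      calc (2 * (a + b * L ^ 2) * K') ^ 2 = 4 * K' ^ 2 * (a + b * L ^ 2) ^ 2 := by ring
        _ ≤ 4 * K' ^ 2 * ((a + b) * L ^ 2) ^ 2 :=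
            mul_le_mul_of_nonneg_left hXY (by positivity)
        _ = 4 * (a + b) ^ 2 * K' ^ 2 * L ^ 4 := by ring
        _ ≤ t := step.le
    have hsqrtK : 2 * (a + b * L ^ 2) * K' ≤ Real.sqrt t := by
      rw [show (2 * (a + b * L ^ 2) * K')
            = Real.sqrt ((2 * (a + b * L ^ 2) * K') ^ 2) from
          (Real.sqrt_sq (by positivity)).symm]
      exact Real.sqrt_le_sqrt hsqK
    have hden_le : (a + t * b * L ^ 2) * Real.log t
        ≤ (t * (a + b * L ^ 2)) * (2 * Real.sqrt t) :=
      mul_le_mul hg_le hlog_le hlogt.le (by positivity)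
    have hden_pos : 0 < (a + t * b * L ^ 2) * Real.log t := mul_pos hgpos hlogt
    have hratio : Real.sqrt t / (2 * (a + b * L ^ 2))
        ≤ t ^ 2 / ((a + t * b * L ^ 2) * Real.log t) := by
      have hA : t ^ 2 / ((t * (a + b * L ^ 2)) * (2 * Real.sqrt t))
          ≤ t ^ 2 / ((a + t * b * L ^ 2) * Real.log t) := by
        apply div_le_div_of_nonneg_left (by positivity) hden_pos hden_le
      have hB : t ^ 2 / ((t * (a + b * L ^ 2)) * (2 * Real.sqrt t))
          = Real.sqrt t / (2 * (a + b * L ^ 2)) := by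
        rw [div_eq_div_iff (by positivity) (by positivity)]
        linear_combination (-(2 * (a + b * L ^ 2) * t)) * hsq
      linarith
    have hKsqrt : K' ≤ Real.sqrt t / (2 * (a + b * L ^ 2)) := by
      rw [le_div_iff₀ (by positivity)]
      have e5 : K' * (2 * (a + b * L ^ 2)) = 2 * (a + b * L ^ 2) * K' := by ring
      linarith
    linarith
end

section
/- Let g : (0,∞) → [0,∞) be non-decreasing, and let constants a > c > 0 and p, q ∈ (0,1) with p + q = 1 satisfy a p² > c. Then there exist α ∈ (0,1) and an integer n₀ ≥ 1 such that for all integers n ≥ n₀ and all t > 0 with g(t) ≤ α n, setting u = (n + g(qt) − q²·g(t)) / (1 + q²) and k = ⌈u⌉, one has a p² (n + 1 + g(t)) > c (k + 1 + g(pt)); equivalently, a p² / (k + 1 + g(pt)) > c / (n + 1 + g(t)). -/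
/-- The key arithmetic inequality in Case 1 of the induction step: for `g`
non-negative and non-decreasing on `(0,∞)`, `0 < c < a`, `p, q ∈ (0,1)` with
`p + q = 1` and `a p² > c`, there exist `α ∈ (0,1)` and `n₀ ≥ 1` such that for
all `n ≥ n₀` and `t > 0` with `g t ≤ α n`, setting
`u = (n + g(qt) - q² g(t))/(1 + q²)` and `k = ⌈u⌉`, one has
`a p² (n + 1 + g t) > c (k + 1 + g(pt))`; equivalently,
`a p² / (k + 1 + g(pt)) > c / (n + 1 + g t)`. -/
theorem key_arithmetic_inequality
    (g : ℝ → ℝ) (hg0 : ∀ t : ℝ, 0 < t → 0 ≤ g t)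
    (hg_mono : ∀ s t : ℝ, 0 < s → s ≤ t → g s ≤ g t)
    (a c p q : ℝ) (hc : 0 < c) (hca : c < a)
    (hp0 : 0 < p) (hp1 : p < 1) (hq0 : 0 < q) (hq1 : q < 1) (hpq : p + q = 1)
    (hap : c < a * p ^ 2) :
    ∃ α : ℝ, 0 < α ∧ α < 1 ∧ ∃ n₀ : ℕ, 1 ≤ n₀ ∧
      ∀ n : ℕ, n₀ ≤ n → ∀ t : ℝ, 0 < t → g t ≤ α * n →
        ∀ u : ℝ, u = ((n : ℝ) + g (q * t) - q ^ 2 * g t) / (1 + q ^ 2) →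
        ∀ k : ℕ, k = ⌈u⌉₊ →
          c * ((k : ℝ) + 1 + g (p * t)) < a * p ^ 2 * ((n : ℝ) + 1 + g t) ∧
          c / ((n : ℝ) + 1 + g t) < a * p ^ 2 / ((k : ℝ) + 1 + g (p * t)) := by
  set α : ℝ := min (1/2) ((a * p ^ 2 - c) / (4 * c)) with hα
  have hapc : 0 < a * p ^ 2 - c := by linarith
  have hα0 : 0 < α := lt_min (by norm_num) (by positivity)
  have hα1 : α < 1 := lt_of_le_of_lt (min_le_left _ _) (by norm_num)
  set ε₀ : ℝ := (a * p ^ 2 - c) / 2 with hε₀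
  have hε₀pos : 0 < ε₀ := by positivity
  refine ⟨α, hα0, hα1, ⌈2 * c / ε₀⌉₊ + 1, le_add_self, ?_⟩
  intro n hn t ht hgt u hu k hk
  have hn2c : 2 * c ≤ ε₀ * n := by
    have h1 : 2 * c / ε₀ ≤ (n : ℝ) := by
      calc 2 * c / ε₀ ≤ (⌈2 * c / ε₀⌉₊ : ℝ) := Nat.le_ceil _
        _ ≤ (n : ℝ) := by exact_mod_cast le_trans (Nat.le_succ _) hn
    calc 2 * c = ε₀ * (2 * c / ε₀) := by field_simp
      _ ≤ ε₀ * n := by nlinarith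
  have hgtnn : 0 ≤ g t := hg0 t ht
  have hgpt : g (p * t) ≤ g t := hg_mono _ _ (by positivity) (by nlinarith)
  have hgqt : g (q * t) ≤ g t := hg_mono _ _ (by positivity) (by nlinarith)
  -- bound on k
  have hq2 : 0 < q ^ 2 := by positivity
  have hn0 : (0 : ℝ) ≤ n := Nat.cast_nonneg n
  have hku : (k : ℝ) ≤ (n : ℝ) + g t + 1 := by
    have hub : u ≤ (n : ℝ) + g t := by
      rw [hu, div_le_iff₀ (by positivity)]
      nlinarith
    rcases le_or_gt u 0 with hu0 | hu0
    · have hk0 : k = 0 := by rw [hk, Nat.ceil_eq_zero.mpr hu0]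
      rw [hk0]; push_cast; linarith
    · have h := Nat.ceil_lt_add_one (le_of_lt hu0)
      rw [hk]; push_cast at h ⊢; linarith
  have hkn : (k : ℝ) ≤ (n : ℝ) + α * n + 1 := by linarith
  have hαle : α ≤ (a * p ^ 2 - c) / (4 * c) := min_le_right _ _
  have hεα : c * (1 + 2 * α) ≤ a * p ^ 2 - ε₀ := by
    have h2 : 2 * c * α ≤ (a * p ^ 2 - c) / 2 := by
      have := mul_le_mul_of_nonneg_left hαle (by positivity : (0:ℝ) ≤ 2 * c)
      calc 2 * c * α ≤ 2 * c * ((a * p ^ 2 - c) / (4 * c)) := this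
        _ = (a * p ^ 2 - c) / 2 := by field_simp; ring
    have he : c * (1 + 2 * α) = c + 2 * c * α := by ring
    rw [he, hε₀]; linarith
  have ha : 0 < a := hc.trans hca
  have hap0 : 0 < a * p ^ 2 := by positivity
  have key : c * ((k : ℝ) + 1 + g (p * t)) < a * p ^ 2 * ((n : ℝ) + 1 + g t) := by
    have hin : (k : ℝ) + 1 + g (p * t) ≤ (n : ℝ) + 2 * α * n + 2 := by linarith
    have h1 : c * ((k : ℝ) + 1 + g (p * t)) ≤ c * ((n : ℝ) + 2 * α * n + 2) :=
      mul_le_mul_of_nonneg_left hin hc.le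
    have hB : (c * (1 + 2 * α)) * n ≤ (a * p ^ 2 - ε₀) * n :=
      mul_le_mul_of_nonneg_right hεα hn0
    have hE : 0 ≤ a * p ^ 2 * g t := mul_nonneg hap0.le hgtnn
    linarith [hB, hn2c, hE, hap0, h1]
  refine ⟨key, ?_⟩
  have hgpt0 : 0 ≤ g (p * t) := hg0 _ (by positivity)
  rw [div_lt_div_iff₀ (by positivity) (by positivity)]
  exact key
end
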